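/- arXiv:math/0703449 — 7 statements merged into one kernel-verified Lean document; each statement's English description precedes it below -/
import Mathlib

section
/- Let f ∈ 𝔪 ⊂ ℂ[[x₁,…,xₙ]] with μ(f) = dim_ℂ Q(f) finite and τ(f) = μ(f) − 1. Then the annihilator of the residue class of f in the Milnor algebra Q(f) is exactly the maximal ideal of the local ring Q(f); equivalently, 𝔪·f ⊆ J(f). -/
set_option maxHeartbeats 2000000
set_option synthInstance.maxHeartbeats 1000000


/-- The `i`-th formal partial derivative of a multivariate formal power series. -/
noncomputable def pderiv {n : ℕ} (i : Fin n) (f : MvPowerSeries (Fin n) ℂ) :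
    MvPowerSeries (Fin n) ℂ :=
  fun m => ((m i + 1 : ℕ) : ℂ) * MvPowerSeries.coeff (m + Finsupp.single i 1) f

/-- The Jacobian ideal of `f`, generated by the partial derivatives of `f`. -/
noncomputable def jacobianIdeal {n : ℕ} (f : MvPowerSeries (Fin n) ℂ) :
    Ideal (MvPowerSeries (Fin n) ℂ) :=
  Ideal.span (Set.range fun i => pderiv i f)

/-- The Tjurina ideal of `f`: the ideal `(f) + J(f)`. -/
noncomputable def tjurinaIdeal {n : ℕ} (f : MvPowerSeries (Fin n) ℂ) :
    Ideal (MvPowerSeries (Fin n) ℂ) :=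
  Ideal.span {f} ⊔ jacobianIdeal f

/-- If `f ∈ 𝔪` has finite Milnor number `μ` and Tjurina number `τ = μ - 1`, then the
annihilator of the class of `f` in the Milnor algebra `Q(f)` is exactly the maximal ideal
of `Q(f)`; equivalently, for every `g`, `g·f ∈ J(f)` iff `g` has zero constant term
(so in particular `𝔪·f ⊆ J(f)`). -/
theorem annihilator_eq_maximalIdeal_of_tjurina_eq_milnor_sub_one {n : ℕ}
    (f : MvPowerSeries (Fin n) ℂ)
    (hf : MvPowerSeries.constantCoeff f = 0)
    (hfin : FiniteDimensional ℂ (MvPowerSeries (Fin n) ℂ ⧸ jacobianIdeal f))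
    (htau : Module.finrank ℂ (MvPowerSeries (Fin n) ℂ ⧸ tjurinaIdeal f) + 1 =
      Module.finrank ℂ (MvPowerSeries (Fin n) ℂ ⧸ jacobianIdeal f)) :
    ∀ g : MvPowerSeries (Fin n) ℂ,
      g * f ∈ jacobianIdeal f ↔ MvPowerSeries.constantCoeff g = 0 := by
  classical
  haveI := hfin
  set J : Ideal (MvPowerSeries (Fin n) ℂ) := jacobianIdeal f with hJdef
  set I : Ideal (MvPowerSeries (Fin n) ℂ) := J.colon (Ideal.span {f}) with hIdef
  have memI : ∀ g : MvPowerSeries (Fin n) ℂ, g ∈ I ↔ g * f ∈ J := fun g =>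
    Ideal.mem_colon_span_singleton
  -- f ∉ J
  have hfJ : f ∉ J := by
    intro h
    have hT : tjurinaIdeal f = J := by
      rw [tjurinaIdeal]
      exact sup_eq_right.mpr (by rwa [Ideal.span_le, Set.singleton_subset_iff])
    rw [hT] at htau
    omega
  have hInetop : I ≠ ⊤ := by
    intro h
    exact hfJ (by simpa using (memI 1).mp (h ▸ Submodule.mem_top))
  -- the linear map g ↦ g * f mod J
  let mkJ := Ideal.Quotient.mkₐ ℂ J
  let φ : MvPowerSeries (Fin n) ℂ →ₗ[ℂ] (MvPowerSeries (Fin n) ℂ ⧸ J) :=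
    mkJ.toLinearMap ∘ₗ LinearMap.mulRight ℂ f
  have hφ : ∀ g, φ g = Ideal.Quotient.mk J (g * f) := fun g => rfl
  have hker : LinearMap.ker φ = I.restrictScalars ℂ := by
    ext g
    rw [LinearMap.mem_ker, hφ, Ideal.Quotient.eq_zero_iff_mem]
    exact ((memI g).symm).trans (Iff.rfl)
  set S : Submodule ℂ (MvPowerSeries (Fin n) ℂ ⧸ J) := LinearMap.range φ with hSdef
  -- the map to (P/J)/S with kernel the Tjurina ideal
  let ψ : MvPowerSeries (Fin n) ℂ →ₗ[ℂ] ((MvPowerSeries (Fin n) ℂ ⧸ J) ⧸ S) :=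
    S.mkQ ∘ₗ mkJ.toLinearMap
  have hψsurj : Function.Surjective ψ :=
    (Submodule.mkQ_surjective S).comp Ideal.Quotient.mk_surjective
  have hkerψ : LinearMap.ker ψ = (tjurinaIdeal f).restrictScalars ℂ := by
    ext g
    constructor
    · intro hg
      have : mkJ g ∈ S := by
        simpa [ψ, Submodule.Quotient.mk_eq_zero] using hg
      obtain ⟨h, hh⟩ := this
      rw [hφ] at hh
      have hsub : h * f - g ∈ J := Ideal.Quotient.eq.mp (by exact hh)
      have : g = h * f + -(h * f - g) := by ring
      rw [Submodule.restrictScalars_mem, tjurinaIdeal, this]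
      exact Submodule.add_mem_sup (Ideal.mem_span_singleton'.mpr ⟨h, rfl⟩)
        (neg_mem hsub)
    · intro hg
      rw [Submodule.restrictScalars_mem, tjurinaIdeal] at hg
      obtain ⟨y, hy, z, hz, hyz⟩ := Submodule.mem_sup.mp hg
      obtain ⟨h, rfl⟩ := Ideal.mem_span_singleton'.mp hy
      have : mkJ g ∈ S := by
        refine ⟨h, ?_⟩
        rw [hφ]
        have : (Ideal.Quotient.mk J) (h * f) = mkJ g := by
          rw [← hyz]
          simp only [map_add]
          have hz0 : (Ideal.Quotient.mk J) z = 0 := Ideal.Quotient.eq_zero_iff_mem.mpr hz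
          show (Ideal.Quotient.mk J) (h * f) =
            (Ideal.Quotient.mk J) (h * f) + (Ideal.Quotient.mk J) z
          rw [hz0, add_zero]
        exact this
      simpa [ψ, Submodule.Quotient.mk_eq_zero] using this
  -- finrank computations
  have hτ : Module.finrank ℂ (MvPowerSeries (Fin n) ℂ ⧸ tjurinaIdeal f)
      = Module.finrank ℂ ((MvPowerSeries (Fin n) ℂ ⧸ J) ⧸ S) := by
    rw [← (Submodule.Quotient.restrictScalarsEquiv ℂ (tjurinaIdeal f)).finrank_eq,
      ← hkerψ]
    exact (LinearMap.quotKerEquivOfSurjective ψ hψsurj).finrank_eq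
  have h2 := Submodule.finrank_quotient_add_finrank S
  have hIrank : Module.finrank ℂ (MvPowerSeries (Fin n) ℂ ⧸ I) = 1 := by
    have h1 : Module.finrank ℂ (MvPowerSeries (Fin n) ℂ ⧸ I) = Module.finrank ℂ S := by
      rw [← (Submodule.Quotient.restrictScalarsEquiv ℂ I).finrank_eq, ← hker]
      exact φ.quotKerEquivRange.finrank_eq
    omega
  -- conclude
  intro g
  rw [← memI g]
  constructor
  · intro hg
    by_contra hc
    exact hInetop (Ideal.eq_top_of_isUnit_mem I hg
      (MvPowerSeries.isUnit_iff_constantCoeff.mpr (isUnit_iff_ne_zero.mpr hc)))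
  · intro hg
    by_contra hgI
    let mkI := Ideal.Quotient.mkₐ ℂ I
    have hne : mkI g ≠ 0 := by
      intro h
      exact hgI (Ideal.Quotient.eq_zero_iff_mem.mp (by simpa [mkI] using h))
    have hspan := (finrank_eq_one_iff_of_nonzero (mkI g) hne).mp hIrank
    have h1 : (1 : MvPowerSeries (Fin n) ℂ ⧸ I) ∈ Submodule.span ℂ {mkI g} :=
      hspan ▸ Submodule.mem_top
    obtain ⟨c, hc⟩ := Submodule.mem_span_singleton.mp h1
    have hmem : (1 : MvPowerSeries (Fin n) ℂ) - c • g ∈ I := by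
      have : mkI (1 - c • g) = 0 := by
        rw [map_sub, map_smul, map_one, hc, sub_self]
      exact Ideal.Quotient.eq_zero_iff_mem.mp (by simpa [mkI] using this)
    have hu : IsUnit ((1 : MvPowerSeries (Fin n) ℂ) - c • g) := by
      apply MvPowerSeries.isUnit_iff_constantCoeff.mpr
      rw [map_sub, map_one, Algebra.smul_def, map_mul, hg, mul_zero, sub_zero]
      exact isUnit_one
    exact hInetop (Ideal.eq_top_of_isUnit_mem I hmem hu)
end

section
/- Let f ∈ 𝔪 ⊂ ℂ[[x₁,…,xₙ]] with μ(f) = dim_ℂ Q(f) finite and τ(f) = μ(f) − 1. Then 𝔪·f ⊆ 𝔪·J(f), i.e. for every g ∈ 𝔪 the product g·f can be written as Σᵢ hᵢ·∂f/∂xᵢ with all hᵢ ∈ 𝔪. -/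
namespace Aux
open MvPowerSeries Finset

variable {n : ℕ}

abbrev R (n : ℕ) := MvPowerSeries (Fin n) ℂ

lemma coeff_pderiv (i : Fin n) (f : R n) (m : Fin n →₀ ℕ) :
    coeff m (pderiv i f) = ((m i + 1 : ℕ) : ℂ) * coeff (m + Finsupp.single i 1) f := by
  rw [coeff_apply]; rfl

lemma pderiv_add (i : Fin n) (f g : R n) : pderiv i (f + g) = pderiv i f + pderiv i g := by
  ext m
  simp only [map_add, coeff_pderiv, mul_add]

lemma pderiv_smul (i : Fin n) (c : ℂ) (f : R n) : pderiv i (c • f) = c • pderiv i f := by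
  ext m
  simp only [coeff_pderiv, map_smul, smul_eq_mul]
  ring

lemma pderiv_sum {α : Type*} (s : Finset α) (i : Fin n) (f : α → R n) :
    pderiv i (∑ a ∈ s, f a) = ∑ a ∈ s, pderiv i (f a) := by
  classical
  induction s using Finset.induction with
  | empty => ext m; simp [coeff_pderiv]
  | insert _ _ h ih => rw [Finset.sum_insert h, pderiv_add, ih, Finset.sum_insert h]

lemma pderiv_mul (i : Fin n) (a b : R n) :
    pderiv i (a * b) = a * pderiv i b + b * pderiv i a := by
  ext m
  set e := Finsupp.single i 1 with he
  have key : ∀ (u v : R n), (∑ pq ∈ antidiagonal (m + e), ((pq.2 i : ℕ) : ℂ) *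
      (coeff pq.1 u * coeff pq.2 v)) = coeff m (u * pderiv i v) := by
    intro u v
    rw [coeff_mul]
    rw [← Finset.sum_filter_add_sum_filter_not (antidiagonal (m + e)) (fun pq => e ≤ pq.2)]
    have h2 : (∑ pq ∈ (antidiagonal (m + e)).filter (fun pq => ¬ e ≤ pq.2),
        ((pq.2 i : ℕ) : ℂ) * (coeff pq.1 u * coeff pq.2 v)) = 0 := by
      apply Finset.sum_eq_zero
      intro pq hpq
      rw [Finset.mem_filter] at hpq
      have : pq.2 i = 0 := by
        by_contra hne
        exact hpq.2 (by rwa [he, Finsupp.single_le_iff, Nat.one_le_iff_ne_zero])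
      simp [this]
    rw [h2, add_zero]
    apply Finset.sum_nbij' (i := fun pq => (pq.1, pq.2 - e)) (j := fun uv => (uv.1, uv.2 + e))
    · intro pq hpq
      rw [Finset.mem_filter, HasAntidiagonal.mem_antidiagonal] at hpq
      rw [HasAntidiagonal.mem_antidiagonal]
      simp only
      rw [← add_tsub_assoc_of_le hpq.2, hpq.1, add_tsub_cancel_right]
    · intro uv huv
      rw [HasAntidiagonal.mem_antidiagonal] at huv
      rw [Finset.mem_filter, HasAntidiagonal.mem_antidiagonal]
      constructor
      · rw [← add_assoc, huv]
      · exact le_add_self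
    · intro pq hpq
      rw [Finset.mem_filter] at hpq
      simp [tsub_add_cancel_of_le hpq.2]
    · intro uv huv; simp
    · intro pq hpq
      rw [Finset.mem_filter] at hpq
      have h3 : (pq.2 - e) i + 1 = pq.2 i := by
        have := hpq.2
        rw [he, Finsupp.single_le_iff] at this
        simp [Finsupp.tsub_apply, he]
        omega
      rw [coeff_pderiv, ← he, tsub_add_cancel_of_le hpq.2, ← h3]
      push_cast
      ring
  have lhs : coeff m (pderiv i (a * b)) =
      ∑ pq ∈ antidiagonal (m + e), (((pq.1 i : ℕ) : ℂ) + ((pq.2 i : ℕ) : ℂ)) *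
        (coeff pq.1 a * coeff pq.2 b) := by
    rw [coeff_pderiv, coeff_mul, Finset.mul_sum]
    apply Finset.sum_congr rfl
    intro pq hpq
    rw [HasAntidiagonal.mem_antidiagonal] at hpq
    have : pq.1 i + pq.2 i = m i + 1 := by
      have := congrArg (fun x => x i) hpq
      simpa [he] using this
    rw [← this]
    push_cast
    ring
  rw [lhs, map_add]
  simp_rw [add_mul]
  rw [Finset.sum_add_distrib, add_comm ((coeff m) (a * pderiv i b))]
  congr 1
  · -- ∑ (pq.1 i) * (a b) = coeff m (b * pderiv i a)
    rw [← key b a]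
    apply Finset.sum_nbij' (i := Prod.swap) (j := Prod.swap)
    · intro pq hpq
      rw [HasAntidiagonal.mem_antidiagonal] at hpq ⊢
      rw [← hpq]; exact add_comm _ _
    · intro pq hpq
      rw [HasAntidiagonal.mem_antidiagonal] at hpq ⊢
      rw [← hpq]; exact add_comm _ _
    · intro pq _; rfl
    · intro pq _; rfl
    · intro pq _
      simp only [Prod.snd_swap, Prod.fst_swap]
      ring
  · rw [← key a b]

-- ===== eval section =====
open PowerSeries
open MvPowerSeries Finset PowerSeries

variable {n : ℕ}

/-- total degree of an exponent -/
def deg (m : Fin n →₀ ℕ) : ℕ := ∑ i, m i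

lemma deg_eq_zero {m : Fin n →₀ ℕ} (h : deg m = 0) : m = 0 := by
  rw [deg, Finset.sum_eq_zero_iff] at h
  ext i; exact h i (Finset.mem_univ i)

lemma apply_le_deg (m : Fin n →₀ ℕ) (i : Fin n) : m i ≤ deg m :=
  Finset.single_le_sum (f := fun j => m j) (fun _ _ => Nat.zero_le _) (Finset.mem_univ i)

lemma deg_add (u v : Fin n →₀ ℕ) : deg (u + v) = deg u + deg v := by
  simp [deg, Finset.sum_add_distrib]

/-- the box exponent with all entries `K` -/
noncomputable def box (K : ℕ) : Fin n →₀ ℕ := Finsupp.equivFunOnFinite.symm (fun _ => K)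

lemma box_apply (K : ℕ) (i : Fin n) : box K i = K := rfl

lemma lt_box (hn : 0 < n) {m : Fin n →₀ ℕ} {K : ℕ} (h : deg m < K) : m < box K := by
  constructor
  · intro i
    exact le_trans (apply_le_deg m i) (le_of_lt h)
  · intro hle
    have h2 : deg (box K : Fin n →₀ ℕ) ≤ deg m := by
      refine Finset.sum_le_sum ?_
      intro i _
      exact hle i
    have h3 : K ≤ deg (box K : Fin n →₀ ℕ) := by
      obtain ⟨i0⟩ : Nonempty (Fin n) := ⟨⟨0, hn⟩⟩
      calc K = (box K : Fin n →₀ ℕ) i0 := rfl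
      _ ≤ deg (box K : Fin n →₀ ℕ) := apply_le_deg _ _
    omega

variable (ψ : Fin n → PowerSeries ℂ)

lemma X_pow_deg_dvd (hψ : ∀ i, PowerSeries.constantCoeff (ψ i) = 0) (m : Fin n →₀ ℕ) :
    (PowerSeries.X : PowerSeries ℂ) ^ (deg m) ∣ ∏ i, ψ i ^ m i := by
  rw [deg, ← Finset.prod_pow_eq_pow_sum]
  exact Finset.prod_dvd_prod_of_dvd _ _ fun i _ =>
    pow_dvd_pow_of_dvd (PowerSeries.X_dvd_iff.mpr (hψ i)) _

lemma aeval_monomial' (m : Fin n →₀ ℕ) (c : ℂ) :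
    MvPolynomial.aeval ψ (MvPolynomial.monomial m c) =
      algebraMap ℂ (PowerSeries ℂ) c * ∏ i, ψ i ^ m i := by
  rw [MvPolynomial.aeval_monomial]
  congr 1
  exact Finsupp.prod_fintype _ _ fun i => pow_zero (ψ i)

lemma coeff_aeval_zero (hψ : ∀ i, PowerSeries.constantCoeff (ψ i) = 0)
    {p : MvPolynomial (Fin n) ℂ} {k : ℕ} (hp : ∀ m ∈ p.support, k < deg m) :
    PowerSeries.coeff k (MvPolynomial.aeval ψ p) = 0 := by
  conv_lhs => rw [p.as_sum]
  rw [map_sum, map_sum]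
  apply Finset.sum_eq_zero
  intro m hm
  rw [aeval_monomial']
  have hdvd : (PowerSeries.X : PowerSeries ℂ) ^ (deg m) ∣
      algebraMap ℂ (PowerSeries ℂ) (p.coeff m) * ∏ i, ψ i ^ m i :=
    Dvd.dvd.mul_left (X_pow_deg_dvd ψ hψ m) _
  exact PowerSeries.X_pow_dvd_iff.mp hdvd k (hp m hm)

lemma coeff_aeval_congr (hψ : ∀ i, PowerSeries.constantCoeff (ψ i) = 0)
    {p q : MvPolynomial (Fin n) ℂ} {k : ℕ}
    (hpq : ∀ m : Fin n →₀ ℕ, deg m ≤ k → p.coeff m = q.coeff m) :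
    PowerSeries.coeff k (MvPolynomial.aeval ψ p) =
      PowerSeries.coeff k (MvPolynomial.aeval ψ q) := by
  have h0 : PowerSeries.coeff k (MvPolynomial.aeval ψ (p - q)) = 0 := by
    apply coeff_aeval_zero ψ hψ
    intro m hm
    by_contra hc
    push_neg at hc
    have := hpq m hc
    rw [MvPolynomial.mem_support_iff, MvPolynomial.coeff_sub, sub_ne_zero] at hm
    exact hm this
  rw [map_sub, map_sub, sub_eq_zero] at h0
  exact h0

/-- evaluation of a multivariate power series along `ψ` -/
noncomputable def eval (f : MvPowerSeries (Fin n) ℂ) : PowerSeries ℂ :=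
  PowerSeries.mk fun k =>
    PowerSeries.coeff k (MvPolynomial.aeval ψ (MvPowerSeries.trunc ℂ (box (k+2)) f))

lemma coeff_eval (hn : 0 < n) (hψ : ∀ i, PowerSeries.constantCoeff (ψ i) = 0)
    (f : MvPowerSeries (Fin n) ℂ) {k K : ℕ} (hK : k < K) :
    PowerSeries.coeff k (eval ψ f) =
      PowerSeries.coeff k (MvPolynomial.aeval ψ (MvPowerSeries.trunc ℂ (box K) f)) := by
  rw [eval, PowerSeries.coeff_mk]
  apply coeff_aeval_congr ψ hψ
  intro m hm
  rw [MvPowerSeries.coeff_trunc, MvPowerSeries.coeff_trunc,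
    if_pos (lt_box hn (by omega)), if_pos (lt_box hn (by omega))]

lemma eval_add (f g : MvPowerSeries (Fin n) ℂ) :
    eval ψ (f + g) = eval ψ f + eval ψ g := by
  ext k
  rw [map_add, eval, eval, eval, PowerSeries.coeff_mk, PowerSeries.coeff_mk,
    PowerSeries.coeff_mk, map_add, map_add, map_add]

lemma eval_one (hn : 0 < n) : eval ψ (1 : MvPowerSeries (Fin n) ℂ) = 1 := by
  ext k
  rw [eval, PowerSeries.coeff_mk, MvPowerSeries.trunc_one]
  · rw [map_one]
  · intro h
    have := congrArg (fun (m : Fin n →₀ ℕ) => m ⟨0, hn⟩) h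
    simp [box_apply] at this

lemma eval_mul (hn : 0 < n) (hψ : ∀ i, PowerSeries.constantCoeff (ψ i) = 0)
    (f g : MvPowerSeries (Fin n) ℂ) :
    eval ψ (f * g) = eval ψ f * eval ψ g := by
  ext k
  have h1 : PowerSeries.coeff k (eval ψ (f * g)) = PowerSeries.coeff k
      (MvPolynomial.aeval ψ (MvPowerSeries.trunc ℂ (box (k+2)) f *
        MvPowerSeries.trunc ℂ (box (k+2)) g)) := by
    rw [coeff_eval ψ hn hψ _ (show k < k + 2 by omega)]
    apply coeff_aeval_congr ψ hψ
    intro m hm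
    rw [MvPowerSeries.coeff_trunc, if_pos (lt_box hn (by omega)), MvPolynomial.coeff_mul,
      MvPowerSeries.coeff_mul]
    apply Finset.sum_congr rfl
    intro uv huv
    rw [HasAntidiagonal.mem_antidiagonal] at huv
    have hu : deg uv.1 ≤ k := by
      have := deg_add uv.1 uv.2
      rw [huv] at this
      omega
    have hv : deg uv.2 ≤ k := by
      have := deg_add uv.1 uv.2
      rw [huv] at this
      omega
    rw [MvPowerSeries.coeff_trunc, if_pos (lt_box hn (by omega)),
      MvPowerSeries.coeff_trunc, if_pos (lt_box hn (by omega))]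
  rw [h1, map_mul, PowerSeries.coeff_mul, PowerSeries.coeff_mul]
  apply Finset.sum_congr rfl
  intro jj hjj
  rw [HasAntidiagonal.mem_antidiagonal] at hjj
  rw [coeff_eval ψ hn hψ f (show jj.1 < k + 2 by omega),
    coeff_eval ψ hn hψ g (show jj.2 < k + 2 by omega)]

lemma constantCoeff_eval (hn : 0 < n) (hψ : ∀ i, PowerSeries.constantCoeff (ψ i) = 0)
    (f : MvPowerSeries (Fin n) ℂ) :
    PowerSeries.constantCoeff (eval ψ f) = MvPowerSeries.constantCoeff f := by
  rw [← PowerSeries.coeff_zero_eq_constantCoeff_apply, eval, PowerSeries.coeff_mk]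
  have h1 : PowerSeries.coeff 0 (MvPolynomial.aeval ψ (MvPowerSeries.trunc ℂ (box 2) f)) =
      PowerSeries.coeff 0 (MvPolynomial.aeval ψ
        (MvPolynomial.C (MvPowerSeries.constantCoeff f))) := by
    apply coeff_aeval_congr ψ hψ
    intro m hm
    have hm0 : m = 0 := deg_eq_zero (Nat.le_zero.mp hm)
    subst hm0
    rw [MvPowerSeries.coeff_trunc, if_pos (lt_box hn (by simp [deg]))]
    simp [MvPolynomial.coeff_C, MvPowerSeries.coeff_zero_eq_constantCoeff]
  rw [h1, MvPolynomial.aeval_C]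
  rw [show (algebraMap ℂ (PowerSeries ℂ)) = PowerSeries.C from rfl, PowerSeries.coeff_zero_C]

lemma eval_X (hn : 0 < n) (hψ : ∀ i, PowerSeries.constantCoeff (ψ i) = 0) (i : Fin n) :
    eval ψ (MvPowerSeries.X i) = ψ i := by
  ext k
  rw [eval, PowerSeries.coeff_mk]
  have h1 : MvPowerSeries.trunc ℂ (box (k+2)) (MvPowerSeries.X i : MvPowerSeries (Fin n) ℂ) =
      MvPolynomial.X i := by
    apply MvPolynomial.ext
    intro m
    rw [MvPowerSeries.coeff_trunc, MvPolynomial.coeff_X']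
    by_cases hm : Finsupp.single i 1 = m
    · subst hm
      rw [if_pos, if_pos rfl, MvPowerSeries.coeff_X, if_pos rfl]
      apply lt_box hn
      have : deg (Finsupp.single i 1) = 1 := by
        simp [deg, Finsupp.single_apply]
      omega
    · rw [if_neg hm]
      split_ifs with h2
      · rw [MvPowerSeries.coeff_X, if_neg (fun hc => hm hc.symm)]
      · rfl
  rw [h1, MvPolynomial.aeval_X]

-- ===== dependence on low-order coefficients =====

lemma deg_single (i : Fin n) : deg (Finsupp.single i 1) = 1 := by
  simp [deg, Finsupp.single_apply]

lemma coeff_eval_dep {ψ ψ' : Fin n → PowerSeries ℂ} (hn : 0 < n)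
    (hψ : ∀ i, PowerSeries.constantCoeff (ψ i) = 0)
    (hψ' : ∀ i, PowerSeries.constantCoeff (ψ' i) = 0) {k : ℕ}
    (h : ∀ i, ∀ l ≤ k, PowerSeries.coeff l (ψ i) = PowerSeries.coeff l (ψ' i))
    (f : MvPowerSeries (Fin n) ℂ) :
    PowerSeries.coeff k (eval ψ f) = PowerSeries.coeff k (eval ψ' f) := by
  set I : Ideal (PowerSeries ℂ) := Ideal.span {(PowerSeries.X : PowerSeries ℂ)^(k+1)} with hI
  have hXmem : ∀ u : PowerSeries ℂ, (∀ l ≤ k, PowerSeries.coeff l u = 0) → u ∈ I := by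
    intro u hu
    exact Ideal.mem_span_singleton.mpr (PowerSeries.X_pow_dvd_iff.mpr
      (fun m hm => hu m (by omega)))
  have key : ∀ p : MvPolynomial (Fin n) ℂ,
      Ideal.Quotient.mk I (MvPolynomial.aeval ψ p) =
        Ideal.Quotient.mk I (MvPolynomial.aeval ψ' p) := by
    intro p
    have heq : (Ideal.Quotient.mkₐ ℂ I).comp (MvPolynomial.aeval ψ) =
        (Ideal.Quotient.mkₐ ℂ I).comp (MvPolynomial.aeval ψ') := by
      apply MvPolynomial.algHom_ext
      intro i
      simp only [AlgHom.comp_apply, MvPolynomial.aeval_X, Ideal.Quotient.mkₐ_eq_mk]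
      rw [Ideal.Quotient.eq]
      exact hXmem _ (fun l hl => by rw [map_sub, h i l hl, sub_self])
    have := AlgHom.congr_fun heq p
    simpa using this
  rw [coeff_eval ψ hn hψ f (show k < k + 2 by omega),
    coeff_eval ψ' hn hψ' f (show k < k + 2 by omega)]
  have h2 := key (MvPowerSeries.trunc ℂ (box (k+2)) f)
  rw [Ideal.Quotient.eq] at h2
  have h3 := Ideal.mem_span_singleton.mp h2
  have h4 := PowerSeries.X_pow_dvd_iff.mp h3 k (by omega)
  rw [map_sub, sub_eq_zero] at h4
  exact h4

-- ===== coeff of MvPolynomial.pderiv =====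

lemma coeff_pderiv_poly (i : Fin n) (p : MvPolynomial (Fin n) ℂ) (m : Fin n →₀ ℕ) :
    (MvPolynomial.pderiv i p).coeff m =
      ((m i + 1 : ℕ) : ℂ) * p.coeff (m + Finsupp.single i 1) := by
  induction p using MvPolynomial.induction_on' with
  | add p q hp hq =>
    rw [map_add, MvPolynomial.coeff_add, MvPolynomial.coeff_add, hp, hq, mul_add]
  | monomial u c =>
    rw [MvPolynomial.pderiv_monomial, MvPolynomial.coeff_monomial, MvPolynomial.coeff_monomial]
    by_cases hu : u = m + Finsupp.single i 1
    · subst hu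
      rw [if_pos (add_tsub_cancel_right m (Finsupp.single i 1)), if_pos rfl]
      simp only [Finsupp.add_apply, Finsupp.single_eq_same]
      push_cast
      ring
    · rw [if_neg hu]
      split_ifs with h3
      · have hui : u i = 0 := by
          by_contra hne
          have hle : Finsupp.single i 1 ≤ u := by
            rwa [Finsupp.single_le_iff, Nat.one_le_iff_ne_zero]
          exact hu (by rw [← h3, tsub_add_cancel_of_le hle])
        rw [hui]
        simp
      · rw [mul_zero]

-- ===== chain rule =====

lemma aeval_pderiv_poly (ψ : Fin n → PowerSeries ℂ) (p : MvPolynomial (Fin n) ℂ) :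
    PowerSeries.derivative ℂ (MvPolynomial.aeval ψ p) =
      ∑ i, MvPolynomial.aeval ψ (MvPolynomial.pderiv i p) * PowerSeries.derivative ℂ (ψ i) := by
  induction p using MvPolynomial.induction_on with
  | C c =>
    simp [MvPolynomial.aeval_C]
  | add p q hp hq =>
    simp only [map_add, hp, hq, add_mul, Finset.sum_add_distrib]
  | mul_X p j hp =>
    rw [map_mul, MvPolynomial.aeval_X, Derivation.leibniz]
    simp only [smul_eq_mul]
    rw [hp]
    have hR : ∀ i, MvPolynomial.pderiv i (p * MvPolynomial.X j) =
        MvPolynomial.pderiv i p * MvPolynomial.X j + p * (if j = i then 1 else 0) := by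
      intro i
      rw [MvPolynomial.pderiv_mul, MvPolynomial.pderiv_X, Pi.single_apply]
    simp only [hR, map_add, map_mul, MvPolynomial.aeval_X, add_mul, Finset.sum_add_distrib]
    have h2 : ∑ i, MvPolynomial.aeval ψ p * MvPolynomial.aeval ψ (if j = i then (1 : MvPolynomial (Fin n) ℂ) else 0) *
        PowerSeries.derivative ℂ (ψ i) =
        MvPolynomial.aeval ψ p * PowerSeries.derivative ℂ (ψ j) := by
      rw [Finset.sum_eq_single j]
      · rw [if_pos rfl, map_one, mul_one]
      · intro b _ hb
        rw [if_neg (fun hc => hb hc.symm), map_zero, mul_zero, zero_mul]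
      · intro hj
        exact absurd (Finset.mem_univ j) hj
    rw [h2, Finset.mul_sum]
    rw [add_comm]
    congr 1
    apply Finset.sum_congr rfl
    intro i _
    ring

lemma coeff_aeval_pderiv_trunc (ψ : Fin n → PowerSeries ℂ) (hn : 0 < n)
    (hψ : ∀ i, PowerSeries.constantCoeff (ψ i) = 0)
    (f : MvPowerSeries (Fin n) ℂ) (i : Fin n) {j k : ℕ} (hj : j ≤ k) :
    PowerSeries.coeff j (MvPolynomial.aeval ψ
        (MvPolynomial.pderiv i (MvPowerSeries.trunc ℂ (box (k+3)) f))) =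
      PowerSeries.coeff j (eval ψ (pderiv i f)) := by
  rw [coeff_eval ψ hn hψ _ (show j < k + 3 by omega)]
  apply coeff_aeval_congr ψ hψ
  intro m hm
  rw [coeff_pderiv_poly, MvPowerSeries.coeff_trunc, MvPowerSeries.coeff_trunc]
  have h1 : m + Finsupp.single i 1 < box (k+3) := by
    apply lt_box hn
    rw [deg_add, deg_single]
    omega
  have h2 : m < box (k+3) := lt_box hn (by omega)
  rw [if_pos h1, if_pos h2, coeff_pderiv]

lemma deriv_eval (ψ : Fin n → PowerSeries ℂ) (hn : 0 < n)
    (hψ : ∀ i, PowerSeries.constantCoeff (ψ i) = 0) (f : MvPowerSeries (Fin n) ℂ) :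
    PowerSeries.derivative ℂ (eval ψ f) =
      ∑ i, eval ψ (pderiv i f) * PowerSeries.derivative ℂ (ψ i) := by
  ext k
  rw [PowerSeries.coeff_derivative, coeff_eval ψ hn hψ f (show k + 1 < k + 3 by omega),
    ← PowerSeries.coeff_derivative, aeval_pderiv_poly ψ, map_sum, map_sum]
  apply Finset.sum_congr rfl
  intro i _
  rw [PowerSeries.coeff_mul, PowerSeries.coeff_mul]
  apply Finset.sum_congr rfl
  intro jj hjj
  rw [HasAntidiagonal.mem_antidiagonal] at hjj
  rw [coeff_aeval_pderiv_trunc ψ hn hψ f i (show jj.1 ≤ k by omega)]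

-- ===== linear ODE uniqueness =====

lemma ode_unique_zero (u b : PowerSeries ℂ)
    (hode : PowerSeries.derivative ℂ u = b * u)
    (h0 : PowerSeries.constantCoeff u = 0) : u = 0 := by
  have key : ∀ l, PowerSeries.coeff l u = 0 := by
    intro l
    induction l using Nat.strong_induction_on with
    | _ l ih =>
      match l with
      | 0 => rwa [PowerSeries.coeff_zero_eq_constantCoeff]
      | (l+1) =>
        have h1 : PowerSeries.coeff l (PowerSeries.derivative ℂ u) =
            PowerSeries.coeff (l+1) u * (l+1) := PowerSeries.coeff_derivative u l
        rw [hode, PowerSeries.coeff_mul] at h1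
        have h2 : ∀ jj ∈ HasAntidiagonal.antidiagonal l, PowerSeries.coeff jj.1 b *
            PowerSeries.coeff jj.2 u = 0 := by
          intro jj hjj
          rw [HasAntidiagonal.mem_antidiagonal] at hjj
          rw [ih jj.2 (by omega), mul_zero]
        rw [Finset.sum_eq_zero h2] at h1
        have hne : ((l : ℂ) + 1) ≠ 0 := Nat.cast_add_one_ne_zero l
        rcases mul_eq_zero.mp h1.symm with h | h
        · exact h
        · exact absurd h hne
  ext l
  rw [key l, map_zero]

lemma ode_sys_zero (v : Fin n → PowerSeries ℂ) (A : Fin n → Fin n → PowerSeries ℂ)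
    (hode : ∀ i, PowerSeries.derivative ℂ (v i) = ∑ j, A i j * v j)
    (h0 : ∀ i, PowerSeries.constantCoeff (v i) = 0) : ∀ i, v i = 0 := by
  have key : ∀ l i, PowerSeries.coeff l (v i) = 0 := by
    intro l
    induction l using Nat.strong_induction_on with
    | _ l ih =>
      match l with
      | 0 => intro i; rw [PowerSeries.coeff_zero_eq_constantCoeff]; exact h0 i
      | (l+1) =>
        intro i
        have h1 : PowerSeries.coeff l (PowerSeries.derivative ℂ (v i)) =
            PowerSeries.coeff (l+1) (v i) * (l+1) := PowerSeries.coeff_derivative _ l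
        rw [hode i, map_sum] at h1
        have h2 : ∀ j ∈ Finset.univ (α := Fin n),
            PowerSeries.coeff l (A i j * v j) = 0 := by
          intro j _
          rw [PowerSeries.coeff_mul]
          apply Finset.sum_eq_zero
          intro jj hjj
          rw [HasAntidiagonal.mem_antidiagonal] at hjj
          rw [ih jj.2 (by omega) j, mul_zero]
        rw [Finset.sum_eq_zero h2] at h1
        have hne : ((l : ℂ) + 1) ≠ 0 := Nat.cast_add_one_ne_zero l
        have := h1.symm
        rcases mul_eq_zero.mp this with h | h
        · exact h
        · exact absurd h hne
  intro i
  ext l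
  rw [key l i, map_zero]

-- ===== the integral curve =====

variable (F : Fin n → MvPowerSeries (Fin n) ℂ)

noncomputable def curveApprox (F : Fin n → MvPowerSeries (Fin n) ℂ) :
    ℕ → Fin n → PowerSeries ℂ
  | 0 => fun _ => 0
  | (k+1) => fun j => curveApprox F k j +
      PowerSeries.C ((PowerSeries.coeff k (eval (curveApprox F k) (F j))) / (k+1)) *
        (PowerSeries.X) ^ (k+1)

lemma coeff_curveApprox_high (k : ℕ) (j : Fin n) {l : ℕ} (hl : k < l) :
    PowerSeries.coeff l (curveApprox F k j) = 0 := by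
  induction k generalizing l with
  | zero => simp [curveApprox]
  | succ k ih =>
    rw [curveApprox, map_add, ih (by omega), PowerSeries.coeff_C_mul,
      PowerSeries.coeff_X_pow, if_neg (by omega), mul_zero, add_zero]

lemma constantCoeff_curveApprox (k : ℕ) (j : Fin n) :
    PowerSeries.constantCoeff (curveApprox F k j) = 0 := by
  cases k with
  | zero => simp [curveApprox]
  | succ k =>
    rw [← PowerSeries.coeff_zero_eq_constantCoeff_apply, curveApprox, map_add,
      PowerSeries.coeff_C_mul, PowerSeries.coeff_X_pow, if_neg (by omega), mul_zero, add_zero,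
      PowerSeries.coeff_zero_eq_constantCoeff_apply, constantCoeff_curveApprox k j]

lemma coeff_curveApprox_stable (k k' : ℕ) (j : Fin n) {l : ℕ} (hl : l ≤ k) (hk : k ≤ k') :
    PowerSeries.coeff l (curveApprox F k' j) = PowerSeries.coeff l (curveApprox F k j) := by
  induction k' with
  | zero =>
    have : k = 0 := by omega
    subst this; rfl
  | succ k' ih =>
    rcases Nat.lt_or_ge k (k'+1) with h | h
    · have hk' : k ≤ k' := by omega
      rw [curveApprox, map_add, PowerSeries.coeff_C_mul, PowerSeries.coeff_X_pow,
        if_neg (by omega), mul_zero, add_zero]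
      exact ih hk'
    · have : k = k' + 1 := by omega
      subst this; rfl

noncomputable def curve (F : Fin n → MvPowerSeries (Fin n) ℂ) (j : Fin n) : PowerSeries ℂ :=
  PowerSeries.mk fun l => PowerSeries.coeff l (curveApprox F l j)

lemma coeff_curve (j : Fin n) {l k : ℕ} (hl : l ≤ k) :
    PowerSeries.coeff l (curve F j) = PowerSeries.coeff l (curveApprox F k j) := by
  rw [curve, PowerSeries.coeff_mk, coeff_curveApprox_stable F l k j (le_refl l) hl]

lemma constantCoeff_curve (j : Fin n) : PowerSeries.constantCoeff (curve F j) = 0 := by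
  rw [← PowerSeries.coeff_zero_eq_constantCoeff_apply, coeff_curve F j (le_refl 0),
    PowerSeries.coeff_zero_eq_constantCoeff_apply, constantCoeff_curveApprox]

lemma curve_ode (hn : 0 < n) (j : Fin n) :
    PowerSeries.derivative ℂ (curve F j) = eval (curve F) (F j) := by
  ext k
  rw [PowerSeries.coeff_derivative, coeff_curve F j (show k + 1 ≤ k + 1 by omega), curveApprox,
    map_add, coeff_curveApprox_high F k j (by omega), PowerSeries.coeff_C_mul,
    PowerSeries.coeff_X_pow, if_pos rfl, mul_one, zero_add]
  have hne : ((k : ℂ) + 1) ≠ 0 := Nat.cast_add_one_ne_zero k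
  rw [div_mul_cancel₀ _ (by exact_mod_cast hne)]
  exact coeff_eval_dep hn (constantCoeff_curveApprox F k) (constantCoeff_curve F)
    (fun i l hl => (coeff_curve F i hl).symm) (F j)

-- ===== symmetry of second derivatives =====

lemma pderiv_comm (i j : Fin n) (f : MvPowerSeries (Fin n) ℂ) :
    pderiv i (pderiv j f) = pderiv j (pderiv i f) := by
  ext m
  rw [coeff_pderiv, coeff_pderiv, coeff_pderiv, coeff_pderiv, add_right_comm]
  simp only [Finsupp.add_apply, Finsupp.single_apply]
  by_cases h : i = j
  · subst h
    simp
  · rw [if_neg h, if_neg (fun hc => h hc.symm)]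
    push_cast
    ring

-- ===== bundled evaluation hom =====

lemma eval_zero (ψ : Fin n → PowerSeries ℂ) : eval ψ (0 : MvPowerSeries (Fin n) ℂ) = 0 := by
  ext k
  rw [eval, PowerSeries.coeff_mk, map_zero, map_zero, map_zero]

noncomputable def evalHom (ψ : Fin n → PowerSeries ℂ) (hn : 0 < n)
    (hψ : ∀ i, PowerSeries.constantCoeff (ψ i) = 0) :
    MvPowerSeries (Fin n) ℂ →+* PowerSeries ℂ where
  toFun := eval ψ
  map_one' := eval_one ψ hn
  map_mul' := eval_mul ψ hn hψ
  map_zero' := eval_zero ψ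
  map_add' := eval_add ψ

lemma evalHom_apply (ψ : Fin n → PowerSeries ℂ) (hn : 0 < n)
    (hψ : ∀ i, PowerSeries.constantCoeff (ψ i) = 0) (f : MvPowerSeries (Fin n) ℂ) :
    evalHom ψ hn hψ f = eval ψ f := rfl

-- ===== the key contradiction lemma =====

lemma key_contradiction {f g : MvPowerSeries (Fin n) ℂ} {h : Fin n → MvPowerSeries (Fin n) ℂ}
    (hpd0 : ∀ i, MvPowerSeries.constantCoeff (pderiv i f) = 0)
    (hrel : g * f = ∑ i, h i * pderiv i f)
    (hf0 : MvPowerSeries.constantCoeff f = 0)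
    {i0 : Fin n} (hc : MvPowerSeries.constantCoeff (h i0) ≠ 0)
    {N : ℕ} (hXN : (MvPowerSeries.X i0 : MvPowerSeries (Fin n) ℂ) ^ N ∈ jacobianIdeal f) :
    False := by
  have hn : 0 < n := i0.pos
  set φ := curve h with hφ
  have hφ0 : ∀ i, PowerSeries.constantCoeff (φ i) = 0 := constantCoeff_curve h
  have hode : ∀ j, PowerSeries.derivative ℂ (φ j) = eval φ (h j) := curve_ode h hn
  set E := evalHom φ hn hφ0 with hE
  have hEa : ∀ w, E w = eval φ w := fun w => rfl
  -- u := E f is zero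
  have hu : E f = 0 := by
    apply ode_unique_zero (E f) (E g)
    · rw [hEa f, deriv_eval φ hn hφ0 f]
      have hstep : ∀ i, eval φ (pderiv i f) * PowerSeries.derivative ℂ (φ i) =
          E (h i * pderiv i f) := by
        intro i
        rw [hode i, map_mul, hEa, hEa, mul_comm]
      rw [Finset.sum_congr rfl (fun i _ => hstep i), ← map_sum, ← hrel, map_mul, hEa f]
    · rw [hEa f, constantCoeff_eval φ hn hφ0, hf0]
  -- the derivatives also evaluate to zero
  have hv : ∀ i, E (pderiv i f) = 0 := by
    apply ode_sys_zero (fun i => E (pderiv i f))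
      (fun i j => (if i = j then E g else 0) - E (pderiv i (h j)))
    · intro i
      have hdiff : (∑ j, h j * pderiv i (pderiv j f)) =
          g * pderiv i f + f * pderiv i g - ∑ j, pderiv j f * pderiv i (h j) := by
        have hd := congrArg (pderiv i) hrel
        rw [pderiv_mul, pderiv_sum] at hd
        rw [Finset.sum_congr rfl (fun j _ => pderiv_mul i (h j) (pderiv j f)),
          Finset.sum_add_distrib] at hd
        rw [hd]
        ring
      have hlhs : PowerSeries.derivative ℂ (E (pderiv i f)) =
          E (∑ j, h j * pderiv i (pderiv j f)) := by
        rw [hEa, deriv_eval φ hn hφ0 (pderiv i f), map_sum]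
        apply Finset.sum_congr rfl
        intro j _
        rw [hode j, map_mul, hEa, hEa, mul_comm, pderiv_comm]
      have hrhs : (∑ j, ((if i = j then E g else 0) - E (pderiv i (h j))) * E (pderiv j f)) =
          E g * E (pderiv i f) - ∑ j, E (pderiv j f * pderiv i (h j)) := by
        simp_rw [sub_mul]
        rw [Finset.sum_sub_distrib]
        congr 1
        · rw [Finset.sum_eq_single i]
          · rw [if_pos rfl]
          · intro b _ hb
            rw [if_neg (fun hcc => hb hcc.symm), zero_mul]
          · intro hi
            exact absurd (Finset.mem_univ i) hi
        · apply Finset.sum_congr rfl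
          intro j _
          rw [map_mul, mul_comm]
      rw [hlhs, hrhs, hdiff, map_sub, map_add, map_mul, map_mul, hu, zero_mul, add_zero,
        map_sum]
    · intro i
      rw [hEa, constantCoeff_eval φ hn hφ0, hpd0 i]
  -- contradiction with X i0 ^ N ∈ J
  rw [jacobianIdeal] at hXN
  obtain ⟨a, ha⟩ := (Submodule.mem_span_range_iff_exists_fun (MvPowerSeries (Fin n) ℂ)).mp hXN
  have h3 : E ((MvPowerSeries.X i0 : MvPowerSeries (Fin n) ℂ) ^ N) = 0 := by
    rw [← ha, map_sum]
    apply Finset.sum_eq_zero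
    intro i _
    rw [smul_eq_mul, map_mul, hv i, mul_zero]
  rw [map_pow] at h3
  have h4 : E (MvPowerSeries.X i0) = φ i0 := eval_X φ hn hφ0 i0
  have h5 : φ i0 ≠ 0 := by
    intro hzero
    have h6 := PowerSeries.coeff_derivative (φ i0) 0
    rw [hode i0, hzero] at h6
    have h7 : PowerSeries.coeff 0 (eval φ (h i0)) =
        MvPowerSeries.constantCoeff (h i0) := by
      rw [PowerSeries.coeff_zero_eq_constantCoeff_apply, constantCoeff_eval φ hn hφ0]
    rw [h7] at h6
    rw [map_zero] at h6
    norm_num at h6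
    exact hc h6
  rw [h4] at h3
  exact pow_ne_zero N h5 h3

-- ===== commutative algebra part =====

lemma jacobian_ne_top (f : MvPowerSeries (Fin n) ℂ)
    (htau : Module.finrank ℂ (MvPowerSeries (Fin n) ℂ ⧸ tjurinaIdeal f) + 1 =
      Module.finrank ℂ (MvPowerSeries (Fin n) ℂ ⧸ jacobianIdeal f)) :
    jacobianIdeal f ≠ ⊤ := by
  intro hJ
  have hT : tjurinaIdeal f = ⊤ := by
    rw [eq_top_iff, ← hJ]
    exact le_sup_right
  have h1 : Subsingleton (MvPowerSeries (Fin n) ℂ ⧸ jacobianIdeal f) :=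
    Ideal.Quotient.subsingleton_iff.mpr hJ
  have h2 : Subsingleton (MvPowerSeries (Fin n) ℂ ⧸ tjurinaIdeal f) :=
    Ideal.Quotient.subsingleton_iff.mpr hT
  rw [Module.finrank_zero_of_subsingleton, Module.finrank_zero_of_subsingleton] at htau
  omega

lemma pderiv_constantCoeff_zero (f : MvPowerSeries (Fin n) ℂ)
    (htau : Module.finrank ℂ (MvPowerSeries (Fin n) ℂ ⧸ tjurinaIdeal f) + 1 =
      Module.finrank ℂ (MvPowerSeries (Fin n) ℂ ⧸ jacobianIdeal f)) (i : Fin n) :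
    MvPowerSeries.constantCoeff (pderiv i f) = 0 := by
  by_contra hne
  have hunit : IsUnit (pderiv i f) :=
    MvPowerSeries.isUnit_iff_constantCoeff.mpr (isUnit_iff_ne_zero.mpr hne)
  have hmem : pderiv i f ∈ jacobianIdeal f := Ideal.subset_span ⟨i, rfl⟩
  exact jacobian_ne_top f htau (Ideal.eq_top_of_isUnit_mem _ hmem hunit)

lemma ker_le_jacobson (J' : Ideal (MvPowerSeries (Fin n) ℂ)) :
    RingHom.ker (MvPowerSeries.constantCoeff) ≤ J'.jacobson := by
  intro x hx
  rw [RingHom.mem_ker] at hx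
  rw [Ideal.jacobson, Ideal.mem_sInf]
  rintro M ⟨_, hM⟩
  by_contra hxM
  obtain ⟨y, i, hiM, hyi⟩ := hM.exists_inv hxM
  have hic : MvPowerSeries.constantCoeff i = 1 := by
    have := congrArg (MvPowerSeries.constantCoeff) hyi
    rw [map_add, map_mul, hx, mul_zero, zero_add, map_one] at this
    exact this
  have hiu : IsUnit i := MvPowerSeries.isUnit_iff_constantCoeff.mpr (by rw [hic]; exact isUnit_one)
  exact hM.ne_top (Ideal.eq_top_of_isUnit_mem _ hiM hiu)

lemma exists_pow_le (f : MvPowerSeries (Fin n) ℂ)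
    (hfin : FiniteDimensional ℂ (MvPowerSeries (Fin n) ℂ ⧸ jacobianIdeal f)) :
    ∃ N, (RingHom.ker (MvPowerSeries.constantCoeff))^N ≤ jacobianIdeal f := by
  haveI : IsArtinianRing (MvPowerSeries (Fin n) ℂ ⧸ jacobianIdeal f) :=
    IsArtinianRing.of_finite ℂ _
  obtain ⟨N, hN⟩ := IsArtinianRing.isNilpotent_jacobson_bot
    (R := MvPowerSeries (Fin n) ℂ ⧸ jacobianIdeal f)
  refine ⟨N, ?_⟩
  set π := Ideal.Quotient.mk (jacobianIdeal f) with hπ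
  have hmap : Ideal.map π ((RingHom.ker (MvPowerSeries.constantCoeff))^N) ≤ ⊥ := by
    rw [Ideal.map_pow]
    have h1 : Ideal.map π (RingHom.ker (MvPowerSeries.constantCoeff)) ≤
        Ideal.jacobson (⊥ : Ideal (MvPowerSeries (Fin n) ℂ ⧸ jacobianIdeal f)) := by
      calc Ideal.map π (RingHom.ker (MvPowerSeries.constantCoeff))
          ≤ Ideal.map π ((jacobianIdeal f).jacobson) :=
            Ideal.map_mono (ker_le_jacobson _)
        _ = (Ideal.map π (jacobianIdeal f)).jacobson :=
            Ideal.map_jacobson_of_surjective Ideal.Quotient.mk_surjective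
              (le_of_eq (Ideal.mk_ker))
        _ = Ideal.jacobson ⊥ := by rw [Ideal.map_quotient_self]
    calc (Ideal.map π (RingHom.ker (MvPowerSeries.constantCoeff)))^N
        ≤ (Ideal.jacobson ⊥)^N := Ideal.pow_right_mono h1 N
      _ = ⊥ := hN
  intro x hx
  have h2 : π x ∈ Ideal.map π ((RingHom.ker (MvPowerSeries.constantCoeff))^N) :=
    Ideal.mem_map_of_mem π hx
  have h3 : π x = 0 := by
    have := hmap h2
    rwa [Ideal.mem_bot] at this
  exact (Ideal.Quotient.eq_zero_iff_mem).mp h3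

set_option synthInstance.maxHeartbeats 1000000 in
set_option maxHeartbeats 2000000 in
lemma mul_mem_jacobian (f : MvPowerSeries (Fin n) ℂ)
    (hfin : FiniteDimensional ℂ (MvPowerSeries (Fin n) ℂ ⧸ jacobianIdeal f))
    (htau : Module.finrank ℂ (MvPowerSeries (Fin n) ℂ ⧸ tjurinaIdeal f) + 1 =
      Module.finrank ℂ (MvPowerSeries (Fin n) ℂ ⧸ jacobianIdeal f))
    (g : MvPowerSeries (Fin n) ℂ) (hg : MvPowerSeries.constantCoeff g = 0) :
    g * f ∈ jacobianIdeal f := by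
  have hJT : jacobianIdeal f ≤ tjurinaIdeal f := le_sup_right
  set π := Ideal.Quotient.mk (jacobianIdeal f) with hπ
  set Q := MvPowerSeries (Fin n) ℂ ⧸ jacobianIdeal f with hQ
  set S' : Ideal Q := Ideal.map π (tjurinaIdeal f) with hS'
  have e1 : Module.finrank ℂ (Q ⧸ S') =
      Module.finrank ℂ (MvPowerSeries (Fin n) ℂ ⧸ tjurinaIdeal f) :=
    LinearEquiv.finrank_eq (DoubleQuot.quotQuotEquivQuotOfLEₐ ℂ hJT).toLinearEquiv
  set Nsub : Submodule ℂ Q := Submodule.restrictScalars ℂ (S' : Submodule Q Q) with hNsub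
  have e2 : Module.finrank ℂ (Q ⧸ Nsub) = Module.finrank ℂ (Q ⧸ S') :=
    LinearEquiv.finrank_eq (Submodule.Quotient.restrictScalarsEquiv ℂ S')
  have e3 : Module.finrank ℂ (Q ⧸ Nsub) + Module.finrank ℂ Nsub = Module.finrank ℂ Q :=
    Submodule.finrank_quotient_add_finrank Nsub
  have hdim : Module.finrank ℂ Nsub = 1 := by
    rw [e2, e1] at e3
    have e4 : Module.finrank ℂ Q =
        Module.finrank ℂ (MvPowerSeries (Fin n) ℂ ⧸ jacobianIdeal f) := rfl
    omega
  have hspan : S' = Ideal.span {π f} := by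
    rw [hS', tjurinaIdeal, Ideal.map_sup, Ideal.map_span, Set.image_singleton,
      Ideal.map_quotient_self, sup_bot_eq]
  have hπf : π f ≠ 0 := by
    intro h0
    have : S' = ⊥ := by rw [hspan, h0, Ideal.span_singleton_eq_bot.mpr rfl]
    rw [hNsub, this] at hdim
    rw [Submodule.restrictScalars_bot, finrank_bot] at hdim
    omega
  have hfmem : π f ∈ Nsub := by
    rw [hNsub, Submodule.restrictScalars_mem, hspan]
    exact Ideal.subset_span rfl
  have hle : (ℂ ∙ (π f)) ≤ Nsub := (Submodule.span_singleton_le_iff_mem _ _).mpr hfmem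
  have heq : (ℂ ∙ (π f)) = Nsub :=
    Submodule.eq_of_le_of_finrank_le hle
      (by rw [hdim, finrank_span_singleton hπf])
  have hmemS : π (g * f) ∈ Nsub := by
    rw [hNsub, Submodule.restrictScalars_mem, hspan, map_mul]
    exact Ideal.mul_mem_left _ _ (Ideal.subset_span rfl)
  rw [← heq] at hmemS
  obtain ⟨c, hc⟩ := Submodule.mem_span_singleton.mp hmemS
  obtain ⟨N0, hN0⟩ := exists_pow_le f hfin
  set N := N0 + 1 with hN
  have hNle : (RingHom.ker (MvPowerSeries.constantCoeff))^N ≤ jacobianIdeal f :=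
    le_trans (Ideal.pow_le_pow_right (by omega)) hN0
  have hgker : g ∈ RingHom.ker (MvPowerSeries.constantCoeff) := by
    rw [RingHom.mem_ker]; exact hg
  have hpow : ∀ s : ℕ, π (g^s * f) = c^s • π f := by
    intro s
    induction s with
    | zero => rw [pow_zero, one_mul, pow_zero, one_smul]
    | succ s ih =>
      have h1 : g^(s+1) * f = (g^s * f) * g := by ring
      rw [h1, map_mul, ih, smul_mul_assoc, ← map_mul, mul_comm f g, ← hc, smul_smul, ← pow_succ]
  have hgN : g^N * f ∈ jacobianIdeal f :=
    Ideal.mul_mem_right f _ (hNle (Ideal.pow_mem_pow hgker N))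
  have h0 : π (g^N * f) = 0 := Ideal.Quotient.eq_zero_iff_mem.mpr hgN
  rw [hpow N] at h0
  have hcN : c^N = 0 := by
    rcases smul_eq_zero.mp h0 with h | h
    · exact h
    · exact absurd h hπf
  have hc0 : c = 0 := pow_eq_zero_iff (show N ≠ 0 by omega) |>.mp hcN
  have hfin0 : π (g * f) = 0 := by
    have h2 := hpow 1
    rw [pow_one, pow_one, hc0, zero_smul] at h2
    exact h2
  exact Ideal.Quotient.eq_zero_iff_mem.mp hfin0

end Aux

/-- If `f ∈ 𝔪` has finite Milnor number `μ` and Tjurina number `τ = μ - 1`, then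
`𝔪·f ⊆ 𝔪·J(f)`: every product `g·f` with `g ∈ 𝔪` can be written as `Σ hᵢ·∂f/∂xᵢ`
with all `hᵢ ∈ 𝔪`. -/
theorem maximalIdeal_mul_self_subset_maximalIdeal_mul_jacobian {n : ℕ}
    (f : MvPowerSeries (Fin n) ℂ)
    (hf : MvPowerSeries.constantCoeff f = 0)
    (hfin : FiniteDimensional ℂ (MvPowerSeries (Fin n) ℂ ⧸ jacobianIdeal f))
    (htau : Module.finrank ℂ (MvPowerSeries (Fin n) ℂ ⧸ tjurinaIdeal f) + 1 =
      Module.finrank ℂ (MvPowerSeries (Fin n) ℂ ⧸ jacobianIdeal f)) :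
    ∀ g : MvPowerSeries (Fin n) ℂ, MvPowerSeries.constantCoeff g = 0 →
      ∃ h : Fin n → MvPowerSeries (Fin n) ℂ,
        (∀ i, MvPowerSeries.constantCoeff (h i) = 0) ∧
        g * f = ∑ i, h i * pderiv i f := by
  intro g hg
  have hgf : g * f ∈ jacobianIdeal f := Aux.mul_mem_jacobian f hfin htau g hg
  rw [jacobianIdeal] at hgf
  obtain ⟨hfun, hsum⟩ := (Submodule.mem_span_range_iff_exists_fun (MvPowerSeries (Fin n) ℂ)).mp hgf
  simp_rw [smul_eq_mul] at hsum
  refine ⟨hfun, ?_, hsum.symm⟩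
  intro i
  by_contra hne
  obtain ⟨N, hN⟩ := Aux.exists_pow_le f hfin
  have hXker : (MvPowerSeries.X i : MvPowerSeries (Fin n) ℂ) ∈
      RingHom.ker (MvPowerSeries.constantCoeff) := by
    rw [RingHom.mem_ker]
    exact MvPowerSeries.constantCoeff_X i
  have hXN : (MvPowerSeries.X i : MvPowerSeries (Fin n) ℂ) ^ N ∈ jacobianIdeal f :=
    hN (Ideal.pow_mem_pow hXker N)
  exact Aux.key_contradiction (Aux.pderiv_constantCoeff_zero f htau) hsum.symm hf hne hXN
end

section
/- Let q, r ≥ 2 be integers and let β, γ ∈ ℂ both be nonzero. Then there exist nonzero a, b, c ∈ ℂ such that the diagonal linear substitution x ↦ a·t, y ↦ b·u, z ↦ c·v induces an isomorphism of local ℂ-algebras ℂ[[x,y,z]]/(yz, q·y^{q−1}+xz, r·z^{r−1}+xy) ≅ ℂ[[t,u,v]]/(uv, tv − β·u^{q−1}, tu − γ·v^{r−1}). In particular the Milnor algebra Q(y^q + z^r + xyz) of the non-isolated limit singularity T_{∞,q,r} is isomorphic to ℂ[[t,u,v]]/(uv, tv − d_q·u^{q−1}, tu − e_r·v^{r−1})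 whenever the coefficients d_q, e_r are both nonzero. -/
open MvPowerSeries

noncomputable section Rescale

/-- Weight of a monomial under a diagonal rescaling. -/
def wgt (w : Fin 3 → ℂ) (d : Fin 3 →₀ ℕ) : ℂ := ∏ i, w i ^ d i

lemma wgt_zero (w : Fin 3 → ℂ) : wgt w 0 = 1 := by simp [wgt]

lemma wgt_add (w : Fin 3 → ℂ) (a b : Fin 3 →₀ ℕ) :
    wgt w (a + b) = wgt w a * wgt w b := by
  simp [wgt, pow_add, Finset.prod_mul_distrib]

lemma wgt_mul_inv {w : Fin 3 → ℂ} (hw : ∀ i, w i ≠ 0) (d : Fin 3 →₀ ℕ) :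
    wgt w d * wgt (fun i => (w i)⁻¹) d = 1 := by
  rw [wgt, wgt, ← Finset.prod_mul_distrib]
  refine Finset.prod_eq_one fun i _ => ?_
  rw [← mul_pow, mul_inv_cancel₀ (hw i), one_pow]

/-- Diagonal rescaling of a power series, as a bare function. -/
def mresFun (w : Fin 3 → ℂ) (f : MvPowerSeries (Fin 3) ℂ) : MvPowerSeries (Fin 3) ℂ :=
  fun d => wgt w d * coeff d f

lemma coeff_mresFun (w : Fin 3 → ℂ) (f : MvPowerSeries (Fin 3) ℂ) (d : Fin 3 →₀ ℕ) :
    coeff d (mresFun w f) = wgt w d * coeff d f := rfl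

/-- Diagonal rescaling as an algebra homomorphism of `ℂ[[x,y,z]]`. -/
def mres (w : Fin 3 → ℂ) : MvPowerSeries (Fin 3) ℂ →ₐ[ℂ] MvPowerSeries (Fin 3) ℂ where
  toFun := mresFun w
  map_one' := by
    refine MvPowerSeries.ext fun d => ?_
    classical
    rw [coeff_mresFun, coeff_one]
    split
    · next h => subst h; rw [wgt_zero, one_mul]
    · rw [mul_zero]
  map_mul' f g := by
    refine MvPowerSeries.ext fun d => ?_
    classical
    rw [coeff_mresFun, coeff_mul, coeff_mul, Finset.mul_sum]
    refine Finset.sum_congr rfl fun p hp => ?_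
    rw [Finset.HasAntidiagonal.mem_antidiagonal] at hp
    rw [coeff_mresFun, coeff_mresFun, ← hp, wgt_add]; ring
  map_zero' := by
    refine MvPowerSeries.ext fun d => ?_
    rw [coeff_mresFun, map_zero, mul_zero]
  map_add' f g := by
    refine MvPowerSeries.ext fun d => ?_
    rw [coeff_mresFun, map_add, map_add, coeff_mresFun, coeff_mresFun, mul_add]
  commutes' x := by
    refine MvPowerSeries.ext fun d => ?_
    classical
    rw [coeff_mresFun, MvPowerSeries.algebraMap_apply, Algebra.algebraMap_self_apply, coeff_C]
    split
    · next h => subst h; rw [wgt_zero, one_mul]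
    · rw [mul_zero]

lemma coeff_mres (w : Fin 3 → ℂ) (f : MvPowerSeries (Fin 3) ℂ) (d : Fin 3 →₀ ℕ) :
    coeff d (mres w f) = wgt w d * coeff d f := rfl

/-- Diagonal rescaling by nonzero scalars as an algebra automorphism. -/
def mresEquiv (w : Fin 3 → ℂ) (hw : ∀ i, w i ≠ 0) :
    MvPowerSeries (Fin 3) ℂ ≃ₐ[ℂ] MvPowerSeries (Fin 3) ℂ :=
  AlgEquiv.ofAlgHom (mres w) (mres fun i => (w i)⁻¹)
    (by
      refine AlgHom.ext fun f => MvPowerSeries.ext fun d => ?_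
      rw [AlgHom.comp_apply, coeff_mres, coeff_mres, ← mul_assoc,
        wgt_mul_inv hw, one_mul, AlgHom.id_apply])
    (by
      refine AlgHom.ext fun f => MvPowerSeries.ext fun d => ?_
      rw [AlgHom.comp_apply, coeff_mres, coeff_mres, ← mul_assoc,
        mul_comm (wgt _ d), wgt_mul_inv hw, one_mul, AlgHom.id_apply])

lemma wgt_single (w : Fin 3 → ℂ) (i : Fin 3) :
    wgt w (Finsupp.single i 1) = w i := by
  simp [wgt, Finsupp.single_apply]

lemma mres_X (w : Fin 3 → ℂ) (i : Fin 3) :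
    mres w (X i) = C (w i) * X i := by
  refine MvPowerSeries.ext fun d => ?_
  classical
  rw [coeff_mres, coeff_C_mul, coeff_X]
  split
  · next h => subst h; rw [wgt_single]
  · rw [mul_zero, mul_zero]

end Rescale

lemma exists_scalars (q r : ℕ) (hq : 2 ≤ q) (hr : 2 ≤ r) (β γ : ℂ)
    (hβ : β ≠ 0) (hγ : γ ≠ 0) :
    ∃ a b c : ℂ, a ≠ 0 ∧ b ≠ 0 ∧ c ≠ 0 ∧
      (q : ℂ) * b ^ (q - 1) = -(β * (a * c)) ∧
      (r : ℂ) * c ^ (r - 1) = -(γ * (a * b)) := by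
  have hq0 : (q : ℂ) ≠ 0 := Nat.cast_ne_zero.mpr (by omega)
  have hr0 : (r : ℂ) ≠ 0 := Nat.cast_ne_zero.mpr (by omega)
  have h1 : (-β / q : ℂ) ≠ 0 := by
    simp [div_ne_zero_iff, hβ, hq0]
  have h2 : (-γ / r : ℂ) ≠ 0 := by
    simp [div_ne_zero_iff, hγ, hr0]
  set L1 := Complex.log (-β / q) with hL1
  set L2 := Complex.log (-γ / r) with hL2
  set B := (L1 - L2) / q with hB
  refine ⟨Complex.exp (((q : ℂ) - 1) * B - L1), Complex.exp B, 1,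
    Complex.exp_ne_zero _, Complex.exp_ne_zero _, one_ne_zero, ?_, ?_⟩
  · have hb : Complex.exp B ^ (q - 1) = Complex.exp (((q : ℂ) - 1) * B) := by
      rw [← Complex.exp_nat_mul, Nat.cast_sub (by omega), Nat.cast_one]
    rw [hb, mul_one, Complex.exp_sub, Complex.exp_log h1]
    field_simp
  · rw [one_pow, mul_one, ← Complex.exp_add]

    have hAB : ((q : ℂ) - 1) * B - L1 + B = -L2 := by
      have : (q : ℂ) * B = L1 - L2 := by
        rw [hB, mul_div_cancel₀ _ hq0]
      linear_combination this
    rw [hAB, Complex.exp_neg, Complex.exp_log h2]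
    field_simp

lemma span_triple_unit_mul {R : Type*} [CommRing R] {u₁ u₂ u₃ x y z : R}
    (h₁ : IsUnit u₁) (h₂ : IsUnit u₂) (h₃ : IsUnit u₃) :
    Ideal.span {u₁ * x, u₂ * y, u₃ * z} = Ideal.span ({x, y, z} : Set R) := by
  have mem : ∀ {u t : R} {s : Set R}, t ∈ s → u * t ∈ Ideal.span s :=
    fun h => Ideal.mul_mem_left _ _ (Ideal.subset_span h)
  apply le_antisymm <;> rw [Ideal.span_le] <;> rintro t ht <;>
    simp only [Set.mem_insert_iff, Set.mem_singleton_iff] at ht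
  · rcases ht with rfl | rfl | rfl
    · exact mem (by simp)
    · exact mem (by simp)
    · exact mem (by simp)
  · have key : ∀ {u t : R} {s : Set R}, IsUnit u → u * t ∈ s → t ∈ Ideal.span s := by
      intro u t s hu h
      have h2 := Ideal.mul_mem_left (Ideal.span s) ↑hu.unit⁻¹ (Ideal.subset_span h)
      rwa [← mul_assoc, IsUnit.val_inv_mul, one_mul] at h2
    rcases ht with rfl | rfl | rfl
    · exact key h₁ (by simp)
    · exact key h₂ (by simp)
    · exact key h₃ (by simp)


/-- The Jacobian ideal of the non-isolated limit singularity `T_{∞,q,r} : y^q + z^r + xyz`. -/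
noncomputable def limitJacobianIdeal (q r : ℕ) : Ideal (MvPowerSeries (Fin 3) ℂ) :=
  Ideal.span {X 1 * X 2,
    (q : MvPowerSeries (Fin 3) ℂ) * X 1 ^ (q - 1) + X 0 * X 2,
    (r : MvPowerSeries (Fin 3) ℂ) * X 2 ^ (r - 1) + X 0 * X 1}

/-- The minimally embedded modular ideal `(uv, tv - β·u^{q-1}, tu - γ·v^{r-1})`. -/
noncomputable def limitModularIdeal (q r : ℕ) (β γ : ℂ) : Ideal (MvPowerSeries (Fin 3) ℂ) :=
  Ideal.span {X 1 * X 2,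
    X 0 * X 2 - C β * X 1 ^ (q - 1),
    X 0 * X 1 - C γ * X 2 ^ (r - 1)}

/-- For `q, r ≥ 2` and nonzero `β, γ ∈ ℂ`, there are nonzero `a, b, c ∈ ℂ` such that the
diagonal substitution `x ↦ a·t`, `y ↦ b·u`, `z ↦ c·v` carries the Jacobian ideal of the
non-isolated limit singularity `y^q + z^r + xyz` onto the ideal
`(uv, tv - β·u^{q-1}, tu - γ·v^{r-1})`, and hence induces an isomorphism of the
corresponding local `ℂ`-algebras. -/
theorem milnorAlgebra_iso_modularAlgebra_limit (q r : ℕ) (hq : 2 ≤ q) (hr : 2 ≤ r)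
    (β γ : ℂ) (hβ : β ≠ 0) (hγ : γ ≠ 0) :
    ∃ (a b c : ℂ), a ≠ 0 ∧ b ≠ 0 ∧ c ≠ 0 ∧
      ∃ σ : MvPowerSeries (Fin 3) ℂ ≃ₐ[ℂ] MvPowerSeries (Fin 3) ℂ,
        σ (X 0) = C a * X 0 ∧
        σ (X 1) = C b * X 1 ∧
        σ (X 2) = C c * X 2 ∧
        Ideal.map σ.toAlgHom.toRingHom (limitJacobianIdeal q r) =
          limitModularIdeal q r β γ ∧
        Nonempty ((MvPowerSeries (Fin 3) ℂ ⧸ limitJacobianIdeal q r) ≃ₐ[ℂ]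
          (MvPowerSeries (Fin 3) ℂ ⧸ limitModularIdeal q r β γ)) := by
  obtain ⟨a, b, c, ha, hb, hc, hq1, hr1⟩ := exists_scalars q r hq hr β γ hβ hγ
  set w : Fin 3 → ℂ := ![a, b, c] with hw
  have hw' : ∀ i, w i ≠ 0 := by
    intro i
    fin_cases i <;> simpa [hw]
  set σ : MvPowerSeries (Fin 3) ℂ ≃ₐ[ℂ] MvPowerSeries (Fin 3) ℂ := mresEquiv w hw' with hσ
  have hσ0 : σ (X 0) = C a * X 0 := by
    show mres w (X 0) = _
    rw [mres_X]; rfl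
  have hσ1 : σ (X 1) = C b * X 1 := by
    show mres w (X 1) = _
    rw [mres_X]; rfl
  have hσ2 : σ (X 2) = C c * X 2 := by
    show mres w (X 2) = _
    rw [mres_X]; rfl
  -- images of the generators
  have e1 : σ (X 1 * X 2) = C (b * c) * (X 1 * X 2) := by
    rw [map_mul, hσ1, hσ2, map_mul]; ring
  have e2 : σ ((q : MvPowerSeries (Fin 3) ℂ) * X 1 ^ (q - 1) + X 0 * X 2)
      = C (a * c) * (X 0 * X 2 - C β * X 1 ^ (q - 1)) := by
    rw [map_add, map_mul, map_mul, map_natCast, map_pow, hσ0, hσ1, hσ2,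
      mul_pow, ← map_pow,
      show ((q : ℕ) : MvPowerSeries (Fin 3) ℂ) = C (q : ℂ) from
        (map_natCast (C (σ := Fin 3) (R := ℂ)) q).symm,
      show (C (σ := Fin 3) (q : ℂ)) * (C (b ^ (q - 1)) * X 1 ^ (q - 1))
          = C ((q : ℂ) * b ^ (q - 1)) * X 1 ^ (q - 1) by
        rw [map_mul, mul_assoc],
      hq1]
    simp only [map_neg, map_mul]
    ring
  have e3 : σ ((r : MvPowerSeries (Fin 3) ℂ) * X 2 ^ (r - 1) + X 0 * X 1)
      = C (a * b) * (X 0 * X 1 - C γ * X 2 ^ (r - 1)) := by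
    rw [map_add, map_mul, map_mul, map_natCast, map_pow, hσ0, hσ1, hσ2,
      mul_pow, ← map_pow,
      show ((r : ℕ) : MvPowerSeries (Fin 3) ℂ) = C (r : ℂ) from
        (map_natCast (C (σ := Fin 3) (R := ℂ)) r).symm,
      show (C (σ := Fin 3) (r : ℂ)) * (C (c ^ (r - 1)) * X 2 ^ (r - 1))
          = C ((r : ℂ) * c ^ (r - 1)) * X 2 ^ (r - 1) by
        rw [map_mul, mul_assoc],
      hr1]
    simp only [map_neg, map_mul]
    ring
  have hu1 : IsUnit (C (b * c)) :=
    (isUnit_iff_ne_zero.mpr (mul_ne_zero hb hc)).map (C (σ := Fin 3) (R := ℂ))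
  have hu2 : IsUnit (C (a * c)) :=
    (isUnit_iff_ne_zero.mpr (mul_ne_zero ha hc)).map (C (σ := Fin 3) (R := ℂ))
  have hu3 : IsUnit (C (a * b)) :=
    (isUnit_iff_ne_zero.mpr (mul_ne_zero ha hb)).map (C (σ := Fin 3) (R := ℂ))
  have hmap : Ideal.map σ.toAlgHom.toRingHom (limitJacobianIdeal q r)
      = limitModularIdeal q r β γ := by
    have hcoe : ∀ x, σ.toAlgHom.toRingHom x = σ x := fun _ => rfl
    rw [limitJacobianIdeal, limitModularIdeal, Ideal.map_span,
      Set.image_insert_eq, Set.image_insert_eq, Set.image_singleton]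
    simp only [hcoe]
    rw [e1, e2, e3]
    exact span_triple_unit_mul hu1 hu2 hu3
  exact ⟨a, b, c, ha, hb, hc, σ, hσ0, hσ1, hσ2, hmap,
    ⟨Ideal.quotientEquivAlg (limitJacobianIdeal q r) (limitModularIdeal q r β γ) σ hmap.symm⟩⟩
end

section
/- For every nonzero e ∈ ℂ there is an isomorphism of local ℂ-algebras ℂ[[t,u,v]]/(uv, tv, tu − e·v) ≅ ℂ[[x,y,z]]/(2x+yz, xz, xy). The right-hand side is the Milnor algebra Q(x²+xyz) of the non-isolated singularity x² + xyz; the left-hand side is the local ring of the modular stratum of the symmetric exceptional singularities T_{6,4,2} and T_{6,6,2}. -/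
open MvPowerSeries

noncomputable section

namespace MilnorAux

variable {σ : Type*} [DecidableEq σ] {R : Type*} [CommRing R]

/-- A "weighted reindexing" algebra automorphism of a multivariate power series ring:
`f ↦ fun d => w d * f (φ d)`. -/
def wEquiv (φ : (σ →₀ ℕ) ≃+ (σ →₀ ℕ)) (w : (σ →₀ ℕ) → Rˣ)
    (hw : ∀ a b, w (a + b) = w a * w b) (hw0 : w 0 = 1) :
    MvPowerSeries σ R ≃ₐ[R] MvPowerSeries σ R where
  toFun f := fun d => (w d : R) * f (φ d)
  invFun g := fun d => (((w (φ.symm d))⁻¹ : Rˣ) : R) * g (φ.symm d)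
  left_inv f := by
    funext d
    simp [← mul_assoc]
  right_inv g := by
    funext d
    simp [← mul_assoc]
  map_mul' f g := by
    funext d
    show (w d : R) * coeff (φ d) (f * g) = coeff d ((_ : MvPowerSeries σ R) * (_ : MvPowerSeries σ R))
    rw [coeff_mul, Finset.mul_sum]
    refine Eq.trans ?_ (coeff_mul (R := R) (σ := σ) d _ _).symm
    refine Finset.sum_nbij' (i := fun p => (φ.symm p.1, φ.symm p.2))
      (j := fun q => (φ q.1, φ q.2)) ?_ ?_ ?_ ?_ ?_
    · intro p hp
      rw [Finset.HasAntidiagonal.mem_antidiagonal] at hp ⊢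
      rw [← map_add, hp, AddEquiv.symm_apply_apply]
    · intro q hq
      rw [Finset.HasAntidiagonal.mem_antidiagonal] at hq ⊢
      rw [← map_add, hq]
    · intro p _; simp
    · intro q _; simp
    · intro p hp
      rw [Finset.HasAntidiagonal.mem_antidiagonal] at hp
      simp only [coeff_apply, AddEquiv.apply_symm_apply]
      have : w (φ.symm p.1) * w (φ.symm p.2) = w d := by
        rw [← hw, ← map_add, hp, AddEquiv.symm_apply_apply]
      calc (w d : R) * (f p.1 * g p.2)
          = ((w (φ.symm p.1) * w (φ.symm p.2) : Rˣ) : R) * (f p.1 * g p.2) := by rw [this]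
        _ = (w (φ.symm p.1) : R) * f p.1 * ((w (φ.symm p.2) : R) * g p.2) := by
            push_cast; ring
      change _ = ((w (φ.symm p.1) : R) * f (φ (φ.symm p.1))) *
        ((w (φ.symm p.2) : R) * g (φ (φ.symm p.2)))
      rw [φ.apply_symm_apply, φ.apply_symm_apply]
  map_add' f g := by
    funext d
    show (w d : R) * (f + g) (φ d) = _
    show (w d : R) * (f (φ d) + g (φ d)) = (w d : R) * f (φ d) + (w d : R) * g (φ d)
    ring
  commutes' r := by
    funext d
    show (w d : R) * coeff (φ d) ((C r : MvPowerSeries σ R)) = coeff d ((C r : MvPowerSeries σ R))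
    rw [coeff_C, coeff_C]
    by_cases hd : d = 0
    · subst hd
      simp [hw0]
    · rw [if_neg hd, if_neg (by simpa using (EmbeddingLike.map_ne_zero_iff (f := φ)).mpr hd),
        mul_zero]

theorem wEquiv_monomial (φ : (σ →₀ ℕ) ≃+ (σ →₀ ℕ)) (w : (σ →₀ ℕ) → Rˣ)
    (hw : ∀ a b, w (a + b) = w a * w b) (hw0 : w 0 = 1) (n : σ →₀ ℕ) (a : R) :
    wEquiv φ w hw hw0 (monomial n a) =
      monomial (φ.symm n) ((w (φ.symm n) : R) * a) := by
  ext d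
  show (w d : R) * coeff (φ d) (monomial n a) = _
  rw [coeff_monomial, coeff_monomial]
  by_cases hd : d = φ.symm n
  · subst hd
    rw [if_pos (φ.apply_symm_apply n), if_pos rfl]
  · rw [if_neg (fun h => hd (by rw [← h, AddEquiv.symm_apply_apply])), if_neg hd, mul_zero]

theorem C_mul_X_eq_monomial (a : R) (s : σ) :
    (C a : MvPowerSeries σ R) * X s = monomial (Finsupp.single s 1) a := by
  ext d
  rw [coeff_C_mul, X_def, coeff_monomial, coeff_monomial]
  split <;> simp

end MilnorAux

end

/-- For every nonzero `e ∈ ℂ` the local `ℂ`-algebras `ℂ[[t,u,v]]/(uv, tv, tu - e·v)`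
(the local ring of the modular stratum of the symmetric exceptional singularities
`T_{6,4,2}` and `T_{6,6,2}`) and `ℂ[[x,y,z]]/(2x+yz, xz, xy)` (the Milnor algebra
`Q(x²+xyz)` of the non-isolated singularity `x²+xyz`) are isomorphic. -/
theorem modularAlgebraT642_iso_milnorAlgebra_x2xyz (e : ℂ) (he : e ≠ 0) :
    Nonempty ((MvPowerSeries (Fin 3) ℂ ⧸
        Ideal.span {X 1 * X 2, X 0 * X 2, X 0 * X 1 - (C e : MvPowerSeries (Fin 3) ℂ) * X 2}) ≃ₐ[ℂ]
      (MvPowerSeries (Fin 3) ℂ ⧸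
        Ideal.span {(2 : MvPowerSeries (Fin 3) ℂ) * X 0 + X 1 * X 2,
          X 0 * X 2, X 0 * X 1})) := by
  classical
  set c : ℂ := -2 / e with hc
  have hcne : c ≠ 0 := div_ne_zero (by norm_num) he
  set u : ℂˣ := Units.mk0 c hcne with hu
  set φ : (Fin 3 →₀ ℕ) ≃+ (Fin 3 →₀ ℕ) := (Finsupp.domCongr (finRotate 3)).symm with hφ
  set w : (Fin 3 →₀ ℕ) → ℂˣ := fun d => u ^ (d 0) with hwdef
  have hw : ∀ a b, w (a + b) = w a * w b := fun a b => by
    simp [hwdef, Finsupp.add_apply, pow_add]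
  have hw0 : w 0 = 1 := by simp [hwdef]
  set α := MilnorAux.wEquiv φ w hw hw0 with hα
  have hsymm : ∀ i : Fin 3, φ.symm (Finsupp.single i 1) =
      Finsupp.single (finRotate 3 i) 1 := by
    intro i
    simp [hφ, Finsupp.domCongr_apply]
  have hXgen : ∀ i : Fin 3, α (X i) =
      MvPowerSeries.monomial (Finsupp.single (finRotate 3 i) 1)
        ((w (Finsupp.single (finRotate 3 i) 1) : ℂ)) := by
    intro i
    rw [hα, X_def, MilnorAux.wEquiv_monomial, hsymm, mul_one]
  have hrot0 : finRotate 3 (0 : Fin 3) = 1 := by decide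
  have hrot1 : finRotate 3 (1 : Fin 3) = 2 := by decide
  have hrot2 : finRotate 3 (2 : Fin 3) = 0 := by decide
  have hwval : ∀ j : Fin 3, (w (Finsupp.single j 1) : ℂ) = if j = 0 then c else 1 := by
    intro j
    by_cases hj : j = (0 : Fin 3)
    · subst hj; simp [hwdef, hu]
    · simp [hwdef, Finsupp.single_apply, hj]
  have hX0 : α (X 0) = X 1 := by
    rw [hXgen 0, hrot0, hwval, if_neg (by decide), X_def]
  have hX1 : α (X 1) = X 2 := by
    rw [hXgen 1, hrot1, hwval, if_neg (by decide), X_def]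
  have hX2 : α (X 2) = (C c : MvPowerSeries (Fin 3) ℂ) * X 0 := by
    rw [hXgen 2, hrot2, hwval, if_pos rfl, MilnorAux.C_mul_X_eq_monomial]
  have hCe : α ((C e : MvPowerSeries (Fin 3) ℂ)) = (C e : MvPowerSeries (Fin 3) ℂ) := by
    rw [c_eq_algebraMap]; exact α.commutes e
  have hg1 : α (X 1 * X 2) = (C c : MvPowerSeries (Fin 3) ℂ) * (X 0 * X 2) := by
    rw [map_mul, hX1, hX2]; ring
  have hg2 : α (X 0 * X 2) = (C c : MvPowerSeries (Fin 3) ℂ) * (X 0 * X 1) := by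
    rw [map_mul, hX0, hX2]; ring
  have hg3 : α (X 0 * X 1 - (C e : MvPowerSeries (Fin 3) ℂ) * X 2) =
      (2 : MvPowerSeries (Fin 3) ℂ) * X 0 + X 1 * X 2 := by
    rw [map_sub, map_mul, map_mul, hX0, hX1, hX2, hCe]
    have hec : (C e : MvPowerSeries (Fin 3) ℂ) * (C c : MvPowerSeries (Fin 3) ℂ) = -(2 : MvPowerSeries (Fin 3) ℂ) := by
      rw [← map_mul]
      have h2 : e * c = -2 := by
        rw [hc]
        field_simp
      rw [h2, map_neg, map_ofNat]
    linear_combination (-(X 0 : MvPowerSeries (Fin 3) ℂ)) * hec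
  refine ⟨Ideal.quotientEquivAlg _ _ α ?_⟩
  rw [Ideal.map_span]
  rw [Set.image_insert_eq, Set.image_insert_eq, Set.image_singleton,
    show ((α : MvPowerSeries (Fin 3) ℂ →+* MvPowerSeries (Fin 3) ℂ) :
      MvPowerSeries (Fin 3) ℂ → MvPowerSeries (Fin 3) ℂ) = ⇑α from rfl, hg1, hg2, hg3]
  apply le_antisymm
  · rw [Ideal.span_le]
    have key : ∀ f : MvPowerSeries (Fin 3) ℂ,
        (C c : MvPowerSeries (Fin 3) ℂ) * f ∈ (Ideal.span {(C c : MvPowerSeries (Fin 3) ℂ) * (X 0 * X 2),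
          (C c : MvPowerSeries (Fin 3) ℂ) * (X 0 * X 1),
          (2 : MvPowerSeries (Fin 3) ℂ) * X 0 + X 1 * X 2} :
            Ideal (MvPowerSeries (Fin 3) ℂ)) → f ∈ Ideal.span {(C c : MvPowerSeries (Fin 3) ℂ) * (X 0 * X 2),
          (C c : MvPowerSeries (Fin 3) ℂ) * (X 0 * X 1),
          (2 : MvPowerSeries (Fin 3) ℂ) * X 0 + X 1 * X 2} := by
      intro f hf
      have : f = (C c⁻¹ : MvPowerSeries (Fin 3) ℂ) * ((C c : MvPowerSeries (Fin 3) ℂ) * f) := by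
        rw [← mul_assoc, ← map_mul, inv_mul_cancel₀ hcne, map_one, one_mul]
      rw [this]
      exact Ideal.mul_mem_left _ _ hf
    rintro x (rfl | rfl | rfl)
    · exact Ideal.subset_span (by simp)
    · exact key _ (Ideal.subset_span (by simp))
    · exact key _ (Ideal.subset_span (by simp))
  · rw [Ideal.span_le]
    rintro x (rfl | rfl | rfl)
    · exact Ideal.mul_mem_left _ _ (Ideal.subset_span (by simp))
    · exact Ideal.mul_mem_left _ _ (Ideal.subset_span (by simp))
    · exact Ideal.subset_span (by simp)
end

section
/- For every nonzero e ∈ ℂ there is an isomorphism of local ℂ-algebras ℂ[[t,u,v]]/(uv, tv, tu − e·v²) ≅ ℂ[[x,y,z]]/(3x²+yz, xz, xy). The right-hand side is the Milnor algebra Q(x³+xyz) of the non-isolated singularity x³ + xyz; the left-hand side is the local ring of the modular stratum of the symmetric exceptional singularity T_{6,6,3}. -/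
open MvPowerSeries Finsupp

section Aux

variable {σ : Type*} {R : Type*} [CommRing R]

/-- weight of an exponent under a scaling vector -/
noncomputable def Wgt (c : σ → Rˣ) (n : σ →₀ ℕ) : R :=
  n.prod fun i k => (c i : R) ^ k

lemma Wgt_add (c : σ → Rˣ) (m n : σ →₀ ℕ) : Wgt c (m + n) = Wgt c m * Wgt c n := by
  classical
  simpa [Wgt, pow_add] using
    Finsupp.prod_add_index (f := m) (g := n) (h := fun i k => (c i : R) ^ k)
      (fun a _ => pow_zero _) (fun a _ b₁ b₂ => pow_add _ _ _)

lemma Wgt_zero (c : σ → Rˣ) : Wgt c 0 = 1 := by simp [Wgt]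

lemma Wgt_single (c : σ → Rˣ) (j : σ) : Wgt c (Finsupp.single j 1) = c j := by
  classical
  simp [Wgt, Finsupp.prod_single_index]

/-- the scaled permutation substitution on power series -/
noncomputable def Phi (c : σ → Rˣ) (e : σ ≃ σ) (f : MvPowerSeries σ R) :
    MvPowerSeries σ R :=
  fun n => Wgt c n * coeff (Finsupp.equivMapDomain e n) f

lemma coeff_Phi (c : σ → Rˣ) (e : σ ≃ σ) (f : MvPowerSeries σ R) (n : σ →₀ ℕ) :
    coeff n (Phi c e f) = Wgt c n * coeff (Finsupp.equivMapDomain e n) f := rfl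

lemma equivMapDomain_add (e : σ ≃ σ) (m n : σ →₀ ℕ) :
    Finsupp.equivMapDomain e (m + n)
      = Finsupp.equivMapDomain e m + Finsupp.equivMapDomain e n := by
  ext j; simp

lemma equivMapDomain_eq_zero_iff (e : σ ≃ σ) (n : σ →₀ ℕ) :
    Finsupp.equivMapDomain e n = 0 ↔ n = 0 := by
  constructor
  · intro h
    ext i
    have := congrArg (fun f => f (e i)) h
    simpa using this
  · rintro rfl; simp

lemma Phi_map_mul (c : σ → Rˣ) (e : σ ≃ σ) (f g : MvPowerSeries σ R) :
    Phi c e (f * g) = Phi c e f * Phi c e g := by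
  classical
  ext n
  rw [coeff_Phi, coeff_mul, coeff_mul, Finset.mul_sum]
  symm
  refine Finset.sum_nbij'
    (i := fun q => (Finsupp.equivMapDomain e q.1, Finsupp.equivMapDomain e q.2))
    (j := fun p => (Finsupp.equivMapDomain e.symm p.1, Finsupp.equivMapDomain e.symm p.2))
    ?_ ?_ ?_ ?_ ?_
  · intro q hq
    rw [Finset.HasAntidiagonal.mem_antidiagonal] at hq ⊢
    rw [← equivMapDomain_add, hq]
  · intro p hp
    rw [Finset.HasAntidiagonal.mem_antidiagonal] at hp ⊢
    rw [← equivMapDomain_add, hp]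
    ext i; simp
  · intro q _
    ext i <;> simp
  · intro p _
    ext i <;> simp
  · intro q hq
    rw [Finset.HasAntidiagonal.mem_antidiagonal] at hq
    rw [coeff_Phi, coeff_Phi]
    have hw : Wgt c n = Wgt c q.1 * Wgt c q.2 := by rw [← Wgt_add, hq]
    rw [hw]; ring

lemma Phi_map_one (c : σ → Rˣ) (e : σ ≃ σ) : Phi c e (1 : MvPowerSeries σ R) = 1 := by
  classical
  ext n
  by_cases h : n = 0
  · subst h; simp [coeff_Phi, Wgt_zero]
  · have h' : Finsupp.equivMapDomain e n ≠ 0 := fun hh =>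
      h ((equivMapDomain_eq_zero_iff e n).mp hh)
    simp [coeff_Phi, coeff_one, h, h']

lemma Phi_map_C (c : σ → Rˣ) (e : σ ≃ σ) (r : R) :
    Phi c e ((C : R →+* MvPowerSeries σ R) r) = (C : R →+* MvPowerSeries σ R) r := by
  classical
  ext n
  by_cases h : n = 0
  · subst h; simp [coeff_Phi, Wgt_zero]
  · have h' : Finsupp.equivMapDomain e n ≠ 0 := fun hh =>
      h ((equivMapDomain_eq_zero_iff e n).mp hh)
    simp [coeff_Phi, coeff_C, h, h']

/-- the scaled permutation substitution as an algebra homomorphism -/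
noncomputable def PhiAlg (c : σ → Rˣ) (e : σ ≃ σ) :
    MvPowerSeries σ R →ₐ[R] MvPowerSeries σ R where
  toFun := Phi c e
  map_one' := Phi_map_one c e
  map_mul' := Phi_map_mul c e
  map_zero' := by ext n; simp [coeff_Phi]
  map_add' := fun f g => by ext n; simp [coeff_Phi, mul_add]
  commutes' := fun r => by
    simpa [MvPowerSeries.c_eq_algebraMap] using Phi_map_C c e r

lemma Phi_comp (c c' : σ → Rˣ) (e e' : σ ≃ σ) (f : MvPowerSeries σ R) :
    Phi c e (Phi c' e' f) = Phi (fun i => c i * c' (e i)) (e.trans e') f := by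
  classical
  ext n
  rw [coeff_Phi, coeff_Phi, coeff_Phi]
  rw [← Finsupp.equivMapDomain_trans]
  have hw : Wgt c' (Finsupp.equivMapDomain e n) = n.prod fun i k => (c' (e i) : R) ^ k := by
    rw [Wgt, Finsupp.prod_equivMapDomain]
  rw [hw, ← mul_assoc]
  congr 1
  rw [Wgt, Wgt, ← Finsupp.prod_mul]
  exact Finsupp.prod_congr fun i _ => by push_cast; rw [mul_pow]

lemma Phi_one_id (f : MvPowerSeries σ R) :
    Phi (fun _ => (1 : Rˣ)) (Equiv.refl σ) f = f := by
  ext n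
  rw [coeff_Phi]
  have h1 : (n.prod fun i k => (1:R)) = 1 := Finsupp.prod_congr (fun _ _ => rfl) |>.trans (by simp [Finsupp.prod])
  simp [Wgt, h1]

/-- the scaled permutation substitution as an algebra equivalence -/
noncomputable def PhiEquiv (c : σ → Rˣ) (e : σ ≃ σ) :
    MvPowerSeries σ R ≃ₐ[R] MvPowerSeries σ R :=
  AlgEquiv.ofAlgHom (PhiAlg c e) (PhiAlg (fun j => (c (e.symm j))⁻¹) e.symm)
    (by
      ext f : 1
      show Phi c e (Phi _ e.symm f) = f
      rw [Phi_comp]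
      have h1 : (fun i => c i * (c (e.symm (e i)))⁻¹) = fun _ => (1 : Rˣ) := by
        funext i; simp
      have h2 : e.trans e.symm = Equiv.refl σ := Equiv.self_trans_symm e
      rw [h1, h2, Phi_one_id])
    (by
      ext f : 1
      show Phi _ e.symm (Phi c e f) = f
      rw [Phi_comp]
      have h1 : (fun i => (c (e.symm i))⁻¹ * c (e.symm i)) = fun _ => (1 : Rˣ) := by
        funext i; simp
      have h2 : e.symm.trans e = Equiv.refl σ := Equiv.symm_trans_self e
      rw [h1, h2, Phi_one_id])

lemma PhiEquiv_apply (c : σ → Rˣ) (e : σ ≃ σ) (f : MvPowerSeries σ R) :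
    PhiEquiv c e f = Phi c e f := rfl

lemma Phi_X (c : σ → Rˣ) (e : σ ≃ σ) (s : σ) :
    Phi c e (X s : MvPowerSeries σ R) = (C : R →+* MvPowerSeries σ R) (c (e.symm s)) * X (e.symm s) := by
  classical
  have key : ∀ n : σ →₀ ℕ, (Finsupp.equivMapDomain e n = Finsupp.single s 1 ↔
      n = Finsupp.single (e.symm s) 1) := by
    intro n
    constructor
    · intro h
      have h2 := congrArg (Finsupp.equivMapDomain e.symm) h
      rw [Finsupp.equivMapDomain_single] at h2
      rw [← h2]; ext i; simp
    · rintro rfl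
      rw [Finsupp.equivMapDomain_single]; simp
  ext n
  by_cases h : n = Finsupp.single (e.symm s) 1
  · subst h
    have h2 : Finsupp.equivMapDomain e (Finsupp.single (e.symm s) 1)
        = Finsupp.single s 1 := by
      rw [Finsupp.equivMapDomain_single, Equiv.apply_symm_apply]
    rw [coeff_Phi, h2, coeff_C_mul, coeff_X, coeff_X, if_pos rfl, if_pos rfl,
      Wgt_single, mul_one]
  · have h' : Finsupp.equivMapDomain e n ≠ Finsupp.single s 1 := fun hh =>
      h ((key n).mp hh)
    rw [coeff_Phi, coeff_C_mul, coeff_X, coeff_X, if_neg h', if_neg h]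
    simp

end Aux

def perm3 : Fin 3 ≃ Fin 3 where
  toFun := ![2, 0, 1]
  invFun := ![1, 2, 0]
  left_inv := by decide
  right_inv := by decide

/-- For every nonzero `e ∈ ℂ` the local `ℂ`-algebras `ℂ[[t,u,v]]/(uv, tv, tu - e·v²)`
(the local ring of the modular stratum of the symmetric exceptional singularity
`T_{6,6,3}`) and `ℂ[[x,y,z]]/(3x²+yz, xz, xy)` (the Milnor algebra `Q(x³+xyz)` of the
non-isolated singularity `x³+xyz`) are isomorphic. -/
theorem modularAlgebraT663_iso_milnorAlgebra_x3xyz (e : ℂ) (he : e ≠ 0) :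
    Nonempty ((MvPowerSeries (Fin 3) ℂ ⧸
        Ideal.span {X 1 * X 2, X 0 * X 2, X 0 * X 1 - (C : ℂ →+* MvPowerSeries (Fin 3) ℂ) e * X 2 ^ 2}) ≃ₐ[ℂ]
      (MvPowerSeries (Fin 3) ℂ ⧸
        Ideal.span {(3 : MvPowerSeries (Fin 3) ℂ) * X 0 ^ 2 + X 1 * X 2,
          X 0 * X 2, X 0 * X 1})) := by
  obtain ⟨α, hα⟩ := IsAlgClosed.exists_pow_nat_eq (k := ℂ) (-3 / e) zero_lt_two
  have h3 : (-3 / e : ℂ) ≠ 0 := div_ne_zero (by norm_num) he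
  have hα0 : α ≠ 0 := by
    intro h
    apply h3
    rw [← hα, h]; ring
  have heα : e * α ^ 2 = -3 := by
    rw [hα]; field_simp
  set cU : Fin 3 → ℂˣ := ![Units.mk0 α hα0, 1, 1] with hcU
  set Φ : MvPowerSeries (Fin 3) ℂ ≃ₐ[ℂ] MvPowerSeries (Fin 3) ℂ :=
    PhiEquiv cU perm3 with hΦ
  have hs0 : perm3.symm 0 = 1 := rfl
  have hs1 : perm3.symm 1 = 2 := rfl
  have hs2 : perm3.symm 2 = 0 := rfl
  have hX0 : Φ (X 0) = X 1 := by
    rw [hΦ, PhiEquiv_apply, Phi_X, hs0]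
    show (C : ℂ →+* MvPowerSeries (Fin 3) ℂ) ((1 : ℂˣ) : ℂ) * X 1 = X 1
    simp
  have hX1 : Φ (X 1) = X 2 := by
    rw [hΦ, PhiEquiv_apply, Phi_X, hs1]
    show (C : ℂ →+* MvPowerSeries (Fin 3) ℂ) ((1 : ℂˣ) : ℂ) * X 2 = X 2
    simp
  have hX2 : Φ (X 2) = (C : ℂ →+* MvPowerSeries (Fin 3) ℂ) α * X 0 := by
    rw [hΦ, PhiEquiv_apply, Phi_X, hs2]
    rfl
  have hC : ∀ r : ℂ, Φ ((C : ℂ →+* MvPowerSeries (Fin 3) ℂ) r) = (C : ℂ →+* MvPowerSeries (Fin 3) ℂ) r := by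
    intro r
    rw [MvPowerSeries.c_eq_algebraMap]
    exact Φ.commutes r
  have hg1 : Φ (X 1 * X 2) = (C : ℂ →+* MvPowerSeries (Fin 3) ℂ) α * (X 0 * X 2) := by
    rw [map_mul, hX1, hX2]; ring
  have hg2 : Φ (X 0 * X 2) = (C : ℂ →+* MvPowerSeries (Fin 3) ℂ) α * (X 0 * X 1) := by
    rw [map_mul, hX0, hX2]; ring
  have hg3 : Φ (X 0 * X 1 - (C : ℂ →+* MvPowerSeries (Fin 3) ℂ) e * X 2 ^ 2) =
      (3 : MvPowerSeries (Fin 3) ℂ) * X 0 ^ 2 + X 1 * X 2 := by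
    rw [map_sub, map_mul, map_mul, hX0, hX1, map_pow, hX2, hC]
    have hC3 : (C : ℂ →+* MvPowerSeries (Fin 3) ℂ) (e * α ^ 2) = -3 := by
      rw [heα, map_neg, map_ofNat]
    have : (C : ℂ →+* MvPowerSeries (Fin 3) ℂ) e * ((C : ℂ →+* MvPowerSeries (Fin 3) ℂ) α * X 0) ^ 2
        = (C : ℂ →+* MvPowerSeries (Fin 3) ℂ) (e * α ^ 2) * X 0 ^ 2 := by
      rw [map_mul, map_pow]; ring
    rw [this, hC3]
    ring
  set I : Ideal (MvPowerSeries (Fin 3) ℂ) :=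
    Ideal.span {X 1 * X 2, X 0 * X 2, X 0 * X 1 - (C : ℂ →+* MvPowerSeries (Fin 3) ℂ) e * X 2 ^ 2} with hI
  set J : Ideal (MvPowerSeries (Fin 3) ℂ) :=
    Ideal.span {(3 : MvPowerSeries (Fin 3) ℂ) * X 0 ^ 2 + X 1 * X 2,
      X 0 * X 2, X 0 * X 1} with hJ
  have hmap : J = I.map (Φ : MvPowerSeries (Fin 3) ℂ →+* MvPowerSeries (Fin 3) ℂ) := by
    rw [hI, Ideal.map_span, Set.image_insert_eq, Set.image_insert_eq, Set.image_singleton]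
    show J = Ideal.span {Φ (X 1 * X 2), Φ (X 0 * X 2),
      Φ (X 0 * X 1 - (C : ℂ →+* MvPowerSeries (Fin 3) ℂ) e * X 2 ^ 2)}
    rw [hg1, hg2, hg3]
    apply le_antisymm
    · rw [hJ, Ideal.span_le]
      rintro x (rfl | rfl | rfl)
      · exact Ideal.subset_span (by simp)
      · have hmem : (C : ℂ →+* MvPowerSeries (Fin 3) ℂ) α * (X 0 * X 2) ∈
            Ideal.span {(C : ℂ →+* MvPowerSeries (Fin 3) ℂ) α * (X 0 * X 2), (C : ℂ →+* MvPowerSeries (Fin 3) ℂ) α * (X 0 * X 1),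
              (3 : MvPowerSeries (Fin 3) ℂ) * X 0 ^ 2 + X 1 * X 2} :=
          Ideal.subset_span (by simp)
        have h2 := Ideal.mul_mem_left _ ((C : ℂ →+* MvPowerSeries (Fin 3) ℂ) α⁻¹) hmem
        have heq : (C : ℂ →+* MvPowerSeries (Fin 3) ℂ) α⁻¹ * ((C : ℂ →+* MvPowerSeries (Fin 3) ℂ) α * (X 0 * X 2)) = X 0 * X 2 := by
          rw [← mul_assoc, ← map_mul, inv_mul_cancel₀ hα0, map_one, one_mul]
        rwa [heq] at h2
      · have hmem : (C : ℂ →+* MvPowerSeries (Fin 3) ℂ) α * (X 0 * X 1) ∈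
            Ideal.span {(C : ℂ →+* MvPowerSeries (Fin 3) ℂ) α * (X 0 * X 2), (C : ℂ →+* MvPowerSeries (Fin 3) ℂ) α * (X 0 * X 1),
              (3 : MvPowerSeries (Fin 3) ℂ) * X 0 ^ 2 + X 1 * X 2} :=
          Ideal.subset_span (by simp)
        have h2 := Ideal.mul_mem_left _ ((C : ℂ →+* MvPowerSeries (Fin 3) ℂ) α⁻¹) hmem
        have heq : (C : ℂ →+* MvPowerSeries (Fin 3) ℂ) α⁻¹ * ((C : ℂ →+* MvPowerSeries (Fin 3) ℂ) α * (X 0 * X 1)) = X 0 * X 1 := by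
          rw [← mul_assoc, ← map_mul, inv_mul_cancel₀ hα0, map_one, one_mul]
        rwa [heq] at h2
    · rw [Ideal.span_le]
      rintro x (rfl | rfl | rfl)
      · exact Ideal.mul_mem_left _ _ (Ideal.subset_span (by simp [hJ]))
      · exact Ideal.mul_mem_left _ _ (Ideal.subset_span (by simp [hJ]))
      · exact Ideal.subset_span (by simp [hJ])
  exact ⟨Ideal.quotientEquivAlg I J Φ hmap⟩
end

section
/- Let p ≥ q ≥ r ≥ 2 be integers with 1/p + 1/q + 1/r < 1. At least two of the following three conditions hold — (i) ∃k, 1 ≤ k ≤ p, with 1/k + 1/q + 1/r = 1; (ii) ∃k, 1 ≤ k ≤ q, with 1/p + 1/k + 1/r = 1; (iii) ∃k, 1 ≤ k ≤ r, with 1/p + 1/q + 1/k = 1 — if and only if (p,q,r) is one of the five symmetric exceptions (4,4,4), (6,3,3), (6,4,2), (6,6,2), (6,6,3). -/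
lemma aux_one_div_le (a n : ℕ) (hn : 0 < n) (h : n ≤ a) : (1:ℚ)/a ≤ 1/n := by
  have h1 : (0:ℚ) < n := by exact_mod_cast hn
  have h2 : (n:ℚ) ≤ a := by exact_mod_cast h
  rw [div_le_div_iff₀ (by linarith) h1]
  linarith

lemma aux_p_le_six (p a b : ℕ) (hp : 1 ≤ p) (ha : 1 ≤ a) (hb : 1 ≤ b)
    (e : (1:ℚ)/p + 1/a + 1/b = 1) : p ≤ 6 := by
  by_contra hc
  push_neg at hc
  have hpp : (0:ℚ) < p := by exact_mod_cast Nat.lt_of_lt_of_le Nat.zero_lt_one hp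
  have hap : (0:ℚ) < a := by exact_mod_cast ha
  have hbp : (0:ℚ) < b := by exact_mod_cast hb
  have h1p : (1:ℚ)/p ≤ 1/7 := aux_one_div_le p 7 (by norm_num) (by omega)
  have h1pp : (0:ℚ) < 1/p := by positivity
  have h1ap : (0:ℚ) < 1/a := by positivity
  have h1bp : (0:ℚ) < 1/b := by positivity
  have ha2 : 2 ≤ a := by
    by_contra hca
    have h1 : a = 1 := by omega
    have : (1:ℚ)/a = 1 := by rw [h1]; norm_num
    linarith
  have hb2 : 2 ≤ b := by
    by_contra hcb
    have h1 : b = 1 := by omega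
    have : (1:ℚ)/b = 1 := by rw [h1]; norm_num
    linarith
  have h1a2 : (1:ℚ)/a ≤ 1/2 := aux_one_div_le a 2 (by norm_num) ha2
  have h1b2 : (1:ℚ)/b ≤ 1/2 := aux_one_div_le b 2 (by norm_num) hb2
  rcases Nat.lt_or_ge a 3 with h3 | h3
  · have h2 : a = 2 := by omega
    have ea : (1:ℚ)/a = 1/2 := by rw [h2]; norm_num
    rcases Nat.lt_or_ge b 3 with hb3 | hb3
    · have h2b : b = 2 := by omega
      have eb : (1:ℚ)/b = 1/2 := by rw [h2b]; norm_num
      linarith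
    · have : (1:ℚ)/b ≤ 1/3 := aux_one_div_le b 3 (by norm_num) hb3
      linarith
  · have : (1:ℚ)/a ≤ 1/3 := aux_one_div_le a 3 (by norm_num) h3
    linarith

/-- For `p ≥ q ≥ r ≥ 2` with `1/p + 1/q + 1/r < 1`, at least two of the three conditions
(i) `∃ 1 ≤ k ≤ p, 1/k + 1/q + 1/r = 1`, (ii) `∃ 1 ≤ k ≤ q, 1/p + 1/k + 1/r = 1`,
(iii) `∃ 1 ≤ k ≤ r, 1/p + 1/q + 1/k = 1` hold iff `(p,q,r)` is one of the five symmetric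
exceptions `(4,4,4)`, `(6,3,3)`, `(6,4,2)`, `(6,6,2)`, `(6,6,3)`. -/
theorem two_conditions_iff_symmetric_exception (p q r : ℕ)
    (hr : 2 ≤ r) (hrq : r ≤ q) (hqp : q ≤ p)
    (h : (1 : ℚ) / p + 1 / q + 1 / r < 1) :
    (((∃ k : ℕ, 1 ≤ k ∧ k ≤ p ∧ (1 : ℚ) / k + 1 / q + 1 / r = 1) ∧
        (∃ k : ℕ, 1 ≤ k ∧ k ≤ q ∧ (1 : ℚ) / p + 1 / k + 1 / r = 1)) ∨
      ((∃ k : ℕ, 1 ≤ k ∧ k ≤ p ∧ (1 : ℚ) / k + 1 / q + 1 / r = 1) ∧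
        (∃ k : ℕ, 1 ≤ k ∧ k ≤ r ∧ (1 : ℚ) / p + 1 / q + 1 / k = 1)) ∨
      ((∃ k : ℕ, 1 ≤ k ∧ k ≤ q ∧ (1 : ℚ) / p + 1 / k + 1 / r = 1) ∧
        (∃ k : ℕ, 1 ≤ k ∧ k ≤ r ∧ (1 : ℚ) / p + 1 / q + 1 / k = 1))) ↔
      (p, q, r) = (4, 4, 4) ∨ (p, q, r) = (6, 3, 3) ∨ (p, q, r) = (6, 4, 2) ∨
      (p, q, r) = (6, 6, 2) ∨ (p, q, r) = (6, 6, 3) := by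
  constructor
  · intro hL
    have hp6 : p ≤ 6 := by
      rcases hL with ⟨_, k, hk1, _, e⟩ | ⟨_, k, hk1, _, e⟩ | ⟨⟨k, hk1, _, e⟩, _⟩
      · exact aux_p_le_six p k r (by omega) hk1 (by omega) e
      · exact aux_p_le_six p q k (by omega) (by omega) hk1 e
      · exact aux_p_le_six p k r (by omega) hk1 (by omega) e
    have hp2 : 2 ≤ p := by omega
    interval_cases p <;> interval_cases q <;> interval_cases r <;>
      first
      | (decide; done)
      | (norm_num at h; done)
      | (exfalso
         rcases hL with ⟨⟨k₁,h₁,h₂,e₁⟩,⟨k₂,h₃,h₄,e₂⟩⟩|⟨⟨k₁,h₁,h₂,e₁⟩,⟨k₂,h₃,h₄,e₂⟩⟩|⟨⟨k₁,h₁,h₂,e₁⟩,⟨k₂,h₃,h₄,e₂⟩⟩ <;>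
           interval_cases k₁ <;> interval_cases k₂ <;> (revert e₁ e₂; norm_num)
         done)
  · intro hR
    rcases hR with hE|hE|hE|hE|hE <;> simp only [Prod.mk.injEq] at hE <;>
        obtain ⟨rfl, rfl, rfl⟩ := hE <;>
      refine Or.inl ⟨?_, ?_⟩ <;>
      first
      | (refine ⟨2, ?_, ?_, ?_⟩ <;> norm_num
         done)
      | (refine ⟨3, ?_, ?_, ?_⟩ <;> norm_num
         done)
      | (refine ⟨4, ?_, ?_, ?_⟩ <;> norm_num
         done)
end

section
/- There is an isomorphism of local ℂ-algebras ℂ[[s₁,s₂]]/(s₁⁴ − (30445/7392)·s₁²s₂² + (4240139/1897280)·s₁³s₂², s₂³ − (2696/48125)·s₁³s₂) ≅ ℂ[[x,y]]/(4x³ + 2xy³, 5y⁴ + 3x²y²). The right-hand side is the Milnor algebra of the exceptional unimodal singularity W₁₂: f = x⁴ + y⁵ + x²y³, and the left-hand side is the local ring of its modular stratum in minimal embedding. -/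
open MvPowerSeries

noncomputable section

namespace W12

abbrev Pl : Type := MvPolynomial (Fin 2) ℂ
abbrev PS : Type := MvPowerSeries (Fin 2) ℂ

/-- the degree-6 monomials -/
def mon (k : ℕ) : Pl := MvPolynomial.X 0 ^ k * MvPolynomial.X 1 ^ (6 - k)

def MS : Set Pl := mon '' {k | k ≤ 6}

def nn : Fin 2 →₀ ℕ := Finsupp.single 0 6 + Finsupp.single 1 6

lemma nn0 : nn 0 = 6 := by simp [nn]
lemma nn1 : nn 1 = 6 := by simp [nn]

lemma tail_mem (f : PS) :
    f - ↑(trunc ℂ nn f) ∈ Ideal.span {(X 0 : PS) ^ 6, (X 1 : PS) ^ 6} := by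
  classical
  set t : PS := f - ↑(trunc ℂ nn f) with ht
  have hco : ∀ m : Fin 2 →₀ ℕ, m 0 < 6 → m 1 < 6 → coeff m t = 0 := by
    intro m h0 h1
    have hmlt : m < nn := by
      refine lt_of_le_of_ne (Finsupp.le_def.2 ?_) ?_
      · intro s
        fin_cases s
        · show m 0 ≤ nn 0
          rw [nn0]; omega
        · show m 1 ≤ nn 1
          rw [nn1]; omega
      · intro h
        have h' : m 0 = nn 0 := by rw [h]
        rw [nn0] at h'; omega
    simp only [ht, map_sub, MvPolynomial.coeff_coe, coeff_trunc, if_pos hmlt, sub_self]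
  let t0 : PS := fun m => if 6 ≤ m 0 then coeff m t else 0
  let t1 : PS := fun m => if 6 ≤ m 0 then 0 else coeff m t
  have hco0 : ∀ m : Fin 2 →₀ ℕ, coeff m t0 = if 6 ≤ m 0 then coeff m t else 0 := fun m => rfl
  have hco1 : ∀ m : Fin 2 →₀ ℕ, coeff m t1 = if 6 ≤ m 0 then 0 else coeff m t := fun m => rfl
  have hsum : t = t0 + t1 := by
    ext m
    rw [map_add, hco0, hco1]
    split <;> simp
  have h0 : (X 0 : PS) ^ 6 ∣ t0 := by
    rw [X_pow_dvd_iff]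
    intro m hm
    rw [hco0, if_neg (by omega)]
  have h1 : (X 1 : PS) ^ 6 ∣ t1 := by
    rw [X_pow_dvd_iff]
    intro m hm
    rw [hco1]
    split
    · rfl
    · exact hco _ (by omega) hm
  obtain ⟨a, ha⟩ := h0
  obtain ⟨b, hb⟩ := h1
  rw [hsum, ha, hb]
  exact Ideal.add_mem _ (Ideal.mul_mem_right _ _ (Ideal.subset_span (by left; rfl)))
    (Ideal.mul_mem_right _ _ (Ideal.subset_span (by right; rfl)))

lemma poly_mem_MS (P : Pl) (h : ∀ m ∈ P.support, 6 ≤ m 0 + m 1) : P ∈ Ideal.span MS := by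
  classical
  rw [MvPolynomial.as_sum P]
  refine Ideal.sum_mem _ (fun m hm => ?_)
  have hm6 := h m hm
  set i : ℕ := min (m 0) 6 with hi
  have hle0 : i ≤ m 0 := by omega
  have hle1 : 6 - i ≤ m 1 := by omega
  have hvv : Finsupp.single (0 : Fin 2) i + Finsupp.single 1 (6 - i) ≤ m := by
    refine Finsupp.le_def.2 (fun s => ?_)
    fin_cases s
    · simp only [Fin.mk_zero, Finsupp.add_apply, Finsupp.single_apply]
      simpa using hle0
    · simp only [Fin.mk_one, Finsupp.add_apply, Finsupp.single_apply]
      simpa using hle1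
  have hmon : mon i = MvPolynomial.monomial (Finsupp.single (0 : Fin 2) i + Finsupp.single 1 (6 - i)) (1 : ℂ) := by
    rw [mon, MvPolynomial.X_pow_eq_monomial, MvPolynomial.X_pow_eq_monomial,
      MvPolynomial.monomial_mul, one_mul]
  have hdvd : mon i ∣ MvPolynomial.monomial m (MvPolynomial.coeff m P) := by
    rw [hmon]
    rw [MvPolynomial.monomial_dvd_monomial]
    exact ⟨Or.inr hvv, one_dvd _⟩
  obtain ⟨k, hk⟩ := hdvd
  rw [hk]
  exact Ideal.mul_mem_right _ _ (Ideal.subset_span ⟨i, by simp only [Set.mem_setOf_eq]; omega, rfl⟩)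

end W12
namespace W12

open MvPowerSeries

def Iq (q1 q2 : Pl) : Ideal Pl := Ideal.span ({q1, q2} ∪ MS)
def Is (q1 q2 : Pl) : Ideal PS := Ideal.span {(q1 : PS), (q2 : PS)}

lemma coe_algHom_eq (P : Pl) : MvPolynomial.coeToMvPowerSeries.algHom (σ := Fin 2) ℂ P = (P : PS) := by
  rw [MvPolynomial.coeToMvPowerSeries.algHom_apply]
  simp [MvPowerSeries.map_id]

lemma coe_sub (a b : Pl) : ((a - b : Pl) : PS) = (a : PS) - (b : PS) := by
  simpa only [MvPolynomial.coeToMvPowerSeries.ringHom_apply] using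
    map_sub (MvPolynomial.coeToMvPowerSeries.ringHom (σ := Fin 2) (R := ℂ)) a b

lemma present (q1 q2 : Pl) (hmon : ∀ k ≤ 6, ((mon k : Pl) : PS) ∈ Is q1 q2) :
    Nonempty ((Pl ⧸ Iq q1 q2) ≃ₐ[ℂ] (PS ⧸ Is q1 q2)) := by
  classical
  set α : Pl →ₐ[ℂ] PS ⧸ Is q1 q2 :=
    (Ideal.Quotient.mkₐ ℂ (Is q1 q2)).comp (MvPolynomial.coeToMvPowerSeries.algHom ℂ) with hαdef
  have hα : ∀ P : Pl, α P = Ideal.Quotient.mk (Is q1 q2) (P : PS) := by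
    intro P
    simp [hαdef, coe_algHom_eq]
  have hX6 : Ideal.span {(X 0 : PS) ^ 6, (X 1 : PS) ^ 6} ≤ Is q1 q2 := by
    rw [Ideal.span_le]
    rintro _ (rfl | rfl)
    · have := hmon 6 (le_refl 6)
      simpa [mon] using this
    · have := hmon 0 (by omega)
      simpa [mon] using this
  have hsurj : Function.Surjective α := by
    intro z
    obtain ⟨f, rfl⟩ := Ideal.Quotient.mk_surjective z
    refine ⟨trunc ℂ nn f, ?_⟩
    rw [hα, Ideal.Quotient.mk_eq_mk_iff_sub_mem]
    have := hX6 (tail_mem f)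
    simpa using neg_mem this
  have hker : RingHom.ker α = Iq q1 q2 := by
    apply le_antisymm
    · intro P hP
      have hPmem : (P : PS) ∈ Is q1 q2 := by
        rw [RingHom.mem_ker, hα, Ideal.Quotient.eq_zero_iff_mem] at hP
        exact hP
      obtain ⟨c1, c2, hc⟩ := Ideal.mem_span_pair.1 hPmem
      set r : Pl := P - trunc ℂ nn c1 * q1 - trunc ℂ nn c2 * q2 with hr
      have hrc : (r : PS) = (c1 - ↑(trunc ℂ nn c1)) * (q1 : PS) + (c2 - ↑(trunc ℂ nn c2)) * (q2 : PS) := by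
        rw [hr]
        simp only [coe_sub, MvPolynomial.coe_mul]
        linear_combination -hc
      have hrmem : (r : PS) ∈ Ideal.span {(X 0 : PS) ^ 6, (X 1 : PS) ^ 6} := by
        rw [hrc]
        exact Ideal.add_mem _ (Ideal.mul_mem_right _ _ (tail_mem c1))
          (Ideal.mul_mem_right _ _ (tail_mem c2))
      obtain ⟨a, b, hab⟩ := Ideal.mem_span_pair.1 hrmem
      have hsupp : ∀ m ∈ r.support, 6 ≤ m 0 + m 1 := by
        intro m hm
        by_contra hlt
        push_neg at hlt
        have h0 : m 0 < 6 := by omega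
        have h1 : m 1 < 6 := by omega
        have hz : MvPowerSeries.coeff m (r : PS) = 0 := by
          rw [← hab, map_add]
          have d0 : coeff m (a * X 0 ^ 6) = 0 :=
            X_pow_dvd_iff.1 (dvd_mul_left _ _) m h0
          have d1 : coeff m (b * X 1 ^ 6) = 0 :=
            X_pow_dvd_iff.1 (dvd_mul_left _ _) m h1
          rw [d0, d1, add_zero]
        rw [MvPolynomial.coeff_coe] at hz
        exact (MvPolynomial.mem_support_iff.1 hm) hz
      have hrMS : r ∈ Ideal.span MS := poly_mem_MS r hsupp
      have hPr : P = r + trunc ℂ nn c1 * q1 + trunc ℂ nn c2 * q2 := by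
        rw [hr]; ring
      rw [hPr]
      refine Ideal.add_mem _ (Ideal.add_mem _ ?_ ?_) ?_
      · exact Ideal.span_mono Set.subset_union_right hrMS
      · exact Ideal.mul_mem_left _ _ (Ideal.subset_span (Or.inl (Or.inl rfl)))
      · exact Ideal.mul_mem_left _ _ (Ideal.subset_span (Or.inl (Or.inr rfl)))
    · rw [Iq, Ideal.span_le]
      intro P hP
      rw [Set.mem_union, Set.mem_insert_iff, Set.mem_singleton_iff] at hP
      rcases hP with (rfl | rfl) | ⟨k, hk, rfl⟩ <;>
        rw [SetLike.mem_coe, RingHom.mem_ker, hα, Ideal.Quotient.eq_zero_iff_mem]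
      · exact Ideal.subset_span (Or.inl rfl)
      · exact Ideal.subset_span (Or.inr rfl)
      · exact hmon k hk
  exact ⟨(Ideal.quotientEquivAlgOfEq ℂ hker.symm).trans (Ideal.quotientKerAlgEquivOfSurjective hsurj)⟩

def substEquiv {I J : Ideal Pl} (v w : Fin 2 → Pl)
    (hI : ∀ a ∈ I, (MvPolynomial.aeval v a : Pl) ∈ J)
    (hJ : ∀ a ∈ J, (MvPolynomial.aeval w a : Pl) ∈ I)
    (hwv : ∀ i, MvPolynomial.aeval w (v i) = MvPolynomial.X i)
    (hvw : ∀ i, MvPolynomial.aeval v (w i) = MvPolynomial.X i) :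
    (Pl ⧸ I) ≃ₐ[ℂ] (Pl ⧸ J) := by
  refine AlgEquiv.ofAlgHom
    (Ideal.Quotient.liftₐ I ((Ideal.Quotient.mkₐ ℂ J).comp (MvPolynomial.aeval v))
      (fun a ha => by
        simp only [AlgHom.comp_apply, Ideal.Quotient.mkₐ_eq_mk, Ideal.Quotient.eq_zero_iff_mem]
        exact hI a ha))
    (Ideal.Quotient.liftₐ J ((Ideal.Quotient.mkₐ ℂ I).comp (MvPolynomial.aeval w))
      (fun a ha => by
        simp only [AlgHom.comp_apply, Ideal.Quotient.mkₐ_eq_mk, Ideal.Quotient.eq_zero_iff_mem]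
        exact hJ a ha))
    ?_ ?_
  · apply Ideal.Quotient.algHom_ext
    apply MvPolynomial.algHom_ext
    intro i
    simp only [AlgHom.comp_apply, Ideal.Quotient.mkₐ_eq_mk, Ideal.Quotient.liftₐ_apply,
      Ideal.Quotient.lift_mk, AlgHom.coe_toRingHom, MvPolynomial.aeval_X, AlgHom.id_apply,
      RingHom.coe_coe, hvw i]
    show Ideal.Quotient.mk J (MvPolynomial.aeval v (MvPolynomial.aeval w (MvPolynomial.X i))) = _
    rw [MvPolynomial.aeval_X, hvw i]
  · apply Ideal.Quotient.algHom_ext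
    apply MvPolynomial.algHom_ext
    intro i
    simp only [AlgHom.comp_apply, Ideal.Quotient.mkₐ_eq_mk, Ideal.Quotient.liftₐ_apply,
      Ideal.Quotient.lift_mk, AlgHom.coe_toRingHom, MvPolynomial.aeval_X, AlgHom.id_apply,
      RingHom.coe_coe, hwv i]
    show Ideal.Quotient.mk I (MvPolynomial.aeval w (MvPolynomial.aeval v (MvPolynomial.X i))) = _
    rw [MvPolynomial.aeval_X, hwv i]

end W12
namespace W12

open MvPowerSeries

lemma mem_Is_of (q1 q2 u P a b : Pl)
    (hu : MvPolynomial.constantCoeff u ≠ 0)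
    (hid : u * P = a * q1 + b * q2) : ((P : Pl) : PS) ∈ Is q1 q2 := by
  have hcoeff : MvPowerSeries.constantCoeff (u : PS) = MvPolynomial.constantCoeff u := by
    rw [← MvPowerSeries.coeff_zero_eq_constantCoeff_apply, MvPolynomial.coeff_coe,
      MvPolynomial.constantCoeff_eq]
  have hUnit : IsUnit (u : PS) :=
    MvPowerSeries.isUnit_iff_constantCoeff.2 (by rw [hcoeff]; exact isUnit_iff_ne_zero.2 hu)
  obtain ⟨w, hw⟩ := hUnit.exists_left_inv
  have hm : ((u * P : Pl) : PS) ∈ Is q1 q2 := by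
    rw [hid]
    simp only [MvPolynomial.coe_add, MvPolynomial.coe_mul]
    exact Ideal.add_mem _ (Ideal.mul_mem_left _ _ (Ideal.subset_span (Or.inl rfl)))
      (Ideal.mul_mem_left _ _ (Ideal.subset_span (Or.inr rfl)))
  have hP : (P : PS) = w * ((u * P : Pl) : PS) := by
    rw [MvPolynomial.coe_mul, ← mul_assoc, hw, one_mul]
  rw [hP]
  exact Ideal.mul_mem_left _ _ hm

lemma mem_of_C_mul {I : Ideal Pl} (z : ℂ) (hz : z ≠ 0) {v : Pl}
    (h : MvPolynomial.C z * v ∈ I) : v ∈ I := by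
  have hv : v = MvPolynomial.C z⁻¹ * (MvPolynomial.C z * v) := by
    rw [← mul_assoc, ← map_mul, inv_mul_cancel₀ hz, map_one, one_mul]
  rw [hv]
  exact Ideal.mul_mem_left _ _ h

lemma subst_mem_Iq {J : Ideal Pl} (v : Fin 2 → Pl) (q1 q2 : Pl)
    (hq1 : MvPolynomial.aeval v q1 ∈ J) (hq2 : MvPolynomial.aeval v q2 ∈ J)
    (hm : ∀ k ≤ 6, MvPolynomial.aeval v (mon k) ∈ J) :
    ∀ a ∈ Iq q1 q2, MvPolynomial.aeval v a ∈ J := by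
  intro a ha
  have hle : Iq q1 q2 ≤ Ideal.comap (MvPolynomial.aeval v : Pl →ₐ[ℂ] Pl).toRingHom J := by
    rw [Iq, Ideal.span_le]
    intro P hP
    rw [Set.mem_union, Set.mem_insert_iff, Set.mem_singleton_iff] at hP
    rcases hP with (rfl | rfl) | ⟨k, hk, rfl⟩
    · exact hq1
    · exact hq2
    · exact hm k hk
  exact hle ha

end W12
namespace W12

def cc : Pl := MvPolynomial.C ((8094664639923483515992325045280000 : ℂ))⁻¹

def g1 : Pl := MvPolynomial.X 0 ^ 4 - MvPolynomial.C (30445 / 7392 : ℂ) * (MvPolynomial.X 0 ^ 2 * MvPolynomial.X 1 ^ 2) + MvPolynomial.C (4240139 / 1897280 : ℂ) * (MvPolynomial.X 0 ^ 3 * MvPolynomial.X 1 ^ 2)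
def g2 : Pl := MvPolynomial.X 1 ^ 3 - MvPolynomial.C (2696 / 48125 : ℂ) * (MvPolynomial.X 0 ^ 3 * MvPolynomial.X 1)
def h1 : Pl := (4 : Pl) * MvPolynomial.X 0 ^ 3 + (2 : Pl) * (MvPolynomial.X 0 * MvPolynomial.X 1 ^ 3)
def h2 : Pl := (5 : Pl) * MvPolynomial.X 1 ^ 4 + (3 : Pl) * (MvPolynomial.X 0 ^ 2 * MvPolynomial.X 1 ^ 2)
def k1 : Pl := (69122209468141149256 : Pl) * MvPolynomial.X 0 * MvPolynomial.X 1 ^ 3 + (-1233867333328743623125 : Pl) * MvPolynomial.X 0 ^ 3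
def k2 : Pl := (131058579935199249827586900192 : Pl) * MvPolynomial.X 1 ^ 4 + (-539783342279104594291245018445 : Pl) * MvPolynomial.X 0 ^ 2 * MvPolynomial.X 1 ^ 2
def vm : Fin 2 → Pl := ![(1 : Pl) * MvPolynomial.X 1 + (-4522593295620641058781015601962875 : Pl) * MvPolynomial.X 0 ^ 2 * cc, (1 : Pl) * MvPolynomial.X 0]
def wm : Fin 2 → Pl := ![(1 : Pl) * MvPolynomial.X 1, (4522593295620641058781015601962875 : Pl) * MvPolynomial.X 1 ^ 2 * cc + (1 : Pl) * MvPolynomial.X 0]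
def vs (bb : ℂ) : Fin 2 → Pl := ![(-1993573579280221726261867008000000 : Pl) * MvPolynomial.X 0 * cc * MvPolynomial.C bb, (10524875081224862947799199528000000 : Pl) * MvPolynomial.X 1 * cc]
def ws (bb : ℂ) : Fin 2 → Pl := ![(1 : Pl) * MvPolynomial.X 0 * MvPolynomial.C bb, (6225593665212611724079998143452800 : Pl) * MvPolynomial.X 1 * cc]

lemma hM : (8094664639923483515992325045280000 : Pl) * cc = 1 := by
  rw [cc, ← map_ofNat (MvPolynomial.C : ℂ →+* Pl) 8094664639923483515992325045280000, ← map_mul,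
    mul_inv_cancel₀ (by norm_num), map_one]

lemma hA1 : (MvPolynomial.C (30445 / 7392 : ℂ) : Pl) = (33339023939728146055788194805675000 : Pl) * cc := by
  rw [cc, ← map_ofNat (MvPolynomial.C : ℂ →+* Pl) 33339023939728146055788194805675000, ← map_mul]
  congr 1
  rw [eq_comm, mul_inv_eq_iff_eq_mul₀ (by norm_num)]
  norm_num

lemma hA2 : (MvPolynomial.C (4240139 / 1897280 : ℂ) : Pl) = (18090373182482564235124062407851500 : Pl) * cc := by
  rw [cc, ← map_ofNat (MvPolynomial.C : ℂ →+* Pl) 18090373182482564235124062407851500, ← map_mul]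
  congr 1
  rw [eq_comm, mul_inv_eq_iff_eq_mul₀ (by norm_num)]
  norm_num

lemma hA3 : (MvPolynomial.C (2696 / 48125 : ℂ) : Pl) = (453469420659401798630967445653504 : Pl) * cc := by
  rw [cc, ← map_ofNat (MvPolynomial.C : ℂ →+* Pl) 453469420659401798630967445653504, ← map_mul]
  congr 1
  rw [eq_comm, mul_inv_eq_iff_eq_mul₀ (by norm_num)]
  norm_num

lemma hBpl (bb : ℂ) (hbb : (6314386081449600 : ℂ) * bb ^ 2 = -25638801731506361) :
    (6314386081449600 : Pl) * (MvPolynomial.C bb) ^ 2 = -25638801731506361 := by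
  rw [← map_ofNat (MvPolynomial.C : ℂ →+* Pl) 6314386081449600, ← map_pow, ← map_mul, hbb,
    map_neg, map_ofNat]

lemma coe_ofNat (n : ℕ) [n.AtLeastTwo] : ((OfNat.ofNat n : Pl) : PS) = OfNat.ofNat n := by
  rw [← MvPolynomial.coeToMvPowerSeries.ringHom_apply, map_ofNat]

lemma aeval_cc (v : Fin 2 → Pl) : MvPolynomial.aeval v cc = cc := by
  rw [cc, MvPolynomial.aeval_C, MvPolynomial.algebraMap_eq]

lemma uA0 : ((mon 0 : Pl) : PS) ∈ Is g1 g2 := by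
  refine mem_Is_of g1 g2 ((1172375888000625000000 : Pl) + (-62412734219946302500 : Pl) * MvPolynomial.X 0 ^ 2 + (67732616012941086900 : Pl) * MvPolynomial.X 0 ^ 3 + (-18376487303813519841 : Pl) * MvPolynomial.X 0 ^ 4) (mon 0) ((15153717567871344000 : Pl) * MvPolynomial.X 1 ^ 4 + (-8222688414643792320 : Pl) * MvPolynomial.X 0 * MvPolynomial.X 1 ^ 4 + (3679299729404006400 : Pl) * MvPolynomial.X 0 ^ 2 * MvPolynomial.X 1 ^ 2) ((1172375888000625000000 : Pl) * MvPolynomial.X 1 ^ 3 + (65677410785448000000 : Pl) * MvPolynomial.X 0 ^ 3 * MvPolynomial.X 1) ?_ ?_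
  · simp only [map_ofNat, map_add, map_mul, map_pow, map_one, map_neg,
      MvPolynomial.constantCoeff_X, MvPolynomial.constantCoeff_C, cc]
    norm_num
  · simp only [mon, g1, g2]
    rw [hA1, hA2, hA3]
    linear_combination ((62412734219946302500 : Pl) * MvPolynomial.X 0 ^ 2 * MvPolynomial.X 1 ^ 6 + (65677410785448000000 : Pl) * MvPolynomial.X 0 ^ 3 * MvPolynomial.X 1 ^ 4 + (-67732616012941086900 : Pl) * MvPolynomial.X 0 ^ 3 * MvPolynomial.X 1 ^ 6 + (15153717567871344000 : Pl) * MvPolynomial.X 0 ^ 4 * MvPolynomial.X 1 ^ 4 + (18376487303813519841 : Pl) * MvPolynomial.X 0 ^ 4 * MvPolynomial.X 1 ^ 6 + (-8222688414643792320 : Pl) * MvPolynomial.X 0 ^ 5 * MvPolynomial.X 1 ^ 4 + (3679299729404006400 : Pl) * MvPolynomial.X 0 ^ 6 * MvPolynomial.X 1 ^ 2) * hM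

lemma uA1 : ((mon 1 : Pl) : PS) ∈ Is g1 g2 := by
  refine mem_Is_of g1 g2 ((34239975000 : Pl) + (-7900173050 : Pl) * MvPolynomial.X 0 + (4286780529 : Pl) * MvPolynomial.X 0 ^ 2) (mon 1) ((1918150080 : Pl) * MvPolynomial.X 1 ^ 3) ((34239975000 : Pl) * MvPolynomial.X 0 * MvPolynomial.X 1 ^ 2) ?_ ?_
  · simp only [map_ofNat, map_add, map_mul, map_pow, map_one, map_neg,
      MvPolynomial.constantCoeff_X, MvPolynomial.constantCoeff_C, cc]
    norm_num
  · simp only [mon, g1, g2]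
    rw [hA1, hA2, hA3]
    linear_combination ((7900173050 : Pl) * MvPolynomial.X 0 ^ 2 * MvPolynomial.X 1 ^ 5 + (-4286780529 : Pl) * MvPolynomial.X 0 ^ 3 * MvPolynomial.X 1 ^ 5 + (1918150080 : Pl) * MvPolynomial.X 0 ^ 4 * MvPolynomial.X 1 ^ 3) * hM

lemma uA2 : ((mon 2 : Pl) : PS) ∈ Is g1 g2 := by
  refine mem_Is_of g1 g2 ((34239975000 : Pl) + (-7900173050 : Pl) * MvPolynomial.X 0 + (4286780529 : Pl) * MvPolynomial.X 0 ^ 2) (mon 2) ((1918150080 : Pl) * MvPolynomial.X 0 * MvPolynomial.X 1 ^ 2) ((34239975000 : Pl) * MvPolynomial.X 0 ^ 2 * MvPolynomial.X 1) ?_ ?_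
  · simp only [map_ofNat, map_add, map_mul, map_pow, map_one, map_neg,
      MvPolynomial.constantCoeff_X, MvPolynomial.constantCoeff_C, cc]
    norm_num
  · simp only [mon, g1, g2]
    rw [hA1, hA2, hA3]
    linear_combination ((7900173050 : Pl) * MvPolynomial.X 0 ^ 3 * MvPolynomial.X 1 ^ 4 + (-4286780529 : Pl) * MvPolynomial.X 0 ^ 4 * MvPolynomial.X 1 ^ 4 + (1918150080 : Pl) * MvPolynomial.X 0 ^ 5 * MvPolynomial.X 1 ^ 2) * hM

lemma uA3 : ((mon 3 : Pl) : PS) ∈ Is g1 g2 := by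
  refine mem_Is_of g1 g2 ((34239975000 : Pl) + (-7900173050 : Pl) * MvPolynomial.X 0 + (4286780529 : Pl) * MvPolynomial.X 0 ^ 2) (mon 3) ((1918150080 : Pl) * MvPolynomial.X 0 ^ 2 * MvPolynomial.X 1) ((34239975000 : Pl) * MvPolynomial.X 0 ^ 3) ?_ ?_
  · simp only [map_ofNat, map_add, map_mul, map_pow, map_one, map_neg,
      MvPolynomial.constantCoeff_X, MvPolynomial.constantCoeff_C, cc]
    norm_num
  · simp only [mon, g1, g2]
    rw [hA1, hA2, hA3]
    linear_combination ((7900173050 : Pl) * MvPolynomial.X 0 ^ 4 * MvPolynomial.X 1 ^ 3 + (-4286780529 : Pl) * MvPolynomial.X 0 ^ 5 * MvPolynomial.X 1 ^ 3 + (1918150080 : Pl) * MvPolynomial.X 0 ^ 6 * MvPolynomial.X 1) * hM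

lemma uA4 : ((mon 4 : Pl) : PS) ∈ Is g1 g2 := by
  refine mem_Is_of g1 g2 ((133431812976000 : Pl) + (161809008653889 : Pl) * MvPolynomial.X 1 ^ 2 + (41615919928352 : Pl) * MvPolynomial.X 0) (mon 4) ((133431812976000 : Pl) * MvPolynomial.X 1 ^ 2 + (72402578297280 : Pl) * MvPolynomial.X 0 * MvPolynomial.X 1 ^ 2) ((549557839022500 : Pl) * MvPolynomial.X 0 ^ 2 * MvPolynomial.X 1) ?_ ?_
  · simp only [map_ofNat, map_add, map_mul, map_pow, map_one, map_neg,
      MvPolynomial.constantCoeff_X, MvPolynomial.constantCoeff_C, cc]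
    norm_num
  · simp only [mon, g1, g2]
    rw [hA1, hA2, hA3]
    linear_combination ((549557839022500 : Pl) * MvPolynomial.X 0 ^ 2 * MvPolynomial.X 1 ^ 4 + (-161809008653889 : Pl) * MvPolynomial.X 0 ^ 4 * MvPolynomial.X 1 ^ 4 + (30786658368928 : Pl) * MvPolynomial.X 0 ^ 5 * MvPolynomial.X 1 ^ 2) * hM

lemma uA5 : ((mon 5 : Pl) : PS) ∈ Is g1 g2 := by
  refine mem_Is_of g1 g2 ((133431812976000 : Pl) + (161809008653889 : Pl) * MvPolynomial.X 1 ^ 2 + (41615919928352 : Pl) * MvPolynomial.X 0) (mon 5) ((133431812976000 : Pl) * MvPolynomial.X 0 * MvPolynomial.X 1 + (72402578297280 : Pl) * MvPolynomial.X 0 ^ 2 * MvPolynomial.X 1) ((549557839022500 : Pl) * MvPolynomial.X 0 ^ 3) ?_ ?_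
  · simp only [map_ofNat, map_add, map_mul, map_pow, map_one, map_neg,
      MvPolynomial.constantCoeff_X, MvPolynomial.constantCoeff_C, cc]
    norm_num
  · simp only [mon, g1, g2]
    rw [hA1, hA2, hA3]
    linear_combination ((549557839022500 : Pl) * MvPolynomial.X 0 ^ 3 * MvPolynomial.X 1 ^ 3 + (-161809008653889 : Pl) * MvPolynomial.X 0 ^ 5 * MvPolynomial.X 1 ^ 3 + (30786658368928 : Pl) * MvPolynomial.X 0 ^ 6 * MvPolynomial.X 1) * hM

lemma uA6 : ((mon 6 : Pl) : PS) ∈ Is g1 g2 := by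
  refine mem_Is_of g1 g2 ((395076850145404132453400733696000000 : Pl) + (400049363056994913704844179817177600 : Pl) * MvPolynomial.X 1 ^ 2 + (-429804794901300036947887495543374024 : Pl) * MvPolynomial.X 1 ^ 4 + (337596170902619368133748558876672000 : Pl) * MvPolynomial.X 0) (mon 6) ((1627180019301519049315988276160000000 : Pl) * MvPolynomial.X 1 ^ 2 + (-3432997171827137580197482545348600000 : Pl) * MvPolynomial.X 1 ^ 4 + (882938079934792825928081323564800000 : Pl) * MvPolynomial.X 0 * MvPolynomial.X 1 ^ 2 + (395076850145404132453400733696000000 : Pl) * MvPolynomial.X 0 ^ 2 + (-354427936284621286845029576658816000 : Pl) * MvPolynomial.X 0 ^ 2 * MvPolynomial.X 1 ^ 2 + (337596170902619368133748558876672000 : Pl) * MvPolynomial.X 0 ^ 3) ((6701771602764440943780473899850000000 : Pl) * MvPolynomial.X 0 ^ 2 * MvPolynomial.X 1 + (-14139285564972565426016281939006781250 : Pl) * MvPolynomial.X 0 ^ 2 * MvPolynomial.X 1 ^ 3 + (7672238781389118797521174229608633125 : Pl) * MvPolynomial.X 0 ^ 3 * MvPolynomial.X 1 ^ 3) ?_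 ?_
  · simp only [map_ofNat, map_add, map_mul, map_pow, map_one, map_neg,
      MvPolynomial.constantCoeff_X, MvPolynomial.constantCoeff_C, cc]
    norm_num
  · simp only [mon, g1, g2]
    rw [hA1, hA2, hA3]
    linear_combination ((6701771602764440943780473899850000000 : Pl) * MvPolynomial.X 0 ^ 2 * MvPolynomial.X 1 ^ 4 + (-14139285564972565426016281939006781250 : Pl) * MvPolynomial.X 0 ^ 2 * MvPolynomial.X 1 ^ 6 + (7672238781389118797521174229608633125 : Pl) * MvPolynomial.X 0 ^ 3 * MvPolynomial.X 1 ^ 6 + (1627180019301519049315988276160000000 : Pl) * MvPolynomial.X 0 ^ 4 * MvPolynomial.X 1 ^ 2 + (-3432997171827137580197482545348600000 : Pl) * MvPolynomial.X 0 ^ 4 * MvPolynomial.X 1 ^ 4 + (882938079934792825928081323564800000 : Pl) * MvPolynomial.X 0 ^ 5 * MvPolynomial.X 1 ^ 2 + (-754477299341616200549873756475993600 : Pl) * MvPolynomial.X 0 ^ 6 * MvPolynomial.X 1 ^ 2 + (429804794901300036947887495543374024 : Pl) * MvPolynomial.X 0 ^ 6 * MvPolynomial.X 1 ^ 4) * 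hM

lemma uB0 : ((mon 0 : Pl) : PS) ∈ Is h1 h2 := by
  refine mem_Is_of h1 h2 ((100 : Pl) + (-30 : Pl) * MvPolynomial.X 1) (mon 0) ((9 : Pl) * MvPolynomial.X 0 * MvPolynomial.X 1 ^ 2) ((20 : Pl) * MvPolynomial.X 1 ^ 2 + (-6 : Pl) * MvPolynomial.X 1 ^ 3 + (-12 : Pl) * MvPolynomial.X 0 ^ 2) ?_ ?_
  · simp only [map_ofNat, map_add, map_mul, map_pow, map_one, map_neg,
      MvPolynomial.constantCoeff_X, MvPolynomial.constantCoeff_C, cc]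
    norm_num
  · simp only [mon, h1, h2]
    ring

lemma uB1 : ((mon 1 : Pl) : PS) ∈ Is h1 h2 := by
  refine mem_Is_of h1 h2 ((20 : Pl) + (-6 : Pl) * MvPolynomial.X 1) (mon 1) ((-3 : Pl) * MvPolynomial.X 1 ^ 3) ((4 : Pl) * MvPolynomial.X 0 * MvPolynomial.X 1) ?_ ?_
  · simp only [map_ofNat, map_add, map_mul, map_pow, map_one, map_neg,
      MvPolynomial.constantCoeff_X, MvPolynomial.constantCoeff_C, cc]
    norm_num
  · simp only [mon, h1, h2]
    ring

lemma uB2 : ((mon 2 : Pl) : PS) ∈ Is h1 h2 := by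
  refine mem_Is_of h1 h2 ((20 : Pl) + (-6 : Pl) * MvPolynomial.X 1) (mon 2) ((-3 : Pl) * MvPolynomial.X 0 * MvPolynomial.X 1 ^ 2) ((4 : Pl) * MvPolynomial.X 0 ^ 2) ?_ ?_
  · simp only [map_ofNat, map_add, map_mul, map_pow, map_one, map_neg,
      MvPolynomial.constantCoeff_X, MvPolynomial.constantCoeff_C, cc]
    norm_num
  · simp only [mon, h1, h2]
    ring

lemma uB3 : ((mon 3 : Pl) : PS) ∈ Is h1 h2 := by
  refine mem_Is_of h1 h2 ((20 : Pl) + (-6 : Pl) * MvPolynomial.X 1) (mon 3) ((5 : Pl) * MvPolynomial.X 1 ^ 3) ((-2 : Pl) * MvPolynomial.X 0 * MvPolynomial.X 1 ^ 2) ?_ ?_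
  · simp only [map_ofNat, map_add, map_mul, map_pow, map_one, map_neg,
      MvPolynomial.constantCoeff_X, MvPolynomial.constantCoeff_C, cc]
    norm_num
  · simp only [mon, h1, h2]
    ring

lemma uB4 : ((mon 4 : Pl) : PS) ∈ Is h1 h2 := by
  refine mem_Is_of h1 h2 ((20 : Pl) + (-6 : Pl) * MvPolynomial.X 1) (mon 4) ((5 : Pl) * MvPolynomial.X 0 * MvPolynomial.X 1 ^ 2) ((-2 : Pl) * MvPolynomial.X 0 ^ 2 * MvPolynomial.X 1) ?_ ?_
  · simp only [map_ofNat, map_add, map_mul, map_pow, map_one, map_neg,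
      MvPolynomial.constantCoeff_X, MvPolynomial.constantCoeff_C, cc]
    norm_num
  · simp only [mon, h1, h2]
    ring

lemma uB5 : ((mon 5 : Pl) : PS) ∈ Is h1 h2 := by
  refine mem_Is_of h1 h2 ((20 : Pl) + (-6 : Pl) * MvPolynomial.X 1) (mon 5) ((5 : Pl) * MvPolynomial.X 0 ^ 2 * MvPolynomial.X 1) ((-2 : Pl) * MvPolynomial.X 0 ^ 3) ?_ ?_
  · simp only [map_ofNat, map_add, map_mul, map_pow, map_one, map_neg,
      MvPolynomial.constantCoeff_X, MvPolynomial.constantCoeff_C, cc]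
    norm_num
  · simp only [mon, h1, h2]
    ring

lemma uB6 : ((mon 6 : Pl) : PS) ∈ Is h1 h2 := by
  refine mem_Is_of h1 h2 ((40 : Pl) + (-12 : Pl) * MvPolynomial.X 1) (mon 6) ((-5 : Pl) * MvPolynomial.X 0 * MvPolynomial.X 1 ^ 3 + (10 : Pl) * MvPolynomial.X 0 ^ 3 + (-3 : Pl) * MvPolynomial.X 0 ^ 3 * MvPolynomial.X 1) ((2 : Pl) * MvPolynomial.X 0 ^ 2 * MvPolynomial.X 1 ^ 2) ?_ ?_
  · simp only [map_ofNat, map_add, map_mul, map_pow, map_one, map_neg,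
      MvPolynomial.constantCoeff_X, MvPolynomial.constantCoeff_C, cc]
    norm_num
  · simp only [mon, h1, h2]
    ring

lemma hmonA : ∀ k ≤ 6, ((mon k : Pl) : PS) ∈ Is g1 g2 := by
  intro k hk
  interval_cases k
  exacts [uA0, uA1, uA2, uA3, uA4, uA5, uA6]

lemma hmonB : ∀ k ≤ 6, ((mon k : Pl) : PS) ∈ Is h1 h2 := by
  intro k hk
  interval_cases k
  exacts [uB0, uB1, uB2, uB3, uB4, uB5, uB6]

lemma midA1 : MvPolynomial.aeval vm g1 ∈ Iq k1 k2 := by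
  refine mem_of_C_mul (176437312673924474104530846684476949853489940398080000 : ℂ) (by norm_num) ?_
  have hid : MvPolynomial.C (176437312673924474104530846684476949853489940398080000 : ℂ) * MvPolynomial.aeval vm g1 = ((-658104192730105839830591341592576 : Pl) * MvPolynomial.X 0 * MvPolynomial.X 1) * k1 + ((1346247706645092106240000 : Pl)) * k2 + ((45489615861752309567754527395962522119615401957523456 : Pl)) * mon 2 + ((-330460101927794859308117999934945523312521537286963200 : Pl)) * mon 4 + ((-226841130122468310146907749549499829934382174483712000 : Pl) + (246176415030643547069465084775074488438331323190814720 : Pl) * MvPolynomial.X 1 + (-51578224068713725983426336737317678120079357276418969 : Pl) * MvPolynomial.X 0 ^ 2) * mon 6 := by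
    simp only [g1, vm, mon, k1, k2, g1, g2, h1, h2, aeval_cc, map_ofNat, map_neg, map_one, map_sub, map_add, map_mul, map_pow, MvPolynomial.aeval_X, MvPolynomial.aeval_C, MvPolynomial.algebraMap_eq, Matrix.cons_val_zero, Matrix.cons_val_one, Matrix.head_cons]
    rw [hA1, hA2]
    linear_combination ((-726682086628467344982743726638108866110592699596800000 : Pl) * MvPolynomial.X 0 ^ 2 * MvPolynomial.X 1 ^ 2 + (812013265336361238111345189514353255566205941841920000 : Pl) * MvPolynomial.X 0 ^ 4 * MvPolynomial.X 1 + (6572975066067048620375396684058271217816630725087994305792592579224888310602137600000000 : Pl) * MvPolynomial.X 0 ^ 4 * MvPolynomial.X 1 * cc + (-330460101927794859308117999934945523312521537286963200 : Pl) * MvPolynomial.X 0 ^ 4 * MvPolynomial.X 1 ^ 2 + (-2674963701980431235710864888194331555617390920761890696976684369690908965793693696000000 : Pl) * MvPolynomial.X 0 ^ 4 * MvPolynomial.X 1 ^ 2 * cc + (-226841130122468310146907749549499829934382174483712000 : Pl) * MvPolynomial.X 0 ^ 6 + (-1836202874882626013961428605724125726252964163568627396046517758731054371022479360000000 : Pl)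 * MvPolynomial.X 0 ^ 6 * cc + (-14863446483038237157646919229442860702715308283103875685978172220459590158814235207626422067454774150809865420800000000000 : Pl) * MvPolynomial.X 0 ^ 6 * cc ^ 2 + (246176415030643547069465084775074488438331323190814720 : Pl) * MvPolynomial.X 0 ^ 6 * MvPolynomial.X 1 + (1992715521931678283183615656125861726243880418523430465014480640112308331104090521600000 : Pl) * MvPolynomial.X 0 ^ 6 * MvPolynomial.X 1 * cc + (16130363872807025109376589367143378910784553251841012261139709336791012830820175822877504797113539283239938818048000000000 : Pl) * MvPolynomial.X 0 ^ 6 * MvPolynomial.X 1 * cc ^ 2 + (-51578224068713725983426336737317678120079357276418969 : Pl) * MvPolynomial.X 0 ^ 8 + (-417508426559067343643592384783241759949803182413648746255957620591311785889175916320000 : Pl) * MvPolynomial.X 0 ^ 8 * cc + (-3379590697337773021126639629954294413156355982678553206165701656166576708834210825502825112443613621024129490969600000000 : Pl) * MvPolynomial.X 0 ^ 8 * cc ^ 2 + (-27356653315154419012914450017072842986624357312499312656970683378971040822552586038398535621501420270182623610827461924039761023242991671103488000000000000 : Pl) * MvPolynomial.X 0 ^ 8 * cc ^ 3) * hM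
  rw [hid]
  exact (Ideal.add_mem _ (Ideal.add_mem _ (Ideal.add_mem _ (Ideal.add_mem _ (Ideal.mul_mem_left _ _ (Ideal.subset_span (Or.inl (Or.inl rfl)))) (Ideal.mul_mem_left _ _ (Ideal.subset_span (Or.inl (Or.inr rfl))))) (Ideal.mul_mem_left _ _ (Ideal.subset_span (Or.inr ⟨2, by norm_num, rfl⟩)))) (Ideal.mul_mem_left _ _ (Ideal.subset_span (Or.inr ⟨4, by norm_num, rfl⟩)))) (Ideal.mul_mem_left _ _ (Ideal.subset_span (Or.inr ⟨6, by norm_num, rfl⟩))))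

lemma midA2 : MvPolynomial.aeval vm g2 ∈ Iq k1 k2 := by
  refine mem_of_C_mul (1685360255476985108940676923117568000000000 : ℂ) (by norm_num) ?_
  have hid : MvPolynomial.C (1685360255476985108940676923117568000000000 : ℂ) * MvPolynomial.aeval vm g2 = ((-1365916910151270400000 : Pl) + (-128257672822519037952 : Pl) * MvPolynomial.X 1 ^ 2) * k1 + ((8865453726734475203831175711788760563712 : Pl)) * mon 1 + ((-88417961080730431220276538796767582048000 : Pl)) * mon 5 + ((16466750869617173440570718033939257717075 : Pl) * MvPolynomial.X 0) * mon 6 := by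
    simp only [g2, vm, mon, k1, k2, g1, g2, h1, h2, aeval_cc, map_ofNat, map_neg, map_one, map_sub, map_add, map_mul, map_pow, MvPolynomial.aeval_X, MvPolynomial.aeval_C, MvPolynomial.algebraMap_eq, Matrix.cons_val_zero, Matrix.cons_val_one, Matrix.head_cons]
    rw [hA3]
    linear_combination ((-94415194779552246310733817864414822400000 : Pl) * MvPolynomial.X 0 * MvPolynomial.X 1 ^ 3 + (158252952744472039756815775641629859840000 : Pl) * MvPolynomial.X 0 ^ 3 * MvPolynomial.X 1 ^ 2 + (1281004580744159816160331122915354657591734095806199209318728053555200000000 : Pl) * MvPolynomial.X 0 ^ 3 * MvPolynomial.X 1 ^ 2 * cc + (-88417961080730431220276538796767582048000 : Pl) * MvPolynomial.X 0 ^ 5 * MvPolynomial.X 1 + (-715713743094319375465699613023273974121684439995362006293417715133440000000 : Pl) * MvPolynomial.X 0 ^ 5 * MvPolynomial.X 1 * cc + (-5793462728532867334271532520846737524470454635557085164779293386564398493247965244377344989242163200000000000 : Pl) * MvPolynomial.X 0 ^ 5 * MvPolynomial.X 1 * cc ^ 2 + (16466750869617173440570718033939257717075 : Pl) * MvPolynomial.X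 0 ^ 7 + (133292825998719406306561502583737942623050935186051183009491038804156000000 : Pl) * MvPolynomial.X 0 ^ 7 * cc + (1078960725367307565122647581072665640648306569051325385705769499881136067719838141239428339752183680000000000 : Pl) * MvPolynomial.X 0 ^ 7 * cc ^ 2 + (8733825231496937278315315679548801369293378765618215807767267636262019514063797962432273679287262527173539096297936094234877030400000000000000 : Pl) * MvPolynomial.X 0 ^ 7 * cc ^ 3) * hM
  rw [hid]
  exact (Ideal.add_mem _ (Ideal.add_mem _ (Ideal.add_mem _ (Ideal.mul_mem_left _ _ (Ideal.subset_span (Or.inl (Or.inl rfl)))) (Ideal.mul_mem_left _ _ (Ideal.subset_span (Or.inr ⟨1, by norm_num, rfl⟩)))) (Ideal.mul_mem_left _ _ (Ideal.subset_span (Or.inr ⟨5, by norm_num, rfl⟩)))) (Ideal.mul_mem_left _ _ (Ideal.subset_span (Or.inr ⟨6, by norm_num, rfl⟩))))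

lemma midB1 : MvPolynomial.aeval wm k1 ∈ Iq g1 g2 := by
  refine mem_of_C_mul (1365916910151270400000 : ℂ) (by norm_num) ?_
  have hid : MvPolynomial.C (1365916910151270400000 : ℂ) * MvPolynomial.aeval wm k1 = ((-1685360255476985108940676923117568000000000 : Pl) + (158252952744472039756815775641629859840000 : Pl) * MvPolynomial.X 0 ^ 2) * g2 + ((16466750869617173440570718033939257717075 : Pl) * MvPolynomial.X 1) * mon 0 + ((88417961080730431220276538796767582048000 : Pl)) * mon 1 + ((8865453726734475203831175711788760563712 : Pl)) * mon 5 := by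
    simp only [k1, wm, mon, k1, k2, g1, g2, h1, h2, aeval_cc, map_ofNat, map_neg, map_one, map_sub, map_add, map_mul, map_pow, MvPolynomial.aeval_X, MvPolynomial.aeval_C, MvPolynomial.algebraMap_eq, Matrix.cons_val_zero, Matrix.cons_val_one, Matrix.head_cons]
    rw [hA3]
    linear_combination ((16466750869617173440570718033939257717075 : Pl) * MvPolynomial.X 1 ^ 7 + (133292825998719406306561502583737942623050935186051183009491038804156000000 : Pl) * MvPolynomial.X 1 ^ 7 * cc + (1078960725367307565122647581072665640648306569051325385705769499881136067719838141239428339752183680000000000 : Pl) * MvPolynomial.X 1 ^ 7 * cc ^ 2 + (88417961080730431220276538796767582048000 : Pl) * MvPolynomial.X 0 * MvPolynomial.X 1 ^ 5 + (715713743094319375465699613023273974121684439995362006293417715133440000000 : Pl) * MvPolynomial.X 0 * MvPolynomial.X 1 ^ 5 * cc + (158252952744472039756815775641629859840000 : Pl) * MvPolynomial.X 0 ^ 2 * MvPolynomial.X 1 ^ 3 + (-94415194779552246310733817864414822400000 : Pl) * MvPolynomial.X 0 ^ 3 * MvPolynomial.X 1 + (8865453726734475203831175711788760563712 : Pl) *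 MvPolynomial.X 0 ^ 5 * MvPolynomial.X 1) * hM
  rw [hid]
  exact (Ideal.add_mem _ (Ideal.add_mem _ (Ideal.add_mem _ (Ideal.mul_mem_left _ _ (Ideal.subset_span (Or.inl (Or.inr rfl)))) (Ideal.mul_mem_left _ _ (Ideal.subset_span (Or.inr ⟨0, by norm_num, rfl⟩)))) (Ideal.mul_mem_left _ _ (Ideal.subset_span (Or.inr ⟨1, by norm_num, rfl⟩)))) (Ideal.mul_mem_left _ _ (Ideal.subset_span (Or.inr ⟨5, by norm_num, rfl⟩))))

lemma midB2 : MvPolynomial.aeval wm k2 ∈ Iq g1 g2 := by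
  refine mem_of_C_mul (1346247706645092106240000 : ℂ) (by norm_num) ?_
  have hid : MvPolynomial.C (1346247706645092106240000 : ℂ) * MvPolynomial.aeval wm k2 = ((176437312673924474104530846684476949853489940398080000 : Pl)) * g1 + ((-812013265336361238111345189514353255566205941841920000 : Pl) * MvPolynomial.X 0 * MvPolynomial.X 1) * g2 + ((-226841130122468310146907749549499829934382174483712000 : Pl) + (17192741356237908661142112245772559373359785758806323 : Pl) * MvPolynomial.X 1 ^ 2) * mon 0 + ((123088207515321773534732542387537244219165661595407360 : Pl) * MvPolynomial.X 1) * mon 1 + ((330460101927794859308117999934945523312521537286963200 : Pl)) * mon 2 + ((-45489615861752309567754527395962522119615401957523456 : Pl)) * mon 4 := by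
    simp only [k2, wm, mon, k1, k2, g1, g2, h1, h2, aeval_cc, map_ofNat, map_neg, map_one, map_sub, map_add, map_mul, map_pow, MvPolynomial.aeval_X, MvPolynomial.aeval_C, MvPolynomial.algebraMap_eq, Matrix.cons_val_zero, Matrix.cons_val_one, Matrix.head_cons]
    rw [hA1, hA2, hA3]
    linear_combination ((-226841130122468310146907749549499829934382174483712000 : Pl) * MvPolynomial.X 1 ^ 6 + (-1836202874882626013961428605724125726252964163568627396046517758731054371022479360000000 : Pl) * MvPolynomial.X 1 ^ 6 * cc + (17192741356237908661142112245772559373359785758806323 : Pl) * MvPolynomial.X 1 ^ 8 + (139169475519689114547864128261080586649934394137882915418652540197103928629725305440000 : Pl) * MvPolynomial.X 1 ^ 8 * cc + (1126530232445924340375546543318098137718785327559517735388567218722192236278070275167608370814537873674709830323200000000 : Pl) * MvPolynomial.X 1 ^ 8 * cc ^ 2 + (9118884438384806337638150005690947662208119104166437552323561126323680274184195346132845207167140090060874536942487308013253674414330557034496000000000000 : Pl) * MvPolynomial.X 1 ^ 8 * cc ^ 3 + (-812013265336361238111345189514353255566205941841920000 : Pl) * MvPolynomial.X 0 * MvPolynomial.X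 1 ^ 4 + (123088207515321773534732542387537244219165661595407360 : Pl) * MvPolynomial.X 0 * MvPolynomial.X 1 ^ 6 + (996357760965839141591807828062930863121940209261715232507240320056154165552045260800000 : Pl) * MvPolynomial.X 0 * MvPolynomial.X 1 ^ 6 * cc + (8065181936403512554688294683571689455392276625920506130569854668395506415410087911438752398556769641619969409024000000000 : Pl) * MvPolynomial.X 0 * MvPolynomial.X 1 ^ 6 * cc ^ 2 + (726682086628467344982743726638108866110592699596800000 : Pl) * MvPolynomial.X 0 ^ 2 * MvPolynomial.X 1 ^ 2 + (330460101927794859308117999934945523312521537286963200 : Pl) * MvPolynomial.X 0 ^ 2 * MvPolynomial.X 1 ^ 4 + (2674963701980431235710864888194331555617390920761890696976684369690908965793693696000000 : Pl) * MvPolynomial.X 0 ^ 2 * MvPolynomial.X 1 ^ 4 * cc + (-45489615861752309567754527395962522119615401957523456 : Pl) * MvPolynomial.X 0 ^ 4 * MvPolynomial.X 1 ^ 2) * hM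
  rw [hid]
  exact (Ideal.add_mem _ (Ideal.add_mem _ (Ideal.add_mem _ (Ideal.add_mem _ (Ideal.add_mem _ (Ideal.mul_mem_left _ _ (Ideal.subset_span (Or.inl (Or.inl rfl)))) (Ideal.mul_mem_left _ _ (Ideal.subset_span (Or.inl (Or.inr rfl))))) (Ideal.mul_mem_left _ _ (Ideal.subset_span (Or.inr ⟨0, by norm_num, rfl⟩)))) (Ideal.mul_mem_left _ _ (Ideal.subset_span (Or.inr ⟨1, by norm_num, rfl⟩)))) (Ideal.mul_mem_left _ _ (Ideal.subset_span (Or.inr ⟨2, by norm_num, rfl⟩)))) (Ideal.mul_mem_left _ _ (Ideal.subset_span (Or.inr ⟨4, by norm_num, rfl⟩))))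

lemma midAm0 : MvPolynomial.aeval vm (mon 0) ∈ Iq k1 k2 := by
  have hid : MvPolynomial.aeval vm (mon 0) = ((1 : Pl)) * mon 6 := by
    simp only [mon, vm, aeval_cc, map_ofNat, map_neg, map_one, map_sub, map_add, map_mul, map_pow, MvPolynomial.aeval_X, MvPolynomial.aeval_C, MvPolynomial.algebraMap_eq, Matrix.cons_val_zero, Matrix.cons_val_one, Matrix.head_cons]
    ring
  rw [hid]
  exact (Ideal.mul_mem_left _ _ (Ideal.subset_span (Or.inr ⟨6, by norm_num, rfl⟩)))

lemma midBm0 : MvPolynomial.aeval wm (mon 0) ∈ Iq g1 g2 := by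
  have hid : MvPolynomial.aeval wm (mon 0) = ((8557072420880770642404034210070190927747772305254095720357448941677588145579826476258031646671187929990333621133728505901757706794334397185086350541574830109236889254844765641480888315739933013916015625 : Pl) * MvPolynomial.X 1 ^ 6 * cc ^ 6) * mon 0 + ((11352432369941599669886694209574608855658399192686259971077816980995388815666708857365819032759408608861212002610661244242046686622394475501240140035407591322570800781250 : Pl) * MvPolynomial.X 1 ^ 5 * cc ^ 5) * mon 1 + ((6275399769494247308281052192441744015919566064000187112326591127720068161602134217130983651542832240125387749695460250805257620849609375 : Pl) * MvPolynomial.X 1 ^ 4 * cc ^ 4) * mon 2 + ((1850088908229090555930496720001829318899815655995331771810025902609380046161954899447498493512773437500 : Pl) * MvPolynomial.X 1 ^ 3 * cc ^ 3) * mon 3 + ((306807751763891568112119590899502920372345899059293979933293173984375 : Pl) * MvPolynomial.X 1 ^ 2 * cc ^ 2) * mon 4 + ((27135559773723846352686093611777250 : Pl) * MvPolynomial.X 1 * cc) * mon 5 + ((1 : Pl)) * mon 6 := by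
    simp only [mon, wm, aeval_cc, map_ofNat, map_neg, map_one, map_sub, map_add, map_mul, map_pow, MvPolynomial.aeval_X, MvPolynomial.aeval_C, MvPolynomial.algebraMap_eq, Matrix.cons_val_zero, Matrix.cons_val_one, Matrix.head_cons]
    ring
  rw [hid]
  exact (Ideal.add_mem _ (Ideal.add_mem _ (Ideal.add_mem _ (Ideal.add_mem _ (Ideal.add_mem _ (Ideal.add_mem _ (Ideal.mul_mem_left _ _ (Ideal.subset_span (Or.inr ⟨0, by norm_num, rfl⟩))) (Ideal.mul_mem_left _ _ (Ideal.subset_span (Or.inr ⟨1, by norm_num, rfl⟩)))) (Ideal.mul_mem_left _ _ (Ideal.subset_span (Or.inr ⟨2, by norm_num, rfl⟩)))) (Ideal.mul_mem_left _ _ (Ideal.subset_span (Or.inr ⟨3, by norm_num, rfl⟩)))) (Ideal.mul_mem_left _ _ (Ideal.subset_span (Or.inr ⟨4, by norm_num, rfl⟩)))) (Ideal.mul_mem_left _ _ (Ideal.subset_span (Or.inr ⟨5, by norm_num, rfl⟩)))) (Ideal.mul_mem_left _ _ (Ideal.subset_span (Or.inr ⟨6, by norm_num, rfl⟩))))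

lemma midAm1 : MvPolynomial.aeval vm (mon 1) ∈ Iq k1 k2 := by
  have hid : MvPolynomial.aeval vm (mon 1) = ((1 : Pl)) * mon 5 + ((-4522593295620641058781015601962875 : Pl) * MvPolynomial.X 0 * cc) * mon 6 := by
    simp only [mon, vm, aeval_cc, map_ofNat, map_neg, map_one, map_sub, map_add, map_mul, map_pow, MvPolynomial.aeval_X, MvPolynomial.aeval_C, MvPolynomial.algebraMap_eq, Matrix.cons_val_zero, Matrix.cons_val_one, Matrix.head_cons]
    ring
  rw [hid]
  exact (Ideal.add_mem _ (Ideal.mul_mem_left _ _ (Ideal.subset_span (Or.inr ⟨5, by norm_num, rfl⟩))) (Ideal.mul_mem_left _ _ (Ideal.subset_span (Or.inr ⟨6, by norm_num, rfl⟩))))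

lemma midBm1 : MvPolynomial.aeval wm (mon 1) ∈ Iq g1 g2 := by
  have hid : MvPolynomial.aeval wm (mon 1) = ((1892072061656933278314449034929101475943066532114376661846302830165898135944451476227636505459901434810202000435110207373674447770399079250206690005901265220428466796875 : Pl) * MvPolynomial.X 1 ^ 5 * cc ^ 5) * mon 0 + ((2091799923164749102760350730813914671973188688000062370775530375906689387200711405710327883847610746708462583231820083601752540283203125 : Pl) * MvPolynomial.X 1 ^ 4 * cc ^ 4) * mon 1 + ((925044454114545277965248360000914659449907827997665885905012951304690023080977449723749246756386718750 : Pl) * MvPolynomial.X 1 ^ 3 * cc ^ 3) * mon 2 + ((204538501175927712074746393933001946914897266039529319955528782656250 : Pl) * MvPolynomial.X 1 ^ 2 * cc ^ 2) * mon 3 + ((22612966478103205293905078009814375 : Pl) * MvPolynomial.X 1 * cc) * mon 4 + ((1 : Pl)) * mon 5 := by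
    simp only [mon, wm, aeval_cc, map_ofNat, map_neg, map_one, map_sub, map_add, map_mul, map_pow, MvPolynomial.aeval_X, MvPolynomial.aeval_C, MvPolynomial.algebraMap_eq, Matrix.cons_val_zero, Matrix.cons_val_one, Matrix.head_cons]
    ring
  rw [hid]
  exact (Ideal.add_mem _ (Ideal.add_mem _ (Ideal.add_mem _ (Ideal.add_mem _ (Ideal.add_mem _ (Ideal.mul_mem_left _ _ (Ideal.subset_span (Or.inr ⟨0, by norm_num, rfl⟩))) (Ideal.mul_mem_left _ _ (Ideal.subset_span (Or.inr ⟨1, by norm_num, rfl⟩)))) (Ideal.mul_mem_left _ _ (Ideal.subset_span (Or.inr ⟨2, by norm_num, rfl⟩)))) (Ideal.mul_mem_left _ _ (Ideal.subset_span (Or.inr ⟨3, by norm_num, rfl⟩)))) (Ideal.mul_mem_left _ _ (Ideal.subset_span (Or.inr ⟨4, by norm_num, rfl⟩)))) (Ideal.mul_mem_left _ _ (Ideal.subset_span (Or.inr ⟨5, by norm_num, rfl⟩))))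

lemma midAm2 : MvPolynomial.aeval vm (mon 2) ∈ Iq k1 k2 := by
  have hid : MvPolynomial.aeval vm (mon 2) = ((1 : Pl)) * mon 4 + ((-9045186591241282117562031203925750 : Pl) * MvPolynomial.X 1 * cc + (20453850117592771207474639393300194691489726603952931995552878265625 : Pl) * MvPolynomial.X 0 ^ 2 * cc ^ 2) * mon 6 := by
    simp only [mon, vm, aeval_cc, map_ofNat, map_neg, map_one, map_sub, map_add, map_mul, map_pow, MvPolynomial.aeval_X, MvPolynomial.aeval_C, MvPolynomial.algebraMap_eq, Matrix.cons_val_zero, Matrix.cons_val_one, Matrix.head_cons]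
    ring
  rw [hid]
  exact (Ideal.add_mem _ (Ideal.mul_mem_left _ _ (Ideal.subset_span (Or.inr ⟨4, by norm_num, rfl⟩))) (Ideal.mul_mem_left _ _ (Ideal.subset_span (Or.inr ⟨6, by norm_num, rfl⟩))))

lemma midBm2 : MvPolynomial.aeval wm (mon 2) ∈ Iq g1 g2 := by
  have hid : MvPolynomial.aeval wm (mon 2) = ((418359984632949820552070146162782934394637737600012474155106075181337877440142281142065576769522149341692516646364016720350508056640625 : Pl) * MvPolynomial.X 1 ^ 4 * cc ^ 4) * mon 0 + ((370017781645818111186099344000365863779963131199066354362005180521876009232390979889499698702554687500 : Pl) * MvPolynomial.X 1 ^ 3 * cc ^ 3) * mon 1 + ((122723100705556627244847836359801168148938359623717591973317269593750 : Pl) * MvPolynomial.X 1 ^ 2 * cc ^ 2) * mon 2 + ((18090373182482564235124062407851500 : Pl) * MvPolynomial.X 1 * cc) * mon 3 + ((1 : Pl)) * mon 4 := by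
    simp only [mon, wm, aeval_cc, map_ofNat, map_neg, map_one, map_sub, map_add, map_mul, map_pow, MvPolynomial.aeval_X, MvPolynomial.aeval_C, MvPolynomial.algebraMap_eq, Matrix.cons_val_zero, Matrix.cons_val_one, Matrix.head_cons]
    ring
  rw [hid]
  exact (Ideal.add_mem _ (Ideal.add_mem _ (Ideal.add_mem _ (Ideal.add_mem _ (Ideal.mul_mem_left _ _ (Ideal.subset_span (Or.inr ⟨0, by norm_num, rfl⟩))) (Ideal.mul_mem_left _ _ (Ideal.subset_span (Or.inr ⟨1, by norm_num, rfl⟩)))) (Ideal.mul_mem_left _ _ (Ideal.subset_span (Or.inr ⟨2, by norm_num, rfl⟩)))) (Ideal.mul_mem_left _ _ (Ideal.subset_span (Or.inr ⟨3, by norm_num, rfl⟩)))) (Ideal.mul_mem_left _ _ (Ideal.subset_span (Or.inr ⟨4, by norm_num, rfl⟩))))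

lemma midAm3 : MvPolynomial.aeval vm (mon 3) ∈ Iq k1 k2 := by
  have hid : MvPolynomial.aeval vm (mon 3) = ((1 : Pl)) * mon 3 + ((-13567779886861923176343046805888625 : Pl) * MvPolynomial.X 1 * cc) * mon 5 + ((61361550352778313622423918179900584074469179811858795986658634796875 : Pl) * MvPolynomial.X 0 * MvPolynomial.X 1 * cc ^ 2 + (-92504445411454527796524836000091465944990782799766588590501295130469002308097744972374924675638671875 : Pl) * MvPolynomial.X 0 ^ 3 * cc ^ 3) * mon 6 := by
    simp only [mon, vm, aeval_cc, map_ofNat, map_neg, map_one, map_sub, map_add, map_mul, map_pow, MvPolynomial.aeval_X, MvPolynomial.aeval_C, MvPolynomial.algebraMap_eq, Matrix.cons_val_zero, Matrix.cons_val_one, Matrix.head_cons]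
    ring
  rw [hid]
  exact (Ideal.add_mem _ (Ideal.add_mem _ (Ideal.mul_mem_left _ _ (Ideal.subset_span (Or.inr ⟨3, by norm_num, rfl⟩))) (Ideal.mul_mem_left _ _ (Ideal.subset_span (Or.inr ⟨5, by norm_num, rfl⟩)))) (Ideal.mul_mem_left _ _ (Ideal.subset_span (Or.inr ⟨6, by norm_num, rfl⟩))))

lemma midBm3 : MvPolynomial.aeval wm (mon 3) ∈ Iq g1 g2 := by
  have hid : MvPolynomial.aeval wm (mon 3) = ((92504445411454527796524836000091465944990782799766588590501295130469002308097744972374924675638671875 : Pl) * MvPolynomial.X 1 ^ 3 * cc ^ 3) * mon 0 + ((61361550352778313622423918179900584074469179811858795986658634796875 : Pl) * MvPolynomial.X 1 ^ 2 * cc ^ 2) * mon 1 + ((13567779886861923176343046805888625 : Pl) * MvPolynomial.X 1 * cc) * mon 2 + ((1 : Pl)) * mon 3 := by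
    simp only [mon, wm, aeval_cc, map_ofNat, map_neg, map_one, map_sub, map_add, map_mul, map_pow, MvPolynomial.aeval_X, MvPolynomial.aeval_C, MvPolynomial.algebraMap_eq, Matrix.cons_val_zero, Matrix.cons_val_one, Matrix.head_cons]
    ring
  rw [hid]
  exact (Ideal.add_mem _ (Ideal.add_mem _ (Ideal.add_mem _ (Ideal.mul_mem_left _ _ (Ideal.subset_span (Or.inr ⟨0, by norm_num, rfl⟩))) (Ideal.mul_mem_left _ _ (Ideal.subset_span (Or.inr ⟨1, by norm_num, rfl⟩)))) (Ideal.mul_mem_left _ _ (Ideal.subset_span (Or.inr ⟨2, by norm_num, rfl⟩)))) (Ideal.mul_mem_left _ _ (Ideal.subset_span (Or.inr ⟨3, by norm_num, rfl⟩))))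

lemma midAm4 : MvPolynomial.aeval vm (mon 4) ∈ Iq k1 k2 := by
  have hid : MvPolynomial.aeval vm (mon 4) = ((1 : Pl)) * mon 2 + ((-18090373182482564235124062407851500 : Pl) * MvPolynomial.X 1 * cc) * mon 4 + ((122723100705556627244847836359801168148938359623717591973317269593750 : Pl) * MvPolynomial.X 1 ^ 2 * cc ^ 2 + (-370017781645818111186099344000365863779963131199066354362005180521876009232390979889499698702554687500 : Pl) * MvPolynomial.X 0 ^ 2 * MvPolynomial.X 1 * cc ^ 3 + (418359984632949820552070146162782934394637737600012474155106075181337877440142281142065576769522149341692516646364016720350508056640625 : Pl) * MvPolynomial.X 0 ^ 4 * cc ^ 4) * mon 6 := by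
    simp only [mon, vm, aeval_cc, map_ofNat, map_neg, map_one, map_sub, map_add, map_mul, map_pow, MvPolynomial.aeval_X, MvPolynomial.aeval_C, MvPolynomial.algebraMap_eq, Matrix.cons_val_zero, Matrix.cons_val_one, Matrix.head_cons]
    ring
  rw [hid]
  exact (Ideal.add_mem _ (Ideal.add_mem _ (Ideal.mul_mem_left _ _ (Ideal.subset_span (Or.inr ⟨2, by norm_num, rfl⟩))) (Ideal.mul_mem_left _ _ (Ideal.subset_span (Or.inr ⟨4, by norm_num, rfl⟩)))) (Ideal.mul_mem_left _ _ (Ideal.subset_span (Or.inr ⟨6, by norm_num, rfl⟩))))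

lemma midBm4 : MvPolynomial.aeval wm (mon 4) ∈ Iq g1 g2 := by
  have hid : MvPolynomial.aeval wm (mon 4) = ((20453850117592771207474639393300194691489726603952931995552878265625 : Pl) * MvPolynomial.X 1 ^ 2 * cc ^ 2) * mon 0 + ((9045186591241282117562031203925750 : Pl) * MvPolynomial.X 1 * cc) * mon 1 + ((1 : Pl)) * mon 2 := by
    simp only [mon, wm, aeval_cc, map_ofNat, map_neg, map_one, map_sub, map_add, map_mul, map_pow, MvPolynomial.aeval_X, MvPolynomial.aeval_C, MvPolynomial.algebraMap_eq, Matrix.cons_val_zero, Matrix.cons_val_one, Matrix.head_cons]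
    ring
  rw [hid]
  exact (Ideal.add_mem _ (Ideal.add_mem _ (Ideal.mul_mem_left _ _ (Ideal.subset_span (Or.inr ⟨0, by norm_num, rfl⟩))) (Ideal.mul_mem_left _ _ (Ideal.subset_span (Or.inr ⟨1, by norm_num, rfl⟩)))) (Ideal.mul_mem_left _ _ (Ideal.subset_span (Or.inr ⟨2, by norm_num, rfl⟩))))

lemma midAm5 : MvPolynomial.aeval vm (mon 5) ∈ Iq k1 k2 := by
  have hid : MvPolynomial.aeval vm (mon 5) = ((1 : Pl)) * mon 1 + ((-22612966478103205293905078009814375 : Pl) * MvPolynomial.X 1 * cc) * mon 3 + ((204538501175927712074746393933001946914897266039529319955528782656250 : Pl) * MvPolynomial.X 1 ^ 2 * cc ^ 2) * mon 5 + ((-925044454114545277965248360000914659449907827997665885905012951304690023080977449723749246756386718750 : Pl) * MvPolynomial.X 0 * MvPolynomial.X 1 ^ 2 * cc ^ 3 + (2091799923164749102760350730813914671973188688000062370775530375906689387200711405710327883847610746708462583231820083601752540283203125 : Pl) * MvPolynomial.X 0 ^ 3 * MvPolynomial.X 1 * cc ^ 4 + (-1892072061656933278314449034929101475943066532114376661846302830165898135944451476227636505459901434810202000435110207373674447770399079250206690005901265220428466796875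 : Pl) * MvPolynomial.X 0 ^ 5 * cc ^ 5) * mon 6 := by
    simp only [mon, vm, aeval_cc, map_ofNat, map_neg, map_one, map_sub, map_add, map_mul, map_pow, MvPolynomial.aeval_X, MvPolynomial.aeval_C, MvPolynomial.algebraMap_eq, Matrix.cons_val_zero, Matrix.cons_val_one, Matrix.head_cons]
    ring
  rw [hid]
  exact (Ideal.add_mem _ (Ideal.add_mem _ (Ideal.add_mem _ (Ideal.mul_mem_left _ _ (Ideal.subset_span (Or.inr ⟨1, by norm_num, rfl⟩))) (Ideal.mul_mem_left _ _ (Ideal.subset_span (Or.inr ⟨3, by norm_num, rfl⟩)))) (Ideal.mul_mem_left _ _ (Ideal.subset_span (Or.inr ⟨5, by norm_num, rfl⟩)))) (Ideal.mul_mem_left _ _ (Ideal.subset_span (Or.inr ⟨6, by norm_num, rfl⟩))))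

lemma midBm5 : MvPolynomial.aeval wm (mon 5) ∈ Iq g1 g2 := by
  have hid : MvPolynomial.aeval wm (mon 5) = ((4522593295620641058781015601962875 : Pl) * MvPolynomial.X 1 * cc) * mon 0 + ((1 : Pl)) * mon 1 := by
    simp only [mon, wm, aeval_cc, map_ofNat, map_neg, map_one, map_sub, map_add, map_mul, map_pow, MvPolynomial.aeval_X, MvPolynomial.aeval_C, MvPolynomial.algebraMap_eq, Matrix.cons_val_zero, Matrix.cons_val_one, Matrix.head_cons]
    ring
  rw [hid]
  exact (Ideal.add_mem _ (Ideal.mul_mem_left _ _ (Ideal.subset_span (Or.inr ⟨0, by norm_num, rfl⟩))) (Ideal.mul_mem_left _ _ (Ideal.subset_span (Or.inr ⟨1, by norm_num, rfl⟩))))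

lemma midAm6 : MvPolynomial.aeval vm (mon 6) ∈ Iq k1 k2 := by
  have hid : MvPolynomial.aeval vm (mon 6) = ((1 : Pl)) * mon 0 + ((-27135559773723846352686093611777250 : Pl) * MvPolynomial.X 1 * cc) * mon 2 + ((306807751763891568112119590899502920372345899059293979933293173984375 : Pl) * MvPolynomial.X 1 ^ 2 * cc ^ 2) * mon 4 + ((-1850088908229090555930496720001829318899815655995331771810025902609380046161954899447498493512773437500 : Pl) * MvPolynomial.X 1 ^ 3 * cc ^ 3 + (6275399769494247308281052192441744015919566064000187112326591127720068161602134217130983651542832240125387749695460250805257620849609375 : Pl) * MvPolynomial.X 0 ^ 2 * MvPolynomial.X 1 ^ 2 * cc ^ 4 + (-11352432369941599669886694209574608855658399192686259971077816980995388815666708857365819032759408608861212002610661244242046686622394475501240140035407591322570800781250 : Pl) * MvPolynomial.X 0 ^ 4 * MvPolynomial.X 1 * cc ^ 5 + (8557072420880770642404034210070190927747772305254095720357448941677588145579826476258031646671187929990333621133728505901757706794334397185086350541574830109236889254844765641480888315739933013916015625 : Pl) * MvPolynomial.X 0 ^ 6 * cc ^ 6) * mon 6 := by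
    simp only [mon, vm, aeval_cc, map_ofNat, map_neg, map_one, map_sub, map_add, map_mul, map_pow, MvPolynomial.aeval_X, MvPolynomial.aeval_C, MvPolynomial.algebraMap_eq, Matrix.cons_val_zero, Matrix.cons_val_one, Matrix.head_cons]
    ring
  rw [hid]
  exact (Ideal.add_mem _ (Ideal.add_mem _ (Ideal.add_mem _ (Ideal.mul_mem_left _ _ (Ideal.subset_span (Or.inr ⟨0, by norm_num, rfl⟩))) (Ideal.mul_mem_left _ _ (Ideal.subset_span (Or.inr ⟨2, by norm_num, rfl⟩)))) (Ideal.mul_mem_left _ _ (Ideal.subset_span (Or.inr ⟨4, by norm_num, rfl⟩)))) (Ideal.mul_mem_left _ _ (Ideal.subset_span (Or.inr ⟨6, by norm_num, rfl⟩))))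

lemma midBm6 : MvPolynomial.aeval wm (mon 6) ∈ Iq g1 g2 := by
  have hid : MvPolynomial.aeval wm (mon 6) = ((1 : Pl)) * mon 0 := by
    simp only [mon, wm, aeval_cc, map_ofNat, map_neg, map_one, map_sub, map_add, map_mul, map_pow, MvPolynomial.aeval_X, MvPolynomial.aeval_C, MvPolynomial.algebraMap_eq, Matrix.cons_val_zero, Matrix.cons_val_one, Matrix.head_cons]
    ring
  rw [hid]
  exact (Ideal.mul_mem_left _ _ (Ideal.subset_span (Or.inr ⟨0, by norm_num, rfl⟩)))

lemma midAm : ∀ k ≤ 6, MvPolynomial.aeval vm (mon k) ∈ Iq k1 k2 := by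
  intro k hk
  interval_cases k
  exacts [midAm0, midAm1, midAm2, midAm3, midAm4, midAm5, midAm6]

lemma midBm : ∀ k ≤ 6, MvPolynomial.aeval wm (mon k) ∈ Iq g1 g2 := by
  intro k hk
  interval_cases k
  exacts [midBm0, midBm1, midBm2, midBm3, midBm4, midBm5, midBm6]

lemma scA1 (bb : ℂ) (hbb : (6314386081449600 : ℂ) * bb ^ 2 = -25638801731506361) : MvPolynomial.aeval (vs bb) k1 ∈ Iq h1 h2 := by
  refine mem_of_C_mul (25638801731506361 : ℂ) (by norm_num) ?_
  have hB := hBpl bb hbb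
  have hid : MvPolynomial.C (25638801731506361 : ℂ) * MvPolynomial.aeval (vs bb) k1 = ((-479703642514303352881761748800000000 : Pl) * MvPolynomial.C bb) * h1 := by
    simp only [k1, vs, mon, k1, k2, h1, h2, aeval_cc, map_ofNat, map_neg, map_one, map_sub, map_add, map_mul, map_pow, MvPolynomial.aeval_X, MvPolynomial.aeval_C, MvPolynomial.algebraMap_eq, Matrix.cons_val_zero, Matrix.cons_val_one, Matrix.head_cons]
    linear_combination ((-959407285028606705763523497600000000 : Pl) * MvPolynomial.X 0 * MvPolynomial.X 1 ^ 3 * MvPolynomial.C bb + (-7766080225406053617429139625817364820140842155728263971328000000000000 : Pl) * MvPolynomial.X 0 * MvPolynomial.X 1 ^ 3 * cc * MvPolynomial.C bb + (-62863814991403378705578141225523616369133753586175776172755126315842223014643850221731840000000000000000 : Pl) * MvPolynomial.X 0 * MvPolynomial.X 1 ^ 3 * cc ^ 2 * MvPolynomial.C bb + (-508861500341604715490121196837315494233499339955631628196095138604473778896880905687362487398646525764971186168017715200000000000000000000 : Pl) * MvPolynomial.X 0 * MvPolynomial.X 1 ^ 3 * cc ^ 3 * MvPolynomial.C bb + (-1918814570057213411527046995200000000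 : Pl) * MvPolynomial.X 0 ^ 3 * MvPolynomial.C bb + (-15532160450812107234858279251634729640281684311456527942656000000000000 : Pl) * MvPolynomial.X 0 ^ 3 * cc * MvPolynomial.C bb + (-125727629982806757411156282451047232738267507172351552345510252631684446029287700443463680000000000000000 : Pl) * MvPolynomial.X 0 ^ 3 * cc ^ 2 * MvPolynomial.C bb + (-1017723000683209430980242393674630988466998679911263256392190277208947557793761811374724974797293051529942372336035430400000000000000000000 : Pl) * MvPolynomial.X 0 ^ 3 * cc ^ 3 * MvPolynomial.C bb + (-250647281319243389350138982707015326197691212104292726469048209604021802549260229637419953544776128314241787038269440000000000000000000000 : Pl) * MvPolynomial.X 0 ^ 3 * cc ^ 3 * MvPolynomial.C bb ^ 3) * hM + ((321314797514258969124837185839696466829170104234590881388884226179281936811250773617899308322858969486377341328932183352144289595392000000000000000000000000 : Pl) * MvPolynomial.X 0 ^ 3 * cc ^ 4 * MvPolynomial.C bb) * hB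
  rw [hid]
  exact (Ideal.mul_mem_left _ _ (Ideal.subset_span (Or.inl (Or.inl rfl))))

lemma scA2 (bb : ℂ) (hbb : (6314386081449600 : ℂ) * bb ^ 2 = -25638801731506361) : MvPolynomial.aeval (vs bb) k2 ∈ Iq h1 h2 := by
  have hB := hBpl bb hbb
  have hid : MvPolynomial.aeval (vs bb) k2 = ((74914832073721655778840000000 : Pl)) * h2 := by
    simp only [k2, vs, mon, k1, k2, h1, h2, aeval_cc, map_ofNat, map_neg, map_one, map_sub, map_add, map_mul, map_pow, MvPolynomial.aeval_X, MvPolynomial.aeval_C, MvPolynomial.algebraMap_eq, Matrix.cons_val_zero, Matrix.cons_val_one, Matrix.head_cons]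
    linear_combination ((374574160368608278894200000000 : Pl) * MvPolynomial.X 1 ^ 4 + (3032052210964801703424606151893613320957269883329376000000000000 : Pl) * MvPolynomial.X 1 ^ 4 * cc + (24543445818498598658812202586128608428570551520998394650257650061156643356354145280000000000000000 : Pl) * MvPolynomial.X 1 ^ 4 * cc ^ 2 + (198670963008878486273574175910822625697879904469724934954092228174007303592855310092015738475761997590691698278400000000000000000000 : Pl) * MvPolynomial.X 1 ^ 4 * cc ^ 3 + (224744496221164967336520000000 : Pl) * MvPolynomial.X 0 ^ 2 * MvPolynomial.X 1 ^ 2 + (1819231326578881022054763691136167992574361929997625600000000000 : Pl) * MvPolynomial.X 0 ^ 2 * MvPolynomial.X 1 ^ 2 * cc + (14726067491099159195287321551677165057142330912599036790154590036693986013812487168000000000000000 : Pl) * MvPolynomial.X 0 ^ 2 * MvPolynomial.X 1 ^ 2 * cc ^ 2 + (119202577805327091764144505546493575418727942681834960972455336904404382155713186055209443085457198554415018967040000000000000000000 : Pl) * MvPolynomial.X 0 ^ 2 * MvPolynomial.X 1 ^ 2 * cc ^ 3 + (964904891548509051198940808978584563692734990487360211926837045737397870577961471828133804626945752211104405655756992448045602585980026827571200000000000000000000000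 : Pl) * MvPolynomial.X 0 ^ 2 * MvPolynomial.X 1 ^ 2 * cc ^ 4 + (237639109694795047721380257839985718287292854618379375742040601537095915142366214080002688381026833744769376965652662268933272118202015416320000000000000000000000000 : Pl) * MvPolynomial.X 0 ^ 2 * MvPolynomial.X 1 ^ 2 * cc ^ 4 * MvPolynomial.C bb ^ 2) * hM + ((-304639100855827066421665893778814899188981770229565419017357359162084571545002671283884659893794430693207372145230108570759480621340559503333939618907160576000000000000000000000000000 : Pl) * MvPolynomial.X 0 ^ 2 * MvPolynomial.X 1 ^ 2 * cc ^ 5) * hB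
  rw [hid]
  exact (Ideal.mul_mem_left _ _ (Ideal.subset_span (Or.inl (Or.inr rfl))))

lemma scB1 (bb : ℂ) (hbb : (6314386081449600 : ℂ) * bb ^ 2 = -25638801731506361) : MvPolynomial.aeval (ws bb) h1 ∈ Iq k1 k2 := by
  refine mem_of_C_mul (75969957542440500000 : ℂ) (by norm_num) ?_
  have hB := hBpl bb hbb
  have hid : MvPolynomial.C (75969957542440500000 : ℂ) * MvPolynomial.aeval (ws bb) h1 = ((1 : Pl) * MvPolynomial.C bb) * k1 := by
    simp only [h1, ws, mon, k1, k2, h1, h2, aeval_cc, map_ofNat, map_neg, map_one, map_sub, map_add, map_mul, map_pow, MvPolynomial.aeval_X, MvPolynomial.aeval_C, MvPolynomial.algebraMap_eq, Matrix.cons_val_zero, Matrix.cons_val_one, Matrix.head_cons]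
    linear_combination ((69122209468141149256 : Pl) * MvPolynomial.X 0 * MvPolynomial.X 1 ^ 3 * MvPolynomial.C bb + (559521104815146378976161327255397325492891438311680000 : Pl) * MvPolynomial.X 0 * MvPolynomial.X 1 ^ 3 * cc * MvPolynomial.C bb + (4529135702438086542653827728660804972810708525544477498793120306795962182752870400000000 : Pl) * MvPolynomial.X 0 * MvPolynomial.X 1 ^ 3 * cc ^ 2 * MvPolynomial.C bb + (-1233867333328743623125 : Pl) * MvPolynomial.X 0 ^ 3 * MvPolynomial.C bb + (-303879830169762000000 : Pl) * MvPolynomial.X 0 ^ 3 * MvPolynomial.C bb ^ 3) * hM + ((389555735796317644207130642804100000000 : Pl) * MvPolynomial.X 0 ^ 3 * cc * MvPolynomial.C bb) * hB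
  rw [hid]
  exact (Ideal.mul_mem_left _ _ (Ideal.subset_span (Or.inl (Or.inl rfl))))

lemma scB2 (bb : ℂ) (hbb : (6314386081449600 : ℂ) * bb ^ 2 = -25638801731506361) : MvPolynomial.aeval (ws bb) h2 ∈ Iq k1 k2 := by
  refine mem_of_C_mul (74914832073721655778840000000 : ℂ) (by norm_num) ?_
  have hB := hBpl bb hbb
  have hid : MvPolynomial.C (74914832073721655778840000000 : ℂ) * MvPolynomial.aeval (ws bb) h2 = ((1 : Pl)) * k2 := by
    simp only [h2, ws, mon, k1, k2, h1, h2, aeval_cc, map_ofNat, map_neg, map_one, map_sub, map_add, map_mul, map_pow, MvPolynomial.aeval_X, MvPolynomial.aeval_C, MvPolynomial.algebraMap_eq, Matrix.cons_val_zero, Matrix.cons_val_one, Matrix.head_cons]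
    linear_combination ((131058579935199249827586900192 : Pl) * MvPolynomial.X 1 ^ 4 + (1060875252760042717198213514408476900296244537806161240693760000 : Pl) * MvPolynomial.X 1 ^ 4 * cc + (8587429395886605743481946872314112969001234138778812250951235977557726148400816370613452800000000 : Pl) * MvPolynomial.X 1 ^ 4 * cc ^ 2 + (69512361078722789057346830559719574077659717354184472442359604229054199599685028697371568312684873402588551811137142784000000000000 : Pl) * MvPolynomial.X 1 ^ 4 * cc ^ 3 + (-539783342279104594291245018445 : Pl) * MvPolynomial.X 0 ^ 2 * MvPolynomial.X 1 ^ 2 + (-4369365133966382646793778469448874354642744176611009060189600000 : Pl) * MvPolynomial.X 0 ^ 2 * MvPolynomial.X 1 ^ 2 * cc + (-35368545448832212102314376694751511003955975832673287199703785083434114257043135065385088000000000 : Pl) * MvPolynomial.X 0 ^ 2 * MvPolynomial.X 1 ^ 2 * cc ^ 2 + (-8710650889303566959360639364024631369776060175772339445688219406464916121702342464716800000000000 : Pl) * MvPolynomial.X 0 ^ 2 * MvPolynomial.X 1 ^ 2 * cc ^ 2 * MvPolynomial.C bb ^ 2) * hM + ((11166532555161185791854430532436513529952911454099159822434747888941930825937440302171860904877863178240000000000000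 : Pl) * MvPolynomial.X 0 ^ 2 * MvPolynomial.X 1 ^ 2 * cc ^ 3) * hB
  rw [hid]
  exact (Ideal.mul_mem_left _ _ (Ideal.subset_span (Or.inl (Or.inr rfl))))

lemma scAm0 (bb : ℂ) : MvPolynomial.aeval (vs bb) (mon 0) ∈ Iq h1 h2 := by
  have hid : MvPolynomial.aeval (vs bb) (mon 0) = ((1359257379900033301175493179590328604541903904049355264300366911785902852164498175997594184064431256583465297132324108324575539594876301455683511256020864888978444386304000000000000000000000000000000000000 : Pl) * cc ^ 6) * mon 0 := by
    simp only [mon, vs, aeval_cc, map_ofNat, map_neg, map_one, map_sub, map_add, map_mul, map_pow, MvPolynomial.aeval_X, MvPolynomial.aeval_C, MvPolynomial.algebraMap_eq, Matrix.cons_val_zero, Matrix.cons_val_one, Matrix.head_cons]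
    ring
  rw [hid]
  exact (Ideal.mul_mem_left _ _ (Ideal.subset_span (Or.inr ⟨0, by norm_num, rfl⟩)))

lemma scBm0 (bb : ℂ) : MvPolynomial.aeval (ws bb) (mon 0) ∈ Iq k1 k2 := by
  have hid : MvPolynomial.aeval (ws bb) (mon 0) = ((58221666102987249387345448854653144259530083820416875881817208628017296692618645635677710009195244508666173497686068276606842048948148916346362981679165259069418629669493120404942864519266304000000000000 : Pl) * cc ^ 6) * mon 0 := by
    simp only [mon, ws, aeval_cc, map_ofNat, map_neg, map_one, map_sub, map_add, map_mul, map_pow, MvPolynomial.aeval_X, MvPolynomial.aeval_C, MvPolynomial.algebraMap_eq, Matrix.cons_val_zero, Matrix.cons_val_one, Matrix.head_cons]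
    ring
  rw [hid]
  exact (Ideal.mul_mem_left _ _ (Ideal.subset_span (Or.inr ⟨0, by norm_num, rfl⟩)))

lemma scAm1 (bb : ℂ) : MvPolynomial.aeval (vs bb) (mon 1) ∈ Iq h1 h2 := by
  have hid : MvPolynomial.aeval (vs bb) (mon 1) = ((-257464300440419765807127398966030784362620119771410688152324071124879312112335151122443437175610135603435361469199354769716422734547373253609633031600032315158449618944000000000000000000000000000000000000 : Pl) * cc ^ 6 * MvPolynomial.C bb) * mon 1 := by
    simp only [mon, vs, aeval_cc, map_ofNat, map_neg, map_one, map_sub, map_add, map_mul, map_pow, MvPolynomial.aeval_X, MvPolynomial.aeval_C, MvPolynomial.algebraMap_eq, Matrix.cons_val_zero, Matrix.cons_val_one, Matrix.head_cons]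
    ring
  rw [hid]
  exact (Ideal.mul_mem_left _ _ (Ideal.subset_span (Or.inr ⟨1, by norm_num, rfl⟩)))

lemma scBm1 (bb : ℂ) : MvPolynomial.aeval (ws bb) (mon 1) ∈ Iq k1 k2 := by
  have hid : MvPolynomial.aeval (ws bb) (mon 1) = ((9351986209494915289459767241550507227154041951141946200750338156557108772152262098578277398932429212558128711891513008862180799461622049061137231912787173703680000000000 : Pl) * cc ^ 5 * MvPolynomial.C bb) * mon 1 := by
    simp only [mon, ws, aeval_cc, map_ofNat, map_neg, map_one, map_sub, map_add, map_mul, map_pow, MvPolynomial.aeval_X, MvPolynomial.aeval_C, MvPolynomial.algebraMap_eq, Matrix.cons_val_zero, Matrix.cons_val_one, Matrix.head_cons]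
    ring
  rw [hid]
  exact (Ideal.mul_mem_left _ _ (Ideal.subset_span (Or.inr ⟨1, by norm_num, rfl⟩)))

lemma scAm2 (bb : ℂ) : MvPolynomial.aeval (vs bb) (mon 2) ∈ Iq h1 h2 := by
  have hid : MvPolynomial.aeval (vs bb) (mon 2) = ((48767707265381836895321245844163869439406492208540442121064382671610589767733944324996285384622026216925286937400360215021003050566890780261497238948462303537983913984000000000000000000000000000000000000 : Pl) * cc ^ 6 * MvPolynomial.C bb ^ 2) * mon 2 := by
    simp only [mon, vs, aeval_cc, map_ofNat, map_neg, map_one, map_sub, map_add, map_mul, map_pow, MvPolynomial.aeval_X, MvPolynomial.aeval_C, MvPolynomial.algebraMap_eq, Matrix.cons_val_zero, Matrix.cons_val_one, Matrix.head_cons]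
    ring
  rw [hid]
  exact (Ideal.mul_mem_left _ _ (Ideal.subset_span (Or.inr ⟨2, by norm_num, rfl⟩)))

lemma scBm2 (bb : ℂ) : MvPolynomial.aeval (ws bb) (mon 2) ∈ Iq k1 k2 := by
  have hid : MvPolynomial.aeval (ws bb) (mon 2) = ((1502183841800014648557946151377444963585820284955525959707249412252986093322625011048710378625241846257916252104765688363719065600000000 : Pl) * cc ^ 4 * MvPolynomial.C bb ^ 2) * mon 2 := by
    simp only [mon, ws, aeval_cc, map_ofNat, map_neg, map_one, map_sub, map_add, map_mul, map_pow, MvPolynomial.aeval_X, MvPolynomial.aeval_C, MvPolynomial.algebraMap_eq, Matrix.cons_val_zero, Matrix.cons_val_one, Matrix.head_cons]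
    ring
  rw [hid]
  exact (Ideal.mul_mem_left _ _ (Ideal.subset_span (Or.inr ⟨2, by norm_num, rfl⟩)))

lemma scAm3 (bb : ℂ) : MvPolynomial.aeval (vs bb) (mon 3) ∈ Iq h1 h2 := by
  have hid : MvPolynomial.aeval (vs bb) (mon 3) = ((-9237355500757434928929495072863951119996452230651496675770396959600380344001234486954514580536112864205034090656016636367736567285069930421371281717741600159431655424000000000000000000000000000000000000 : Pl) * cc ^ 6 * MvPolynomial.C bb ^ 3) * mon 3 := by
    simp only [mon, vs, aeval_cc, map_ofNat, map_neg, map_one, map_sub, map_add, map_mul, map_pow, MvPolynomial.aeval_X, MvPolynomial.aeval_C, MvPolynomial.algebraMap_eq, Matrix.cons_val_zero, Matrix.cons_val_one, Matrix.head_cons]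
    ring
  rw [hid]
  exact (Ideal.mul_mem_left _ _ (Ideal.subset_span (Or.inr ⟨3, by norm_num, rfl⟩)))

lemma scBm3 (bb : ℂ) : MvPolynomial.aeval (ws bb) (mon 3) ∈ Iq k1 k2 := by
  have hid : MvPolynomial.aeval (ws bb) (mon 3) = ((241291661901084450604764707830003490309122110227332177856105621825533401489131100599604339965952000000 : Pl) * cc ^ 3 * MvPolynomial.C bb ^ 3) * mon 3 := by
    simp only [mon, ws, aeval_cc, map_ofNat, map_neg, map_one, map_sub, map_add, map_mul, map_pow, MvPolynomial.aeval_X, MvPolynomial.aeval_C, MvPolynomial.algebraMap_eq, Matrix.cons_val_zero, Matrix.cons_val_one, Matrix.head_cons]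
    ring
  rw [hid]
  exact (Ideal.mul_mem_left _ _ (Ideal.subset_span (Or.inr ⟨3, by norm_num, rfl⟩)))

lemma scAm4 (bb : ℂ) : MvPolynomial.aeval (vs bb) (mon 4) ∈ Iq h1 h2 := by
  have hid : MvPolynomial.aeval (vs bb) (mon 4) = ((1749697523876521373381471928336830464439438297265223952702216884187779674157310325258507633270039195362221713441100403469252296819443906349449605872088847250582667264000000000000000000000000000000000000 : Pl) * cc ^ 6 * MvPolynomial.C bb ^ 4) * mon 4 := by
    simp only [mon, vs, aeval_cc, map_ofNat, map_neg, map_one, map_sub, map_add, map_mul, map_pow, MvPolynomial.aeval_X, MvPolynomial.aeval_C, MvPolynomial.algebraMap_eq, Matrix.cons_val_zero, Matrix.cons_val_one, Matrix.head_cons]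
    ring
  rw [hid]
  exact (Ideal.mul_mem_left _ _ (Ideal.subset_span (Or.inr ⟨4, by norm_num, rfl⟩)))

lemma scBm4 (bb : ℂ) : MvPolynomial.aeval (ws bb) (mon 4) ∈ Iq k1 k2 := by
  have hid : MvPolynomial.aeval (ws bb) (mon 4) = ((38758016484335400630119532535399295075422997944210294767505827840000 : Pl) * cc ^ 2 * MvPolynomial.C bb ^ 4) * mon 4 := by
    simp only [mon, ws, aeval_cc, map_ofNat, map_neg, map_one, map_sub, map_add, map_mul, map_pow, MvPolynomial.aeval_X, MvPolynomial.aeval_C, MvPolynomial.algebraMap_eq, Matrix.cons_val_zero, Matrix.cons_val_one, Matrix.head_cons]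
    ring
  rw [hid]
  exact (Ideal.mul_mem_left _ _ (Ideal.subset_span (Or.inr ⟨4, by norm_num, rfl⟩)))

lemma scAm5 (bb : ℂ) : MvPolynomial.aeval (vs bb) (mon 5) ∈ Iq h1 h2 := by
  have hid : MvPolynomial.aeval (vs bb) (mon 5) = ((-331419682268220730273709098341304678015590109190171743589024748572867798942328656263254561257847607872097958770422681496603772844262203204143514936970326538142613504000000000000000000000000000000000000 : Pl) * cc ^ 6 * MvPolynomial.C bb ^ 5) * mon 5 := by
    simp only [mon, vs, aeval_cc, map_ofNat, map_neg, map_one, map_sub, map_add, map_mul, map_pow, MvPolynomial.aeval_X, MvPolynomial.aeval_C, MvPolynomial.algebraMap_eq, Matrix.cons_val_zero, Matrix.cons_val_one, Matrix.head_cons]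
    ring
  rw [hid]
  exact (Ideal.mul_mem_left _ _ (Ideal.subset_span (Or.inr ⟨5, by norm_num, rfl⟩)))

lemma scBm5 (bb : ℂ) : MvPolynomial.aeval (ws bb) (mon 5) ∈ Iq k1 k2 := by
  have hid : MvPolynomial.aeval (ws bb) (mon 5) = ((6225593665212611724079998143452800 : Pl) * cc * MvPolynomial.C bb ^ 5) * mon 5 := by
    simp only [mon, ws, aeval_cc, map_ofNat, map_neg, map_one, map_sub, map_add, map_mul, map_pow, MvPolynomial.aeval_X, MvPolynomial.aeval_C, MvPolynomial.algebraMap_eq, Matrix.cons_val_zero, Matrix.cons_val_one, Matrix.head_cons]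
    ring
  rw [hid]
  exact (Ideal.mul_mem_left _ _ (Ideal.subset_span (Or.inr ⟨5, by norm_num, rfl⟩)))

lemma scAm6 (bb : ℂ) : MvPolynomial.aeval (vs bb) (mon 6) ∈ Iq h1 h2 := by
  have hid : MvPolynomial.aeval (vs bb) (mon 6) = ((62775996591351338153858362350295987655250019751756989541036130137164551736203295526150626077134118825499160585740897116281782562866322831595898803522804345307398144000000000000000000000000000000000000 : Pl) * cc ^ 6 * MvPolynomial.C bb ^ 6) * mon 6 := by
    simp only [mon, vs, aeval_cc, map_ofNat, map_neg, map_one, map_sub, map_add, map_mul, map_pow, MvPolynomial.aeval_X, MvPolynomial.aeval_C, MvPolynomial.algebraMap_eq, Matrix.cons_val_zero, Matrix.cons_val_one, Matrix.head_cons]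
    ring
  rw [hid]
  exact (Ideal.mul_mem_left _ _ (Ideal.subset_span (Or.inr ⟨6, by norm_num, rfl⟩)))

lemma scBm6 (bb : ℂ) : MvPolynomial.aeval (ws bb) (mon 6) ∈ Iq k1 k2 := by
  have hid : MvPolynomial.aeval (ws bb) (mon 6) = ((1 : Pl) * MvPolynomial.C bb ^ 6) * mon 6 := by
    simp only [mon, ws, aeval_cc, map_ofNat, map_neg, map_one, map_sub, map_add, map_mul, map_pow, MvPolynomial.aeval_X, MvPolynomial.aeval_C, MvPolynomial.algebraMap_eq, Matrix.cons_val_zero, Matrix.cons_val_one, Matrix.head_cons]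
    ring
  rw [hid]
  exact (Ideal.mul_mem_left _ _ (Ideal.subset_span (Or.inr ⟨6, by norm_num, rfl⟩)))

lemma scAm (bb : ℂ) : ∀ k ≤ 6, MvPolynomial.aeval (vs bb) (mon k) ∈ Iq h1 h2 := by
  intro k hk
  interval_cases k
  exacts [scAm0 bb, scAm1 bb, scAm2 bb, scAm3 bb, scAm4 bb, scAm5 bb, scAm6 bb]

lemma scBm (bb : ℂ) : ∀ k ≤ 6, MvPolynomial.aeval (ws bb) (mon k) ∈ Iq k1 k2 := by
  intro k hk
  interval_cases k
  exacts [scBm0 bb, scBm1 bb, scBm2 bb, scBm3 bb, scBm4 bb, scBm5 bb, scBm6 bb]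

lemma compM1 : ∀ i : Fin 2, MvPolynomial.aeval wm (vm i) = MvPolynomial.X i := by
  intro i
  fin_cases i
  · show MvPolynomial.aeval wm (vm 0) = MvPolynomial.X 0
    simp only [vm, wm, aeval_cc, map_ofNat, map_neg, map_one, map_sub, map_add, map_mul, map_pow, MvPolynomial.aeval_X, MvPolynomial.aeval_C, MvPolynomial.algebraMap_eq, Matrix.cons_val_zero, Matrix.cons_val_one, Matrix.head_cons]
    ring
  · show MvPolynomial.aeval wm (vm 1) = MvPolynomial.X 1
    simp only [vm, wm, aeval_cc, map_ofNat, map_neg, map_one, map_sub, map_add, map_mul, map_pow, MvPolynomial.aeval_X, MvPolynomial.aeval_C, MvPolynomial.algebraMap_eq, Matrix.cons_val_zero, Matrix.cons_val_one, Matrix.head_cons]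
    ring

lemma compM2 : ∀ i : Fin 2, MvPolynomial.aeval vm (wm i) = MvPolynomial.X i := by
  intro i
  fin_cases i
  · show MvPolynomial.aeval vm (wm 0) = MvPolynomial.X 0
    simp only [wm, vm, aeval_cc, map_ofNat, map_neg, map_one, map_sub, map_add, map_mul, map_pow, MvPolynomial.aeval_X, MvPolynomial.aeval_C, MvPolynomial.algebraMap_eq, Matrix.cons_val_zero, Matrix.cons_val_one, Matrix.head_cons]
    ring
  · show MvPolynomial.aeval vm (wm 1) = MvPolynomial.X 1
    simp only [wm, vm, aeval_cc, map_ofNat, map_neg, map_one, map_sub, map_add, map_mul, map_pow, MvPolynomial.aeval_X, MvPolynomial.aeval_C, MvPolynomial.algebraMap_eq, Matrix.cons_val_zero, Matrix.cons_val_one, Matrix.head_cons]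
    ring

lemma compS1 (bb : ℂ) (hbb : (6314386081449600 : ℂ) * bb ^ 2 = -25638801731506361) : ∀ i : Fin 2, MvPolynomial.aeval (ws bb) ((vs bb) i) = MvPolynomial.X i := by
  have hB := hBpl bb hbb
  intro i
  fin_cases i
  · show MvPolynomial.aeval (ws bb) ((vs bb) 0) = MvPolynomial.X 0
    simp only [vs, ws, aeval_cc, map_ofNat, map_neg, map_one, map_sub, map_add, map_mul, map_pow, MvPolynomial.aeval_X, MvPolynomial.aeval_C, MvPolynomial.algebraMap_eq, Matrix.cons_val_zero, Matrix.cons_val_one, Matrix.head_cons]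
    linear_combination ((1 : Pl) * MvPolynomial.X 0 + (8094664639923483515992325045280000 : Pl) * MvPolynomial.X 0 * cc + (1993573579280221726261867008000000 : Pl) * MvPolynomial.X 0 * cc * MvPolynomial.C bb ^ 2) * hM + ((-2555641886816754122026223817876693804401894400000000 : Pl) * MvPolynomial.X 0 * cc ^ 2) * hB
  · show MvPolynomial.aeval (ws bb) ((vs bb) 1) = MvPolynomial.X 1
    simp only [vs, ws, aeval_cc, map_ofNat, map_neg, map_one, map_sub, map_add, map_mul, map_pow, MvPolynomial.aeval_X, MvPolynomial.aeval_C, MvPolynomial.algebraMap_eq, Matrix.cons_val_zero, Matrix.cons_val_one, Matrix.head_cons]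
    linear_combination ((1 : Pl) * MvPolynomial.X 1 + (8094664639923483515992325045280000 : Pl) * MvPolynomial.X 1 * cc) * hM

lemma compS2 (bb : ℂ) (hbb : (6314386081449600 : ℂ) * bb ^ 2 = -25638801731506361) : ∀ i : Fin 2, MvPolynomial.aeval (vs bb) ((ws bb) i) = MvPolynomial.X i := by
  have hB := hBpl bb hbb
  intro i
  fin_cases i
  · show MvPolynomial.aeval (vs bb) ((ws bb) 0) = MvPolynomial.X 0
    simp only [ws, vs, aeval_cc, map_ofNat, map_neg, map_one, map_sub, map_add, map_mul, map_pow, MvPolynomial.aeval_X, MvPolynomial.aeval_C, MvPolynomial.algebraMap_eq, Matrix.cons_val_zero, Matrix.cons_val_one, Matrix.head_cons]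
    linear_combination ((1 : Pl) * MvPolynomial.X 0 + (8094664639923483515992325045280000 : Pl) * MvPolynomial.X 0 * cc + (1993573579280221726261867008000000 : Pl) * MvPolynomial.X 0 * cc * MvPolynomial.C bb ^ 2) * hM + ((-2555641886816754122026223817876693804401894400000000 : Pl) * MvPolynomial.X 0 * cc ^ 2) * hB
  · show MvPolynomial.aeval (vs bb) ((ws bb) 1) = MvPolynomial.X 1
    simp only [ws, vs, aeval_cc, map_ofNat, map_neg, map_one, map_sub, map_add, map_mul, map_pow, MvPolynomial.aeval_X, MvPolynomial.aeval_C, MvPolynomial.algebraMap_eq, Matrix.cons_val_zero, Matrix.cons_val_one, Matrix.head_cons]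
    linear_combination ((1 : Pl) * MvPolynomial.X 1 + (8094664639923483515992325045280000 : Pl) * MvPolynomial.X 1 * cc) * hM

lemma coe_g1 : ((g1 : Pl) : PS) = MvPowerSeries.X 0 ^ 4 - MvPowerSeries.C (σ := Fin 2) (R := ℂ) (30445 / 7392) * (MvPowerSeries.X 0 ^ 2 * MvPowerSeries.X 1 ^ 2) + MvPowerSeries.C (σ := Fin 2) (R := ℂ) (4240139 / 1897280) * (MvPowerSeries.X 0 ^ 3 * MvPowerSeries.X 1 ^ 2) := by
  simp only [g1, coe_sub, MvPolynomial.coe_add, MvPolynomial.coe_mul, MvPolynomial.coe_pow,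
    MvPolynomial.coe_X, MvPolynomial.coe_C]

lemma coe_g2 : ((g2 : Pl) : PS) = MvPowerSeries.X 1 ^ 3 - MvPowerSeries.C (σ := Fin 2) (R := ℂ) (2696 / 48125) * (MvPowerSeries.X 0 ^ 3 * MvPowerSeries.X 1) := by
  simp only [g2, coe_sub, MvPolynomial.coe_add, MvPolynomial.coe_mul, MvPolynomial.coe_pow,
    MvPolynomial.coe_X, MvPolynomial.coe_C]

lemma coe_h1 : ((h1 : Pl) : PS) = (4 : PS) * MvPowerSeries.X 0 ^ 3 + (2 : PS) * (MvPowerSeries.X 0 * MvPowerSeries.X 1 ^ 3) := by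
  simp only [h1, MvPolynomial.coe_add, MvPolynomial.coe_mul, MvPolynomial.coe_pow,
    MvPolynomial.coe_X, coe_ofNat 4, coe_ofNat 2]

lemma coe_h2 : ((h2 : Pl) : PS) = (5 : PS) * MvPowerSeries.X 1 ^ 4 + (3 : PS) * (MvPowerSeries.X 0 ^ 2 * MvPowerSeries.X 1 ^ 2) := by
  simp only [h2, MvPolynomial.coe_add, MvPolynomial.coe_mul, MvPolynomial.coe_pow,
    MvPolynomial.coe_X, coe_ofNat 5, coe_ofNat 3]

end W12

open MvPowerSeries in
/-- The local ring of the modular stratum of the exceptional unimodal singularity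
`W₁₂ : f = x⁴ + y⁵ + x²y³` (in minimal embedding, with variables `s₁ = X 0`, `s₂ = X 1`)
is isomorphic, as a local `ℂ`-algebra, to the Milnor algebra
`Q(f) = ℂ[[x,y]]/(4x³ + 2xy³, 5y⁴ + 3x²y²)`. -/
theorem modularAlgebraW12_iso_milnorAlgebraW12 :
    Nonempty ((MvPowerSeries (Fin 2) ℂ ⧸
        Ideal.span {X 0 ^ 4 - C (σ := Fin 2) (R := ℂ) (30445 / 7392) * (X 0 ^ 2 * X 1 ^ 2)
            + C (σ := Fin 2) (R := ℂ) (4240139 / 1897280) * (X 0 ^ 3 * X 1 ^ 2),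
          X 1 ^ 3 - C (σ := Fin 2) (R := ℂ) (2696 / 48125) * (X 0 ^ 3 * X 1)}) ≃ₐ[ℂ]
      (MvPowerSeries (Fin 2) ℂ ⧸
        Ideal.span {(4 : MvPowerSeries (Fin 2) ℂ) * X 0 ^ 3
            + (2 : MvPowerSeries (Fin 2) ℂ) * (X 0 * X 1 ^ 3),
          (5 : MvPowerSeries (Fin 2) ℂ) * X 1 ^ 4
            + (3 : MvPowerSeries (Fin 2) ℂ) * (X 0 ^ 2 * X 1 ^ 2)})) := by
  obtain ⟨bb, hbb2⟩ := IsAlgClosed.exists_pow_nat_eq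
    ((-25638801731506361 : ℂ) / 6314386081449600) zero_lt_two
  have hbb : (6314386081449600 : ℂ) * bb ^ 2 = -25638801731506361 := by
    rw [hbb2]
    norm_num
  obtain ⟨E1⟩ := W12.present W12.g1 W12.g2 W12.hmonA
  obtain ⟨E2⟩ := W12.present W12.h1 W12.h2 W12.hmonB
  have hIA := W12.subst_mem_Iq W12.vm W12.g1 W12.g2 W12.midA1 W12.midA2 W12.midAm
  have hJA := W12.subst_mem_Iq W12.wm W12.k1 W12.k2 W12.midB1 W12.midB2 W12.midBm
  have hIS := W12.subst_mem_Iq (W12.vs bb) W12.k1 W12.k2 (W12.scA1 bb hbb) (W12.scA2 bb hbb)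
    (W12.scAm bb)
  have hJS := W12.subst_mem_Iq (W12.ws bb) W12.h1 W12.h2 (W12.scB1 bb hbb) (W12.scB2 bb hbb)
    (W12.scBm bb)
  have EM := W12.substEquiv W12.vm W12.wm hIA hJA W12.compM1 W12.compM2
  have ES := W12.substEquiv (W12.vs bb) (W12.ws bb) hIS hJS (W12.compS1 bb hbb)
    (W12.compS2 bb hbb)
  rw [← W12.coe_g1, ← W12.coe_g2, ← W12.coe_h1, ← W12.coe_h2]
  exact ⟨E1.symm.trans ((EM.trans ES).trans E2)⟩
end
end
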